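/- arXiv:2306.04929 — 10 statements merged into one kernel-verified Lean document; each statement's English description precedes it below -/
import Mathlib

section
/- Let A, B : ℝ → ℝ be twice continuously differentiable, let tₙ ∈ ℝ, let q : ℝ → ℝ satisfy q′(t) = A(q(t)) + B(q(t)) for all t, and let q_A : ℝ → ℝ satisfy q_A′(s) = A(q_A(s)) for all s with q_A(0) = q(tₙ) and be twice continuously differentiable near 0. Then the parallel-splitting local truncation error attributable to process A, lte_A^{PS}(Δt) = ∫₀^{Δt} A(q_A(η)) dη − ∫₀^{Δt} A(q(tₙ+η)) dη, satisfies lte_A^{PS}(Δt) = −(Δt²/2)·A′(q(tₙ))·B(q(tₙ)) + O(Δt³) as Δt → 0. -/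
open Filter Asymptotics

private lemma key_int {r : ℝ → ℝ} {n : ℕ} (h : r =O[nhds (0:ℝ)] fun η => η ^ n) :
    (fun Δt : ℝ => ∫ η in (0:ℝ)..Δt, r η) =O[nhds (0:ℝ)] fun Δt => Δt ^ (n + 1) := by
  rw [Asymptotics.isBigO_iff] at h ⊢
  obtain ⟨C, hC⟩ := h
  rw [Metric.eventually_nhds_iff] at hC
  obtain ⟨ε, hε, hb⟩ := hC
  refine ⟨max C 0, Metric.eventually_nhds_iff.2 ⟨ε, hε, fun {Δt} hΔt => ?_⟩⟩
  have hΔ : |Δt| < ε := by simpa [Real.dist_eq] using hΔt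
  have hbound : ∀ x ∈ Set.uIoc (0:ℝ) Δt, ‖r x‖ ≤ max C 0 * |Δt| ^ n := by
    intro x hx
    have hx' : |x| ≤ |Δt| := by
      rcases hx with ⟨h1, h2⟩
      rw [abs_le]
      constructor
      · rcases le_total 0 Δt with hc | hc
        · have : min (0:ℝ) Δt = 0 := min_eq_left hc
          nlinarith [abs_nonneg Δt, le_abs_self Δt]
        · have : min (0:ℝ) Δt = Δt := min_eq_right hc
          nlinarith [neg_abs_le Δt]
      · rcases le_total 0 Δt with hc | hc
        · have : max (0:ℝ) Δt = Δt := max_eq_right hc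
          nlinarith [le_abs_self Δt]
        · have : max (0:ℝ) Δt = 0 := max_eq_left hc
          nlinarith [abs_nonneg Δt]
    have hxe : dist x 0 < ε := by simpa [Real.dist_eq] using lt_of_le_of_lt hx' hΔ
    have h1 : ‖r x‖ ≤ C * ‖x ^ n‖ := hb hxe
    have h2 : ‖x ^ n‖ = |x| ^ n := by simp [abs_pow]
    have h3 : C * ‖x ^ n‖ ≤ max C 0 * |Δt| ^ n := by
      rw [h2]
      calc C * |x| ^ n ≤ max C 0 * |x| ^ n := by
            apply mul_le_mul_of_nonneg_right (le_max_left _ _) (pow_nonneg (abs_nonneg _) _)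
        _ ≤ max C 0 * |Δt| ^ n := by
            apply mul_le_mul_of_nonneg_left (pow_le_pow_left₀ (abs_nonneg _) hx' _)
              (le_max_right _ _)
    exact h1.trans h3
  have := intervalIntegral.norm_integral_le_of_norm_le_const hbound
  calc ‖∫ η in (0:ℝ)..Δt, r η‖ ≤ max C 0 * |Δt| ^ n * |Δt - 0| := this
    _ = max C 0 * ‖Δt ^ (n+1)‖ := by
        rw [sub_zero]
        simp [abs_pow, pow_succ, mul_assoc]

private lemma taylor2 {f : ℝ → ℝ} (hf : ContDiffAt ℝ 2 f 0) :
    (fun η => f η - f 0 - deriv f 0 * η) =O[nhds (0:ℝ)] fun η => η ^ 2 := by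
  obtain ⟨u, hu, hfu⟩ := hf.contDiffOn (le_refl 2) (by norm_num)
  obtain ⟨ε, hε, hball⟩ := Metric.mem_nhds_iff.1 hu
  have hfb : ContDiffOn ℝ 2 f (Metric.ball 0 ε) := hfu.mono hball
  have hdb : ContDiffOn ℝ 1 (deriv f) (Metric.ball 0 ε) :=
    hfb.deriv_of_isOpen Metric.isOpen_ball (by norm_num)
  have hmem : (0:ℝ) ∈ Metric.ball (0:ℝ) ε := Metric.mem_ball_self hε
  have hgd : DifferentiableAt ℝ (deriv f) 0 :=
    ((hdb.differentiableOn (by norm_num)) 0 hmem).differentiableAt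
      (Metric.isOpen_ball.mem_nhds hmem)
  have hO : (fun η => deriv f η - deriv f 0) =O[nhds (0:ℝ)] fun η => η ^ 1 := by
    simpa using hgd.isBigO_sub
  have hd : ∀ x ∈ Metric.ball (0:ℝ) ε, HasDerivAt f (deriv f x) x := fun x hx =>
    (((hfb.differentiableOn (by norm_num)) x hx).differentiableAt
      (Metric.isOpen_ball.mem_nhds hx)).hasDerivAt
  have hcont : ContinuousOn (deriv f) (Metric.ball 0 ε) := hdb.continuousOn
  have heq : ∀ᶠ η in nhds (0:ℝ),
      (∫ s in (0:ℝ)..η, (deriv f s - deriv f 0)) = f η - f 0 - deriv f 0 * η := by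
    filter_upwards [Metric.ball_mem_nhds (0:ℝ) hε] with η hη
    have hη' : |η| < ε := by simpa [Real.dist_eq] using hη
    have hsub : Set.uIcc (0:ℝ) η ⊆ Metric.ball 0 ε := by
      intro x hx
      have hxη : |x| ≤ |η| := by
        rcases le_total (0:ℝ) η with hc | hc
        · rw [Set.uIcc_of_le hc] at hx
          rw [abs_le, abs_of_nonneg hc]; exact ⟨by linarith [hx.1], hx.2⟩
        · rw [Set.uIcc_of_ge hc] at hx
          rw [abs_le, abs_of_nonpos hc]; exact ⟨by linarith [hx.1], by linarith [hx.2]⟩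
      simpa [Real.dist_eq] using lt_of_le_of_lt hxη hη'
    have hint : IntervalIntegrable (deriv f) MeasureTheory.volume 0 η :=
      (hcont.mono hsub).intervalIntegrable
    have hftc : ∫ s in (0:ℝ)..η, deriv f s = f η - f 0 :=
      intervalIntegral.integral_eq_sub_of_hasDerivAt (fun x hx => hd x (hsub hx)) hint
    rw [intervalIntegral.integral_sub hint intervalIntegrable_const, hftc,
      intervalIntegral.integral_const]
    simp [smul_eq_mul]
    ring
  exact (key_int hO).congr' heq EventuallyEq.rfl

theorem lte_A_parallel_splitting
    (A B q qA : ℝ → ℝ) (tn : ℝ)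
    (hA : ContDiff ℝ 2 A) (hB : ContDiff ℝ 2 B)
    (hq : ∀ t, HasDerivAt q (A (q t) + B (q t)) t)
    (hqA : ∀ s, HasDerivAt qA (A (qA s)) s)
    (hqA0 : qA 0 = q tn)
    (hqAsmooth : ContDiffAt ℝ 2 qA 0) :
    (fun Δt : ℝ =>
        ((∫ η in (0:ℝ)..Δt, A (qA η)) - ∫ η in (0:ℝ)..Δt, A (q (tn + η)))
          - (-(Δt ^ 2 / 2) * (deriv A (q tn) * B (q tn))))
      =O[nhds (0:ℝ)] (fun Δt : ℝ => Δt ^ 3) := by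
  set c := q tn with hc
  set dAB := deriv A (q tn) * B (q tn) with hdAB
  set f : ℝ → ℝ := fun η => A (qA η) - A (q (tn + η)) with hf
  -- continuity / smoothness of q
  have hqdiff : Differentiable ℝ q := fun t => (hq t).differentiableAt
  have hqcont : Continuous q := hqdiff.continuous
  have hderivq : deriv q = fun t => A (q t) + B (q t) := funext fun t => (hq t).deriv
  have hq1 : ContDiff ℝ 1 q := by
    rw [contDiff_one_iff_deriv]
    exact ⟨hqdiff, by
      rw [hderivq]
      exact (hA.continuous.comp hqcont).add (hB.continuous.comp hqcont)⟩
  have hq2 : ContDiff ℝ 2 q := by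
    have h2 : (2 : WithTop ℕ∞) = 1 + 1 := by norm_num
    rw [h2, contDiff_succ_iff_deriv]
    refine ⟨hqdiff, by simp, ?_⟩
    rw [hderivq]
    exact ((hA.of_le (by norm_num)).comp hq1).add ((hB.of_le (by norm_num)).comp hq1)
  have hshift : ContDiff ℝ 2 (fun η : ℝ => q (tn + η)) :=
    hq2.comp (contDiff_const.add contDiff_id)
  -- f is C² at 0
  have hf2 : ContDiffAt ℝ 2 f 0 := by
    have h1 : ContDiffAt ℝ 2 (fun η => A (qA η)) 0 :=
      (hA.contDiffAt).comp 0 hqAsmooth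
    have h2 : ContDiffAt ℝ 2 (fun η : ℝ => A (q (tn + η))) 0 :=
      ((hA.comp hshift).contDiffAt)
    exact h1.sub h2
  have hf0 : f 0 = 0 := by simp [hf, hqA0, hc]
  -- derivative of f at 0
  have hdA : HasDerivAt A (deriv A (q tn)) (q tn) :=
    (hA.differentiable (by norm_num) (q tn)).hasDerivAt
  have h1 : HasDerivAt (fun η => A (qA η)) (deriv A (q tn) * A (q tn)) 0 := by
    have hdA' : HasDerivAt A (deriv A (q tn)) (qA 0) := by rw [hqA0]; exact hdA
    have := HasDerivAt.comp 0 hdA' (hqA 0)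
    simpa [Function.comp_def, hqA0, hc] using this
  have h2 : HasDerivAt (fun η : ℝ => q (tn + η)) (A (q tn) + B (q tn)) 0 := by
    have hs : HasDerivAt (fun η : ℝ => tn + η) 1 0 := by
      simpa using (hasDerivAt_id (0:ℝ)).const_add tn
    have := HasDerivAt.comp 0 (hq (tn + 0)) hs
    simpa [Function.comp_def] using this
  have h3 : HasDerivAt (fun η : ℝ => A (q (tn + η)))
      (deriv A (q tn) * (A (q tn) + B (q tn))) 0 := by
    have hdA'' : HasDerivAt A (deriv A (q tn)) (q (tn + 0)) := by simpa using hdA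
    have := HasDerivAt.comp 0 hdA'' h2
    simpa [Function.comp_def] using this
  have hf' : HasDerivAt f (-(dAB)) 0 := by
    have := h1.sub h3
    have heq : deriv A (q tn) * A (q tn) - deriv A (q tn) * (A (q tn) + B (q tn))
        = -(dAB) := by rw [hdAB]; ring
    rwa [heq] at this
  have hderivf0 : deriv f 0 = -(dAB) := hf'.deriv
  -- Taylor expansion of f
  have ht : (fun η => f η + dAB * η) =O[nhds (0:ℝ)] fun η => η ^ 2 := by
    have := taylor2 hf2
    rw [hf0, hderivf0] at this
    simpa [sub_eq_add_neg] using this.congr_left fun η => by ring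
  -- integral of the Taylor remainder
  have hint := key_int ht
  -- rewrite the goal function as that integral
  have hgoal : ∀ Δt : ℝ,
      (∫ η in (0:ℝ)..Δt, (f η + dAB * η))
        = ((∫ η in (0:ℝ)..Δt, A (qA η)) - ∫ η in (0:ℝ)..Δt, A (q (tn + η)))
            - (-(Δt ^ 2 / 2) * dAB) := by
    intro Δt
    have hqAdiff : Differentiable ℝ qA := fun s => (hqA s).differentiableAt
    have hcqA : Continuous fun η => A (qA η) :=
      hA.continuous.comp hqAdiff.continuous
    have hcq2 : Continuous fun η : ℝ => A (q (tn + η)) :=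
      hA.continuous.comp (hqcont.comp (continuous_const.add continuous_id))
    have hi1 : IntervalIntegrable (fun η => A (qA η)) MeasureTheory.volume 0 Δt :=
      hcqA.intervalIntegrable _ _
    have hi2 : IntervalIntegrable (fun η : ℝ => A (q (tn + η))) MeasureTheory.volume 0 Δt :=
      hcq2.intervalIntegrable _ _
    have hif : IntervalIntegrable f MeasureTheory.volume 0 Δt := hi1.sub hi2
    have hilin : IntervalIntegrable (fun η : ℝ => dAB * η) MeasureTheory.volume 0 Δt :=
      (continuous_const.mul continuous_id).intervalIntegrable _ _
    rw [intervalIntegral.integral_add hif hilin,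
      intervalIntegral.integral_sub hi1 hi2,
      intervalIntegral.integral_const_mul, integral_id]
    ring
  exact hint.congr' (Eventually.of_forall hgoal) EventuallyEq.rfl
end

section
/- Let A, B : ℝ → ℝ be twice continuously differentiable, let tₙ ∈ ℝ, let q : ℝ → ℝ satisfy q′(t) = A(q(t)) + B(q(t)) for all t, and let q_B : ℝ → ℝ satisfy q_B′(s) = B(q_B(s)) for all s with q_B(0) = q(tₙ) and be twice continuously differentiable near 0. Then the parallel-splitting local truncation error attributable to process B, lte_B^{PS}(Δt) = ∫₀^{Δt} B(q_B(η)) dη − ∫₀^{Δt} B(q(tₙ+η)) dη, satisfies lte_B^{PS}(Δt) = −(Δt²/2)·B′(q(tₙ))·A(q(tₙ)) + O(Δt³) as Δt → 0. -/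
open Filter Asymptotics

/-- If `h 0 = 0` and `h' = d` with `d = O(x^n)` near `0`, then `h = O(x^(n+1))` near `0`. -/
lemma isBigO_pow_succ_of_hasDerivAt (h d : ℝ → ℝ) (n : ℕ) (h0 : h 0 = 0)
    (hd : ∀ x, HasDerivAt h (d x) x)
    (hO : d =O[nhds (0 : ℝ)] fun x => x ^ n) :
    h =O[nhds (0 : ℝ)] fun x : ℝ => x ^ (n + 1) := by
  rw [isBigO_iff] at hO
  obtain ⟨C, hC⟩ := hO
  rw [Metric.eventually_nhds_iff] at hC
  obtain ⟨ε, hε, hball⟩ := hC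
  rw [isBigO_iff]
  refine ⟨max C 0, Metric.eventually_nhds_iff.2 ⟨ε, hε, fun x hx => ?_⟩⟩
  have hxa : |x| < ε := by simpa [Real.dist_eq] using hx
  have key : ‖h x - h 0‖ ≤ (max C 0 * |x| ^ n) * ‖x - 0‖ := by
    refine Convex.norm_image_sub_le_of_norm_hasDerivWithin_le
      (f := h) (f' := d) (s := Metric.closedBall (0 : ℝ) |x|)
      (fun y _ => (hd y).hasDerivWithinAt) (fun y hy => ?_) (convex_closedBall _ _)
      (Metric.mem_closedBall.2 (by simp [Real.dist_eq, abs_nonneg]))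
      (Metric.mem_closedBall.2 (by simp [Real.dist_eq]))
    have hy' : |y| ≤ |x| := by simpa [Real.dist_eq] using hy
    have hyε : dist y 0 < ε := by
      rw [Real.dist_eq]; simpa using lt_of_le_of_lt hy' hxa
    calc ‖d y‖ ≤ C * ‖y ^ n‖ := hball hyε
      _ ≤ max C 0 * ‖y ^ n‖ := by
          have : (0:ℝ) ≤ ‖y ^ n‖ := norm_nonneg _
          nlinarith [le_max_left C 0]
      _ ≤ max C 0 * |x| ^ n := by
          have h1 : ‖y ^ n‖ = |y| ^ n := by
            simp [abs_pow]
          rw [h1]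
          exact mul_le_mul_of_nonneg_left (pow_le_pow_left₀ (abs_nonneg _) hy' n)
            (le_max_right C 0)
  rw [h0, sub_zero] at key
  calc ‖h x‖ ≤ (max C 0 * |x| ^ n) * ‖x - 0‖ := key
    _ = max C 0 * ‖x ^ (n + 1)‖ := by
        rw [sub_zero]
        simp only [Real.norm_eq_abs, abs_pow]
        ring

theorem lte_B_parallel_splitting
    (A B q qB : ℝ → ℝ) (tn : ℝ)
    (hA : ContDiff ℝ 2 A) (hB : ContDiff ℝ 2 B)
    (hq : ∀ t, HasDerivAt q (A (q t) + B (q t)) t)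
    (hqB : ∀ s, HasDerivAt qB (B (qB s)) s)
    (hqB0 : qB 0 = q tn)
    (hqBsmooth : ContDiffAt ℝ 2 qB 0) :
    (fun Δt : ℝ =>
        ((∫ η in (0:ℝ)..Δt, B (qB η)) - ∫ η in (0:ℝ)..Δt, B (q (tn + η)))
          - (-(Δt ^ 2 / 2) * (deriv B (q tn) * A (q tn))))
      =O[nhds (0:ℝ)] (fun Δt : ℝ => Δt ^ 3) := by
  -- Basic differentiability facts
  have hBd : Differentiable ℝ B := hB.differentiable (by norm_num)
  have hAd : Differentiable ℝ A := hA.differentiable (by norm_num)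
  have hB' : Differentiable ℝ (deriv B) := by
    have := (contDiff_succ_iff_deriv (n := 1) (f := B)).1 (by exact_mod_cast hB)
    exact this.2.2.differentiable (by norm_num)
  have hqd : Differentiable ℝ q := fun t => (hq t).differentiableAt
  have hqBd : Differentiable ℝ qB := fun s => (hqB s).differentiableAt
  -- the integrand difference
  set g : ℝ → ℝ := fun η => B (qB η) - B (q (tn + η)) with hg_def
  set d : ℝ → ℝ := fun η => deriv B (qB η) * B (qB η)
    - deriv B (q (tn + η)) * (A (q (tn + η)) + B (q (tn + η))) with hd_def
  have hshift : ∀ η : ℝ, HasDerivAt (fun s => q (tn + s))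
      (A (q (tn + η)) + B (q (tn + η))) η := by
    intro η
    have h1 : HasDerivAt (fun s : ℝ => tn + s) 1 η := (hasDerivAt_id η).const_add tn
    have := (hq (tn + η)).comp η h1
    rw [mul_one] at this
    exact this
  have hg : ∀ η, HasDerivAt g (d η) η := by
    intro η
    have h1 : HasDerivAt (fun s => B (qB s)) (deriv B (qB η) * B (qB η)) η :=
      ((hBd (qB η)).hasDerivAt).comp η (hqB η)
    have h2 : HasDerivAt (fun s => B (q (tn + s)))
        (deriv B (q (tn + η)) * (A (q (tn + η)) + B (q (tn + η)))) η :=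
      ((hBd (q (tn + η))).hasDerivAt).comp η (hshift η)
    exact h1.sub h2
  have hg0 : g 0 = 0 := by simp [hg_def, hqB0]
  have hd0 : d 0 = -(deriv B (q tn) * A (q tn)) := by
    simp only [hd_def, add_zero, hqB0]
    ring
  -- d is differentiable at 0, hence d - d 0 = O(x)
  have hddiff : DifferentiableAt ℝ d 0 := by
    apply DifferentiableAt.sub
    · exact ((hB' (qB 0)).comp 0 (hqBd 0)).mul ((hBd (qB 0)).comp 0 (hqBd 0))
    · have hqshift : DifferentiableAt ℝ (fun s : ℝ => q (tn + s)) 0 :=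
        (hqd (tn + 0)).comp 0 (differentiableAt_id.const_add tn)
      exact ((hB' (q (tn + 0))).comp 0 hqshift).mul
        (((hAd (q (tn + 0))).comp 0 hqshift).add ((hBd (q (tn + 0))).comp 0 hqshift))
  have hdO : (fun x => d x - d 0) =O[nhds (0:ℝ)] fun x : ℝ => x ^ 1 := by
    have := hddiff.isBigO_sub
    simpa using this
  -- level 1 : g x - d 0 * x = O(x^2)
  have hlvl1 : (fun x => g x - d 0 * x) =O[nhds (0:ℝ)] fun x : ℝ => x ^ 2 := by
    refine isBigO_pow_succ_of_hasDerivAt _ (fun x => d x - d 0) 1 (by simp [hg0]) ?_ hdO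
    intro x
    have := (hg x).sub ((hasDerivAt_id x).const_mul (d 0))
    rw [mul_one] at this
    exact this
  -- level 2 : ∫ g - d 0 * x^2/2 = O(x^3)
  have hgcont : Continuous g :=
    (hBd.continuous.comp hqBd.continuous).sub
      (hBd.continuous.comp (hqd.continuous.comp (by continuity)))
  have hlvl2 : (fun x => (∫ η in (0:ℝ)..x, g η) - d 0 * x ^ 2 / 2)
      =O[nhds (0:ℝ)] fun x : ℝ => x ^ 3 := by
    refine isBigO_pow_succ_of_hasDerivAt _ (fun x => g x - d 0 * x) 2
      (by simp) ?_ hlvl1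
    intro x
    have h1 : HasDerivAt (fun u => ∫ η in (0:ℝ)..u, g η) (g x) x :=
      (hgcont.integral_hasStrictDerivAt 0 x).hasDerivAt
    have h2 : HasDerivAt (fun u : ℝ => d 0 * u ^ 2 / 2) (d 0 * x) x := by
      have := ((hasDerivAt_pow 2 x).const_mul (d 0)).div_const 2
      refine this.congr_deriv ?_
      push_cast
      ring
    exact h1.sub h2
  -- rewrite the target as hlvl2
  refine hlvl2.congr' (Eventually.of_forall fun x => ?_) (Eventually.of_forall fun x => rfl)
  have hint : (∫ η in (0:ℝ)..x, g η)
      = (∫ η in (0:ℝ)..x, B (qB η)) - ∫ η in (0:ℝ)..x, B (q (tn + η)) := by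
    rw [← intervalIntegral.integral_sub]
    · exact ((hBd.continuous.comp hqBd.continuous)).intervalIntegrable 0 x
    · exact (hBd.continuous.comp (hqd.continuous.comp (by continuity))).intervalIntegrable 0 x
  show (∫ η in (0:ℝ)..x, g η) - d 0 * x ^ 2 / 2 = _
  rw [hint, hd0]
  ring
end

section
/- Let A, B : ℝ → ℝ be twice continuously differentiable, let tₙ ∈ ℝ, let q : ℝ → ℝ satisfy q′(t) = A(q(t)) + B(q(t)) for all t. Let q_A : ℝ → ℝ satisfy q_A′(s) = A(q_A(s)) with q_A(0) = q(tₙ), and let q_B : ℝ → ℝ → ℝ be the two-parameter flow of B, i.e., for every initial state φ, the function s ↦ q_B(s, φ) satisfies ∂_s q_B(s, φ) = B(q_B(s, φ)) with q_B(0, φ) = φ, with sufficient smoothness (q_B twice continuously differentiable in both arguments near (0, q(tₙ)), q_A twice continuously differentiable near 0). Then ∫₀^{Δt} B(q_B(η, q_A(Δt))) dη = Δt·B(q(tₙ)) + Δt²·B′(q(tₙ))·A(q(tₙ)) + (Δt²/2)·B′(q(tₙ))·B(q(tₙ)) + O(Δt³) as Δt → 0. -/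
open Filter Asymptotics

-- second-order Taylor: C^2 at x₀ implies first-order remainder is O(‖x-x₀‖²)
theorem taylor2_bigO {E F : Type*} [NormedAddCommGroup E] [NormedSpace ℝ E]
    [NormedAddCommGroup F] [NormedSpace ℝ F]
    {f : E → F} {x₀ : E} (hf : ContDiffAt ℝ 2 f x₀) :
    (fun x => f x - f x₀ - fderiv ℝ f x₀ (x - x₀)) =O[nhds x₀] (fun x => ‖x - x₀‖ ^ 2) := by
  obtain ⟨u, hu, hfu⟩ := hf.contDiffOn le_rfl (by norm_num)
  have hderiv : ContDiffAt ℝ 1 (fderiv ℝ f) x₀ := hf.fderiv_right (by norm_num)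
  have hO : (fun x => fderiv ℝ f x - fderiv ℝ f x₀) =O[nhds x₀] (fun x => x - x₀) :=
    (hderiv.differentiableAt (by norm_num)).isBigO_sub
  obtain ⟨C₀, hC⟩ := hO.bound
  rw [Filter.eventually_iff_exists_mem] at hC
  obtain ⟨s, hs, hCs₀⟩ := hC
  set C := max C₀ 0 with hCdef
  have hCnn : 0 ≤ C := le_max_right _ _
  have hCs : ∀ y ∈ s, ‖fderiv ℝ f y - fderiv ℝ f x₀‖ ≤ C * ‖y - x₀‖ := fun y hy =>
    (hCs₀ y hy).trans (by
      simpa using mul_le_mul_of_nonneg_right (le_max_left C₀ 0) (norm_nonneg (y - x₀)))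
  obtain ⟨r, hr, hball⟩ := Metric.mem_nhds_iff.1 (Filter.inter_mem (interior_mem_nhds.2 hu) hs)
  have hdiff : ∀ y ∈ Metric.ball x₀ r, HasFDerivAt f (fderiv ℝ f y) y := by
    intro y hy
    have hyu : interior u ∈ nhds y :=
      (isOpen_interior).mem_nhds (hball hy).1
    have : DifferentiableAt ℝ f y := by
      have := (hfu.differentiableOn (by norm_num)).mono interior_subset
      exact (this y (hball hy).1).differentiableAt hyu
    exact this.hasFDerivAt
  rw [isBigO_iff]
  refine ⟨C, ?_⟩
  have hev : Metric.ball x₀ r ∈ nhds x₀ := Metric.ball_mem_nhds _ hr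
  filter_upwards [hev] with x hx
  have hsub : Metric.closedBall x₀ ‖x - x₀‖ ⊆ Metric.ball x₀ r := by
    intro y hy
    rw [Metric.mem_closedBall] at hy
    rw [Metric.mem_ball]
    calc dist y x₀ ≤ ‖x - x₀‖ := hy
      _ < r := by rw [← dist_eq_norm]; exact hx
  have key : ‖f x - f x₀ - (fderiv ℝ f x₀) (x - x₀)‖ ≤ (C * ‖x - x₀‖) * ‖x - x₀‖ := by
    refine (convex_closedBall x₀ ‖x - x₀‖).norm_image_sub_le_of_norm_hasFDerivWithin_le'
      (f' := fderiv ℝ f) (fun y hy => ((hdiff y (hsub hy)).hasFDerivWithinAt)) ?_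
      (Metric.mem_closedBall_self (norm_nonneg _)) ?_
    · intro y hy
      have h1 : ‖fderiv ℝ f y - fderiv ℝ f x₀‖ ≤ C * ‖y - x₀‖ := hCs y (hball (hsub hy)).2
      have h2 : ‖y - x₀‖ ≤ ‖x - x₀‖ := mem_closedBall_iff_norm.1 hy
      calc ‖fderiv ℝ f y - fderiv ℝ f x₀‖ ≤ C * ‖y - x₀‖ := h1
        _ ≤ C * ‖x - x₀‖ := mul_le_mul_of_nonneg_left h2 hCnn
    · rw [Metric.mem_closedBall, dist_eq_norm]
  calc ‖f x - f x₀ - (fderiv ℝ f x₀) (x - x₀)‖ ≤ (C * ‖x - x₀‖) * ‖x - x₀‖ := key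
    _ = C * ‖(fun x => ‖x - x₀‖ ^ 2) x‖ := by
        rw [Real.norm_of_nonneg (by positivity)]; ring

theorem sequential_splitting_B_integral_expansion
    (A B q qA : ℝ → ℝ) (qB : ℝ → ℝ → ℝ) (tn : ℝ)
    (hA : ContDiff ℝ 2 A) (hB : ContDiff ℝ 2 B)
    (hq : ∀ t, HasDerivAt q (A (q t) + B (q t)) t)
    (hqA : ∀ s, HasDerivAt qA (A (qA s)) s)
    (hqA0 : qA 0 = q tn)
    (hqB : ∀ φ s, HasDerivAt (fun u => qB u φ) (B (qB s φ)) s)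
    (hqB0 : ∀ φ, qB 0 φ = φ)
    (hqAsmooth : ContDiffAt ℝ 2 qA 0)
    (hqBsmooth : ContDiffAt ℝ 2 (fun p : ℝ × ℝ => qB p.1 p.2) (0, q tn)) :
    (fun Δt : ℝ =>
        (∫ η in (0:ℝ)..Δt, B (qB η (qA Δt))) - Δt * B (q tn)
          - Δt ^ 2 * (deriv B (q tn) * A (q tn))
          - Δt ^ 2 / 2 * (deriv B (q tn) * B (q tn)))
      =O[nhds (0:ℝ)] (fun Δt : ℝ => Δt ^ 3) := by
  set c := q tn with hc
  set g : ℝ × ℝ → ℝ := fun p => B (qB p.1 (qA p.2)) with hg_def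
  -- smoothness of g at (0,0)
  have hm : ContDiffAt ℝ 2 (fun p : ℝ × ℝ => (p.1, qA p.2)) ((0:ℝ), (0:ℝ)) :=
    contDiffAt_fst.prodMk (ContDiffAt.comp ((0:ℝ),(0:ℝ)) hqAsmooth contDiffAt_snd)
  have hqB2 : ContDiffAt ℝ 2 (fun p : ℝ × ℝ => qB p.1 p.2)
      ((fun p : ℝ × ℝ => (p.1, qA p.2)) ((0:ℝ), (0:ℝ))) := by
    simpa [hqA0] using hqBsmooth
  have hg2 : ContDiffAt ℝ 2 g ((0:ℝ), (0:ℝ)) :=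
    (hB.contDiffAt).comp ((0:ℝ),(0:ℝ)) (ContDiffAt.comp (g := fun p : ℝ × ℝ => qB p.1 p.2) ((0:ℝ),(0:ℝ)) hqB2 hm)
  -- derivative values
  have hBc : HasDerivAt B (deriv B c) c :=
    ((hB.differentiable (by norm_num)) c).hasDerivAt
  have hqAd : HasDerivAt qA (A c) 0 := by
    have := hqA 0; rwa [hqA0] at this
  set L := fderiv ℝ g ((0:ℝ), (0:ℝ)) with hLdef
  have hLd : HasFDerivAt g L ((0:ℝ), (0:ℝ)) :=
    (hg2.differentiableAt (by norm_num)).hasFDerivAt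
  have hg00 : g ((0:ℝ), (0:ℝ)) = B c := by
    simp [hg_def, hqB0, hqA0]
  have hL10 : L (1, 0) = deriv B c * B c := by
    have hcurve1 : HasDerivAt (fun s : ℝ => ((s, (0:ℝ)) : ℝ × ℝ)) ((1:ℝ), (0:ℝ)) 0 := by
      simpa using (hasDerivAt_id (0:ℝ)).prodMk (hasDerivAt_const (0:ℝ) (0:ℝ))
    have h1 : HasDerivAt (fun s : ℝ => g (s, 0)) (L (1, 0)) 0 :=
      HasFDerivAt.comp_hasDerivAt (f := fun s : ℝ => ((s, (0:ℝ)) : ℝ × ℝ)) 0 hLd hcurve1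
    have hcurve : HasDerivAt (fun s : ℝ => qB s c) (B c) 0 := by
      have h := hqB c 0
      rwa [hqB0] at h
    have h2 : HasDerivAt (fun s : ℝ => g (s, 0)) (deriv B c * B c) 0 := by
      have heq : (fun s : ℝ => g (s, 0)) = fun s : ℝ => B (qB s c) := by
        funext v; simp [hg_def, hqA0]
      rw [heq]
      have hBc' : HasDerivAt B (deriv B c) (qB 0 c) := by rwa [hqB0]
      exact HasDerivAt.comp 0 hBc' hcurve
    exact h1.unique h2
  have hL01 : L (0, 1) = deriv B c * A c := by
    have hcurve1 : HasDerivAt (fun v : ℝ => (((0:ℝ), v) : ℝ × ℝ)) ((0:ℝ), (1:ℝ)) 0 := by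
      simpa using (hasDerivAt_const (0:ℝ) (0:ℝ)).prodMk (hasDerivAt_id (0:ℝ))
    have h1 : HasDerivAt (fun v : ℝ => g (0, v)) (L (0, 1)) 0 :=
      HasFDerivAt.comp_hasDerivAt (f := fun v : ℝ => (((0:ℝ), v) : ℝ × ℝ)) 0 hLd hcurve1
    have h2 : HasDerivAt (fun v : ℝ => g (0, v)) (deriv B c * A c) 0 := by
      have heq : (fun v : ℝ => g (0, v)) = fun v : ℝ => B (qA v) := by
        funext v; simp [hg_def, hqB0]
      rw [heq]
      have hB0 : HasDerivAt B (deriv B c) (qA 0) := by rwa [hqA0]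
      exact HasDerivAt.comp 0 hB0 hqAd
    exact h1.unique h2
  -- Taylor remainder
  have hT := taylor2_bigO hg2
  obtain ⟨C, hC⟩ := hT.bound
  rw [Filter.eventually_iff_exists_mem] at hC
  obtain ⟨s, hs, hCs⟩ := hC
  obtain ⟨u, hu, hgu⟩ := hg2.contDiffOn le_rfl (by norm_num)
  obtain ⟨ε, hε, hball⟩ :=
    Metric.mem_nhds_iff.1 (Filter.inter_mem hs (interior_mem_nhds.2 hu))
  rw [isBigO_iff]
  refine ⟨C, ?_⟩
  filter_upwards [Metric.ball_mem_nhds (0:ℝ) hε] with Δt hΔt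
  have hΔt' : |Δt| < ε := by simpa [Real.dist_eq] using hΔt
  -- points of the segment are in the ball
  have hmem : ∀ η ∈ Set.uIcc (0:ℝ) Δt, ((η, Δt) : ℝ × ℝ) ∈ Metric.ball ((0:ℝ),(0:ℝ)) ε := by
    intro η hη
    have habs : |η| ≤ |Δt| := by
      rcases Set.mem_uIcc.mp hη with ⟨h1, h2⟩ | ⟨h1, h2⟩ <;>
        (rw [abs_le]; constructor <;> linarith [le_abs_self Δt, neg_abs_le Δt, abs_nonneg Δt])
    have : dist ((η, Δt) : ℝ × ℝ) ((0:ℝ),(0:ℝ)) = max |η| |Δt| := by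
      rw [Prod.dist_eq]; simp [Real.dist_eq]
    rw [Metric.mem_ball, this, max_eq_right habs]
    exact hΔt'
  -- continuity on the segment
  have hcont : ContinuousOn (fun η => g (η, Δt)) (Set.uIcc (0:ℝ) Δt) := by
    intro η hη
    have hpt : ((η, Δt) : ℝ × ℝ) ∈ interior u := (hball (hmem η hη)).2
    have hgat : ContinuousAt g (η, Δt) :=
      hgu.continuousOn.continuousAt
        (Filter.mem_of_superset (isOpen_interior.mem_nhds hpt) interior_subset)
    have hmap : ContinuousAt (fun x : ℝ => ((x, Δt) : ℝ × ℝ)) η :=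
      (continuous_id.prodMk continuous_const).continuousAt
    exact ((ContinuousAt.comp (f := fun x : ℝ => ((x, Δt) : ℝ × ℝ)) hgat hmap)).continuousWithinAt
  have hInt_g : IntervalIntegrable (fun η => g (η, Δt)) MeasureTheory.volume 0 Δt :=
    hcont.intervalIntegrable
  -- linear part
  have hLlin : ∀ η : ℝ, L (η, Δt) = η * (deriv B c * B c) + Δt * (deriv B c * A c) := by
    intro η
    have hdecomp : ((η, Δt) : ℝ × ℝ) = η • ((1:ℝ), (0:ℝ)) + Δt • ((0:ℝ), (1:ℝ)) := by
      simp [Prod.ext_iff]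
    rw [hdecomp, map_add, map_smul, map_smul, hL10, hL01]
    simp [smul_eq_mul]
  set a : ℝ → ℝ := fun η => B c + (η * (deriv B c * B c) + Δt * (deriv B c * A c)) with ha_def
  have hacont : Continuous a := by
    rw [ha_def]
    exact continuous_const.add ((continuous_id.mul continuous_const).add continuous_const)
  have hInt_a : IntervalIntegrable a MeasureTheory.volume 0 Δt :=
    hacont.intervalIntegrable _ _
  have hInta : ∫ η in (0:ℝ)..Δt, a η
      = Δt * B c + Δt ^ 2 / 2 * (deriv B c * B c) + Δt ^ 2 * (deriv B c * A c) := by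
    have i2 : IntervalIntegrable
        (fun η : ℝ => η * (deriv B c * B c) + Δt * (deriv B c * A c))
        MeasureTheory.volume 0 Δt :=
      Continuous.intervalIntegrable
        (by exact (continuous_id'.mul continuous_const).add continuous_const) _ _
    have i3 : IntervalIntegrable (fun η : ℝ => η * (deriv B c * B c))
        MeasureTheory.volume 0 Δt :=
      Continuous.intervalIntegrable (by exact continuous_id'.mul continuous_const) _ _
    show (∫ η in (0:ℝ)..Δt,
        (B c + (η * (deriv B c * B c) + Δt * (deriv B c * A c)))) = _
    rw [intervalIntegral.integral_add (intervalIntegrable_const) i2]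
    rw [intervalIntegral.integral_add i3 (intervalIntegrable_const)]
    rw [intervalIntegral.integral_const, intervalIntegral.integral_const,
      intervalIntegral.integral_mul_const, integral_id]
    simp only [smul_eq_mul]
    ring
  have hsplit : (∫ η in (0:ℝ)..Δt, g (η, Δt)) - (∫ η in (0:ℝ)..Δt, a η)
      = ∫ η in (0:ℝ)..Δt, (g (η, Δt) - a η) :=
    (intervalIntegral.integral_sub hInt_g hInt_a).symm
  -- bound on remainder integral
  have hRbound : ‖∫ η in (0:ℝ)..Δt, (g (η, Δt) - a η)‖ ≤ C * Δt ^ 2 * |Δt - 0| := by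
    apply intervalIntegral.norm_integral_le_of_norm_le_const
    intro η hη
    have hη' : η ∈ Set.uIcc (0:ℝ) Δt := Set.uIoc_subset_uIcc hη
    have hps : ((η, Δt) : ℝ × ℝ) ∈ s := (hball (hmem η hη')).1
    have := hCs _ hps
    have hnorm : ‖((η, Δt) : ℝ × ℝ) - ((0:ℝ),(0:ℝ))‖ = |Δt| := by
      have habs : |η| ≤ |Δt| := by
        rcases Set.mem_uIcc.mp hη' with ⟨h1, h2⟩ | ⟨h1, h2⟩ <;>
          (rw [abs_le]; constructor <;> linarith [le_abs_self Δt, neg_abs_le Δt, abs_nonneg Δt])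
      rw [Prod.norm_def]
      simp [Real.norm_eq_abs, max_eq_right habs]
    rw [hg00, hnorm] at this
    have hsub : ((η, Δt) : ℝ × ℝ) - ((0:ℝ),(0:ℝ)) = (η, Δt) := by simp
    rw [hsub] at this
    calc ‖g (η, Δt) - a η‖ = ‖g (η, Δt) - B c - L (η, Δt)‖ := by
          rw [ha_def]; congr 1; rw [hLlin η]; ring
      _ ≤ C * ‖|Δt| ^ 2‖ := this
      _ = C * Δt ^ 2 := by rw [Real.norm_of_nonneg (by positivity), sq_abs]
  -- final
  have hkey : (∫ η in (0:ℝ)..Δt, B (qB η (qA Δt))) - Δt * B c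
      - Δt ^ 2 * (deriv B c * A c) - Δt ^ 2 / 2 * (deriv B c * B c)
      = ∫ η in (0:ℝ)..Δt, (g (η, Δt) - a η) := by
    rw [← hsplit, hInta]
    have : (∫ η in (0:ℝ)..Δt, B (qB η (qA Δt))) = ∫ η in (0:ℝ)..Δt, g (η, Δt) := rfl
    rw [this]; ring
  rw [hkey]
  calc ‖∫ η in (0:ℝ)..Δt, (g (η, Δt) - a η)‖ ≤ C * Δt ^ 2 * |Δt - 0| := hRbound
    _ = C * ‖Δt ^ 3‖ := by
        rw [sub_zero, Real.norm_eq_abs, abs_pow]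
        rw [← sq_abs]
        ring
end

section
/- Let A, B : ℝ → ℝ be twice continuously differentiable, let tₙ ∈ ℝ, let q : ℝ → ℝ satisfy q′(t) = A(q(t)) + B(q(t)) for all t. Let q_A : ℝ → ℝ satisfy q_A′(s) = A(q_A(s)) with q_A(0) = q(tₙ), and let q_B : ℝ → ℝ → ℝ be the two-parameter flow of B (for every φ, ∂_s q_B(s, φ) = B(q_B(s, φ)) and q_B(0, φ) = φ), with q_A and q_B twice continuously differentiable near 0 and near (0, q(tₙ)) respectively. Then the sequential-splitting local truncation error attributable to process B, lte_B^{SS}(Δt) = ∫₀^{Δt} B(q_B(η, q_A(Δt))) dη − ∫₀^{Δt} B(q(tₙ+η)) dη, satisfies lte_B^{SS}(Δt) = +(Δt²/2)·B′(q(tₙ))·A(q(tₙ)) + O(Δt³) as Δt → 0. -/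
open Filter Asymptotics Set

private lemma mem_uIcc_abs {u τ : ℝ} (h : u ∈ Set.uIcc 0 τ) : |u| ≤ |τ| := by
  rcases le_total 0 τ with hτ | hτ
  · rw [Set.uIcc_of_le hτ] at h; rw [abs_of_nonneg h.1, abs_of_nonneg hτ]; exact h.2
  · rw [Set.uIcc_of_ge hτ] at h; rw [abs_of_nonpos h.2, abs_of_nonpos hτ]; linarith [h.1]

private lemma mem_uIcc_abs' {x y u : ℝ} (h : u ∈ Set.uIcc x y) : |u - x| ≤ |y - x| := by
  rcases le_total x y with hxy | hxy
  · rw [Set.uIcc_of_le hxy] at h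
    rw [abs_of_nonneg (by linarith [h.1]), abs_of_nonneg (by linarith)]; linarith [h.2]
  · rw [Set.uIcc_of_ge hxy] at h
    rw [abs_of_nonpos (by linarith [h.2]), abs_of_nonpos (by linarith)]; linarith [h.1]

private lemma deriv_bound_sub (g g' : ℝ → ℝ) {τ C : ℝ}
    (hg : ∀ u ∈ Set.uIcc (0:ℝ) τ, HasDerivAt g (g' u) u)
    (hb : ∀ u ∈ Set.uIcc (0:ℝ) τ, |g' u| ≤ C) : |g τ - g 0| ≤ C * |τ| := by
  have := Convex.norm_image_sub_le_of_norm_hasDerivWithin_le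
    (fun u hu => (hg u hu).hasDerivWithinAt) (fun u hu => hb u hu)
    (convex_uIcc (0:ℝ) τ) Set.left_mem_uIcc Set.right_mem_uIcc
  simpa [Real.norm_eq_abs] using this

private lemma lip_bound (f : ℝ → ℝ) (hf : ContDiffAt ℝ 1 f 0) :
    ∃ C, 0 ≤ C ∧ ∃ δ > 0, ∀ τ : ℝ, |τ| ≤ δ → |f τ - f 0| ≤ C * |τ| := by
  obtain ⟨K, t, ht, hlip⟩ := hf.exists_lipschitzOnWith
  obtain ⟨ε, hε, hball⟩ := Metric.mem_nhds_iff.mp ht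
  refine ⟨K, K.coe_nonneg, ε/2, by positivity, fun τ hτ => ?_⟩
  have h0 : (0:ℝ) ∈ t := hball (by simp [Metric.mem_ball, hε])
  have hτt : τ ∈ t := hball (by simp only [Metric.mem_ball, Real.dist_eq, sub_zero]; linarith [abs_nonneg τ])
  have := hlip.dist_le_mul τ hτt 0 h0
  simpa [Real.dist_eq] using this

private lemma taylor2_bound (f f' : ℝ → ℝ)
    (hd : ∀ u, HasDerivAt f (f' u) u)
    (hf' : ContDiffAt ℝ 1 f' 0) :
    ∃ C, 0 ≤ C ∧ ∃ δ > 0, ∀ τ : ℝ, |τ| ≤ δ → |f τ - f 0 - f' 0 * τ| ≤ C * τ^2 := by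
  obtain ⟨K, t, ht, hlip⟩ := hf'.exists_lipschitzOnWith
  obtain ⟨ε, hε, hball⟩ := Metric.mem_nhds_iff.mp ht
  refine ⟨K, K.coe_nonneg, ε/2, by positivity, fun τ hτ => ?_⟩
  have h0 : (0:ℝ) ∈ t := hball (by simp [Metric.mem_ball, hε])
  have hmem : ∀ u ∈ Set.uIcc (0:ℝ) τ, u ∈ t := fun u hu => hball (by
    simp only [Metric.mem_ball, Real.dist_eq, sub_zero]
    have := mem_uIcc_abs hu; linarith [abs_nonneg u])
  have key := deriv_bound_sub (fun u => f u - f' 0 * u) (fun u => f' u - f' 0)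
    (fun u _ => (hd u).sub (by simpa using (hasDerivAt_id u).const_mul (f' 0)))
    (fun u hu => by
      have := hlip.dist_le_mul u (hmem u hu) 0 h0
      rw [Real.dist_eq, Real.dist_eq, sub_zero] at this
      exact le_trans this (by
        have := mem_uIcc_abs hu
        nlinarith [K.coe_nonneg]))
    (τ := τ) (C := K * |τ|)
  have : |f τ - f' 0 * τ - (f 0 - f' 0 * 0)| ≤ K * |τ| * |τ| := key
  calc |f τ - f 0 - f' 0 * τ| = |f τ - f' 0 * τ - (f 0 - f' 0 * 0)| := by ring_nf
    _ ≤ K * |τ| * |τ| := this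
    _ = K * τ^2 := by rw [mul_assoc, abs_mul_abs_self]; ring

private lemma qB_expansion (B : ℝ → ℝ) (qB : ℝ → ℝ → ℝ) (q0 : ℝ)
    (hB : ContDiff ℝ 2 B)
    (hqB : ∀ φ s, HasDerivAt (fun u => qB u φ) (B (qB s φ)) s)
    (hqB0 : ∀ φ, qB 0 φ = φ)
    (hcont : ContinuousAt (fun p : ℝ × ℝ => qB p.1 p.2) (0, q0)) :
    ∃ C, 0 ≤ C ∧ ∃ δ > 0, ∀ s φ : ℝ, |s| ≤ δ → |φ - q0| ≤ δ →
      |qB s φ - φ - s * B φ - s^2/2 * (deriv B φ * B φ)| ≤ C * |s|^3 := by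
  have hBd : ∀ x, HasDerivAt B (deriv B x) x :=
    fun x => ((hB.differentiable two_ne_zero) x).hasDerivAt
  have hB1 : ContDiff ℝ 1 (deriv B) := by
    have h2 : ContDiff ℝ (1+1 : ℕ) B := by exact_mod_cast hB
    exact (contDiff_succ_iff_deriv.mp h2).2.2
  have hBd' : ∀ x, HasDerivAt (deriv B) (deriv (deriv B) x) x :=
    fun x => ((hB1.differentiable one_ne_zero) x).hasDerivAt
  have hB2c : Continuous (deriv (deriv B)) := (contDiff_one_iff_deriv.mp hB1).2
  -- bounds on the closed ball of radius 1
  obtain ⟨MB, hMB⟩ := (isCompact_closedBall q0 1).exists_bound_of_continuousOn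
    (hB.continuous.continuousOn)
  obtain ⟨MB', hMB'⟩ := (isCompact_closedBall q0 1).exists_bound_of_continuousOn
    ((hB1.continuous).continuousOn)
  obtain ⟨M2, hM2⟩ := (isCompact_closedBall q0 1).exists_bound_of_continuousOn
    (hB2c.continuousOn)
  have hq0mem : q0 ∈ Metric.closedBall q0 1 := Metric.mem_closedBall_self zero_le_one
  have hMB0 : 0 ≤ MB := le_trans (norm_nonneg _) (hMB q0 hq0mem)
  have hMB'0 : 0 ≤ MB' := le_trans (norm_nonneg _) (hMB' q0 hq0mem)
  have hM20 : 0 ≤ M2 := le_trans (norm_nonneg _) (hM2 q0 hq0mem)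
  simp only [Real.norm_eq_abs] at hMB hMB' hM2
  -- Lipschitz bound for B on the ball
  have lipB : ∀ x ∈ Metric.closedBall q0 1, ∀ y ∈ Metric.closedBall q0 1,
      |B y - B x| ≤ MB' * |y - x| := by
    intro x hx y hy
    have := Convex.norm_image_sub_le_of_norm_hasDerivWithin_le
      (f := B) (f' := deriv B) (s := Metric.closedBall q0 1)
      (fun u hu => (hBd u).hasDerivWithinAt)
      (fun u hu => by simpa [Real.norm_eq_abs] using hMB' u hu)
      (convex_closedBall q0 1) hx hy
    simpa [Real.norm_eq_abs] using this
  -- quadratic Taylor bound for B on the ball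
  have quadB : ∀ x ∈ Metric.closedBall q0 1, ∀ y ∈ Metric.closedBall q0 1,
      |B y - B x - deriv B x * (y - x)| ≤ M2 * |y - x| * |y - x| := by
    intro x hx y hy
    have hsub : Set.uIcc x y ⊆ Metric.closedBall q0 1 :=
      (convex_closedBall q0 1).ordConnected.uIcc_subset hx hy
    have := Convex.norm_image_sub_le_of_norm_hasDerivWithin_le
      (f := fun u => B u - deriv B x * u) (f' := fun u => deriv B u - deriv B x)
      (s := Set.uIcc x y) (C := M2 * |y - x|)
      (fun u hu => ((hBd u).sub (by simpa using (hasDerivAt_id u).const_mul (deriv B x))).hasDerivWithinAt)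
      (fun u hu => by
        have h1 := Convex.norm_image_sub_le_of_norm_hasDerivWithin_le
          (f := deriv B) (f' := deriv (deriv B)) (s := Metric.closedBall q0 1)
          (fun v hv => (hBd' v).hasDerivWithinAt)
          (fun v hv => by simpa [Real.norm_eq_abs] using hM2 v hv)
          (convex_closedBall q0 1) hx (hsub hu)
        rw [Real.norm_eq_abs, Real.norm_eq_abs] at h1
        calc ‖deriv B u - deriv B x‖ ≤ M2 * |u - x| := h1
          _ ≤ M2 * |y - x| := by nlinarith [mem_uIcc_abs' hu])
      (convex_uIcc x y) Set.left_mem_uIcc Set.right_mem_uIcc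
    rw [Real.norm_eq_abs, Real.norm_eq_abs] at this
    calc |B y - B x - deriv B x * (y - x)|
        = |(B y - deriv B x * y) - (B x - deriv B x * x)| := by ring_nf
      _ ≤ M2 * |y - x| * |y - x| := this
  -- smallness region from continuity
  obtain ⟨δ', hδ', hcδ⟩ := Metric.continuousAt_iff.mp hcont (1/2) (by norm_num)
  set δ : ℝ := min (δ'/2) (1/2) with hδdef
  have hδpos : 0 < δ := by positivity
  have hδle : δ ≤ 1/2 := min_le_right _ _
  have hsmall : ∀ u φ : ℝ, |u| ≤ δ → |φ - q0| ≤ δ → qB u φ ∈ Metric.closedBall q0 1 := by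
    intro u φ hu hφ
    have : dist ((u, φ) : ℝ × ℝ) (0, q0) < δ' := by
      rw [Prod.dist_eq]
      have h1 : dist u 0 ≤ δ'/2 := by rw [Real.dist_eq, sub_zero]; exact hu.trans (min_le_left _ _)
      have h2 : dist φ q0 ≤ δ'/2 := by rw [Real.dist_eq]; exact hφ.trans (min_le_left _ _)
      have := max_le h1 h2
      calc max (dist u 0) (dist φ q0) ≤ δ'/2 := this
        _ < δ' := by linarith
    have := hcδ this
    simp only [hqB0 q0] at this
    rw [Real.dist_eq] at this
    exact Metric.mem_closedBall.mpr (by rw [Real.dist_eq]; linarith)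
  refine ⟨M2 * MB^2 + MB'^2 * MB, by positivity, δ, hδpos, fun s φ hs hφ => ?_⟩
  have hφmem : φ ∈ Metric.closedBall q0 1 :=
    Metric.mem_closedBall.mpr (by rw [Real.dist_eq]; linarith)
  have hmemseg : ∀ u ∈ Set.uIcc (0:ℝ) s, qB u φ ∈ Metric.closedBall q0 1 :=
    fun u hu => hsmall u φ ((mem_uIcc_abs hu).trans hs) hφ
  -- step 1
  have step1 : ∀ u ∈ Set.uIcc (0:ℝ) s, |qB u φ - φ| ≤ MB * |u| := by
    intro u hu
    have hsub : Set.uIcc (0:ℝ) u ⊆ Set.uIcc (0:ℝ) s := by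
      apply Set.uIcc_subset_uIcc Set.left_mem_uIcc hu
    have := deriv_bound_sub (fun v => qB v φ) (fun v => B (qB v φ))
      (fun v _ => hqB φ v)
      (fun v hv => hMB _ (hmemseg v (hsub hv))) (τ := u) (C := MB)
    have this2 : |qB u φ - qB 0 φ| ≤ MB * |u| := this
    rw [hqB0] at this2; exact this2
  -- step 2
  have step2 : ∀ u ∈ Set.uIcc (0:ℝ) s, |qB u φ - φ - u * B φ| ≤ MB' * MB * |u| * |u| := by
    intro u hu
    have hsub : Set.uIcc (0:ℝ) u ⊆ Set.uIcc (0:ℝ) s := by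
      apply Set.uIcc_subset_uIcc Set.left_mem_uIcc hu
    have key := deriv_bound_sub (fun v => qB v φ - v * B φ) (fun v => B (qB v φ) - B φ)
      (fun v _ => (hqB φ v).sub (by simpa using (hasDerivAt_id v).mul_const (B φ)))
      (fun v hv => by
        calc |B (qB v φ) - B φ| ≤ MB' * |qB v φ - φ| := lipB φ hφmem _ (hmemseg v (hsub hv))
          _ ≤ MB' * (MB * |v|) := by nlinarith [step1 v (hsub hv), abs_nonneg (qB v φ - φ)]
          _ ≤ MB' * MB * |u| := by
              have h := mul_le_mul_of_nonneg_left (mem_uIcc_abs hv) (mul_nonneg hMB'0 hMB0)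
              linarith [h])
      (τ := u) (C := MB' * MB * |u|)
    have key2 : |(qB u φ - u * B φ) - (qB 0 φ - 0 * B φ)| ≤ MB' * MB * |u| * |u| := key
    rw [hqB0] at key2
    calc |qB u φ - φ - u * B φ| = |(qB u φ - u * B φ) - (φ - 0 * B φ)| := by ring_nf
      _ ≤ MB' * MB * |u| * |u| := key2
  -- step 3
  have key := deriv_bound_sub
    (fun v => qB v φ - v * B φ - v^2/2 * (deriv B φ * B φ))
    (fun v => B (qB v φ) - B φ - v * (deriv B φ * B φ))
    (fun v _ => by
      have h1 : HasDerivAt (fun v : ℝ => v^2/2 * (deriv B φ * B φ)) (v * (deriv B φ * B φ)) v := by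
        have := ((hasDerivAt_pow 2 v).div_const 2).mul_const (deriv B φ * B φ)
        simpa using this.congr_deriv (by ring)
      exact ((hqB φ v).sub (by simpa using (hasDerivAt_id v).mul_const (B φ))).sub h1)
    (fun v hv => by
      have hv2 : |v| ≤ |s| := mem_uIcc_abs hv
      have hq1 := step1 v hv
      have hq2 := step2 v hv
      have hquad := quadB φ hφmem (qB v φ) (hmemseg v hv)
      have hBφ' : |deriv B φ| ≤ MB' := hMB' φ hφmem
      calc |B (qB v φ) - B φ - v * (deriv B φ * B φ)|
          = |(B (qB v φ) - B φ - deriv B φ * (qB v φ - φ))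
              + deriv B φ * (qB v φ - φ - v * B φ)| := by ring_nf
        _ ≤ |B (qB v φ) - B φ - deriv B φ * (qB v φ - φ)|
              + |deriv B φ * (qB v φ - φ - v * B φ)| := abs_add_le _ _
        _ ≤ M2 * |qB v φ - φ| * |qB v φ - φ| + |deriv B φ| * |qB v φ - φ - v * B φ| := by
              rw [abs_mul]; exact add_le_add hquad le_rfl
        _ ≤ M2 * (MB * |v|) * (MB * |v|) + MB' * (MB' * MB * |v| * |v|) := by
              have h0 : (0:ℝ) ≤ |qB v φ - φ| := abs_nonneg _
              have h0' : (0:ℝ) ≤ |qB v φ - φ - v * B φ| := abs_nonneg _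
              have e1 : |qB v φ - φ| * |qB v φ - φ| ≤ (MB * |v|) * (MB * |v|) :=
                mul_le_mul hq1 hq1 h0 (by positivity)
              have e2 : |deriv B φ| * |qB v φ - φ - v * B φ| ≤ MB' * (MB' * MB * |v| * |v|) :=
                mul_le_mul hBφ' hq2 h0' hMB'0
              nlinarith [e1, e2]
        _ ≤ (M2 * MB^2 + MB'^2 * MB) * (|s| * |s|) := by
              have hss : |v| * |v| ≤ |s| * |s| := mul_le_mul hv2 hv2 (abs_nonneg v) (abs_nonneg s)
              calc M2 * (MB * |v|) * (MB * |v|) + MB' * (MB' * MB * |v| * |v|)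
                  = (M2 * MB^2 + MB'^2 * MB) * (|v| * |v|) := by ring
                _ ≤ (M2 * MB^2 + MB'^2 * MB) * (|s| * |s|) :=
                    mul_le_mul_of_nonneg_left hss (by positivity))
    (τ := s) (C := (M2 * MB^2 + MB'^2 * MB) * (|s| * |s|))
  have key2 : |(qB s φ - s * B φ - s^2/2 * (deriv B φ * B φ))
      - (qB 0 φ - 0 * B φ - 0^2/2 * (deriv B φ * B φ))|
      ≤ (M2 * MB^2 + MB'^2 * MB) * (|s| * |s|) * |s| := key
  rw [hqB0] at key2
  calc |qB s φ - φ - s * B φ - s^2/2 * (deriv B φ * B φ)|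
      = |(qB s φ - s * B φ - s^2/2 * (deriv B φ * B φ)) - (φ - 0 * B φ - 0^2/2 * (deriv B φ * B φ))| := by ring_nf
    _ ≤ (M2 * MB^2 + MB'^2 * MB) * (|s| * |s|) * |s| := key2
    _ = (M2 * MB^2 + MB'^2 * MB) * |s|^3 := by ring

theorem lte_B_sequential_splitting
    (A B q qA : ℝ → ℝ) (qB : ℝ → ℝ → ℝ) (tn : ℝ)
    (hA : ContDiff ℝ 2 A) (hB : ContDiff ℝ 2 B)
    (hq : ∀ t, HasDerivAt q (A (q t) + B (q t)) t)
    (hqA : ∀ s, HasDerivAt qA (A (qA s)) s)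
    (hqA0 : qA 0 = q tn)
    (hqB : ∀ φ s, HasDerivAt (fun u => qB u φ) (B (qB s φ)) s)
    (hqB0 : ∀ φ, qB 0 φ = φ)
    (hqAsmooth : ContDiffAt ℝ 2 qA 0)
    (hqBsmooth : ContDiffAt ℝ 2 (fun p : ℝ × ℝ => qB p.1 p.2) (0, q tn)) :
    (fun Δt : ℝ =>
        ((∫ η in (0:ℝ)..Δt, B (qB η (qA Δt))) - ∫ η in (0:ℝ)..Δt, B (q (tn + η)))
          - Δt ^ 2 / 2 * (deriv B (q tn) * A (q tn)))
      =O[nhds (0:ℝ)] (fun Δt : ℝ => Δt ^ 3) := by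
  have hqdiff : Differentiable ℝ q := fun t => (hq t).differentiableAt
  have hqcont : Continuous q := hqdiff.continuous
  have hqC1 : ContDiff ℝ 1 q := by
    rw [contDiff_one_iff_deriv]
    refine ⟨hqdiff, ?_⟩
    rw [show deriv q = fun t => A (q t) + B (q t) from funext fun t => (hq t).deriv]
    exact (hA.continuous.comp hqcont).add (hB.continuous.comp hqcont)
  have hBd : ∀ x, HasDerivAt B (deriv B x) x :=
    fun x => ((hB.differentiable two_ne_zero) x).hasDerivAt
  have hB1 : ContDiff ℝ 1 (deriv B) := by
    have h2 : ContDiff ℝ (1+1 : ℕ) B := by exact_mod_cast hB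
    exact (contDiff_succ_iff_deriv.mp h2).2.2
  have hA1 : ContDiff ℝ 1 A := hA.of_le one_le_two
  have hqA2 : ContDiffAt ℝ 1 qA 0 := hqAsmooth.of_le one_le_two
  -- FTC rewrite of the first integral
  have key : ∀ τ : ℝ, (∫ η in (0:ℝ)..τ, B (qB η (qA τ))) = qB τ (qA τ) - qA τ := by
    intro τ
    have hd : Differentiable ℝ (fun η => qB η (qA τ)) := fun x => (hqB (qA τ) x).differentiableAt
    have hcont2 : Continuous (fun η => B (qB η (qA τ))) := hB.continuous.comp hd.continuous
    have := intervalIntegral.integral_eq_sub_of_hasDerivAt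
      (fun x _ => hqB (qA τ) x) (hcont2.intervalIntegrable 0 τ)
    rw [this, hqB0]
  -- the qB expansion
  obtain ⟨C1, hC1, δ1, hδ1, hRB⟩ := qB_expansion B qB (q tn) hB hqB hqB0 hqBsmooth.continuousAt
  -- Taylor for g = B ∘ qA
  obtain ⟨C2, hC2, δ2, hδ2, hRg⟩ := taylor2_bound (fun τ => B (qA τ))
    (fun τ => deriv B (qA τ) * A (qA τ))
    (fun u => (hBd (qA u)).comp u (hqA u))
    (((hB1.contDiffAt).comp 0 hqA2).mul ((hA1.contDiffAt).comp 0 hqA2))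
  have hRg' : ∀ τ : ℝ, |τ| ≤ δ2 →
      |B (qA τ) - B (q tn) - deriv B (q tn) * A (q tn) * τ| ≤ C2 * τ^2 := by
    intro τ hτ
    have := hRg τ hτ
    simpa [hqA0] using this
  -- Lipschitz for h = (B' · B) ∘ qA
  obtain ⟨C3, hC3, δ3, hδ3, hRh⟩ := lip_bound (fun τ => deriv B (qA τ) * B (qA τ))
    (((hB1.contDiffAt).comp 0 hqA2).mul (((hB.of_le one_le_two).contDiffAt).comp 0 hqA2))
  have hRh' : ∀ τ : ℝ, |τ| ≤ δ3 →
      |deriv B (qA τ) * B (qA τ) - deriv B (q tn) * B (q tn)| ≤ C3 * |τ| := by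
    intro τ hτ
    have := hRh τ hτ
    simpa [hqA0] using this
  -- Taylor for b = B ∘ q ∘ (tn + ·)
  have hshift : ∀ u : ℝ, HasDerivAt (fun η : ℝ => q (tn + η)) (A (q (tn+u)) + B (q (tn+u))) u := by
    intro u
    have := (hq (tn+u)).comp u ((hasDerivAt_id u).const_add tn)
    simpa [Function.comp_def] using this
  have hshiftC : ContDiffAt ℝ 1 (fun η : ℝ => q (tn + η)) 0 :=
    (hqC1.contDiffAt).comp 0 ((contDiff_const.add contDiff_id).contDiffAt)
  obtain ⟨C4, hC4, δ4, hδ4, hRb⟩ := taylor2_bound (fun η => B (q (tn + η)))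
    (fun η => deriv B (q (tn + η)) * (A (q (tn + η)) + B (q (tn + η))))
    (fun u => (hBd (q (tn+u))).comp u (hshift u))
    (((hB1.contDiffAt).comp 0 hshiftC).mul
      (((hA1.contDiffAt).comp 0 hshiftC).add (((hB.of_le one_le_two).contDiffAt).comp 0 hshiftC)))
  have hRb' : ∀ η : ℝ, |η| ≤ δ4 →
      |B (q (tn+η)) - B (q tn) - deriv B (q tn) * (A (q tn) + B (q tn)) * η| ≤ C4 * η^2 := by
    intro η hη
    have := hRb η hη
    simpa using this
  -- bound for the integral remainder
  have hbc : Continuous (fun η : ℝ => B (q (tn + η))) :=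
    hB.continuous.comp (hqcont.comp (continuous_const.add continuous_id))
  have hRint : ∀ τ : ℝ, |τ| ≤ δ4 →
      |(∫ η in (0:ℝ)..τ, B (q (tn+η)))
        - (B (q tn) * τ + deriv B (q tn) * (A (q tn) + B (q tn)) * (τ^2/2))| ≤ C4 * τ^2 * |τ| := by
    intro τ hτ
    have hpoly : Continuous (fun η : ℝ => B (q tn) + deriv B (q tn) * (A (q tn) + B (q tn)) * η) := by
      continuity
    have hint1 : (∫ η in (0:ℝ)..τ, (B (q tn) + deriv B (q tn) * (A (q tn) + B (q tn)) * η))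
        = B (q tn) * τ + deriv B (q tn) * (A (q tn) + B (q tn)) * (τ^2/2) := by
      have i1 : IntervalIntegrable (fun _ : ℝ => B (q tn)) MeasureTheory.volume 0 τ :=
        intervalIntegrable_const
      have i2 : IntervalIntegrable
          (fun η : ℝ => deriv B (q tn) * (A (q tn) + B (q tn)) * η) MeasureTheory.volume 0 τ :=
        (by continuity : Continuous
          (fun η : ℝ => deriv B (q tn) * (A (q tn) + B (q tn)) * η)).intervalIntegrable 0 τ
      rw [intervalIntegral.integral_add i1 i2, intervalIntegral.integral_const,
        intervalIntegral.integral_const_mul, integral_id]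
      simp
      ring
    have hsplit : (∫ η in (0:ℝ)..τ, B (q (tn+η)))
          - (B (q tn) * τ + deriv B (q tn) * (A (q tn) + B (q tn)) * (τ^2/2))
        = ∫ η in (0:ℝ)..τ, (B (q (tn+η)) - (B (q tn) + deriv B (q tn) * (A (q tn) + B (q tn)) * η)) := by
      rw [intervalIntegral.integral_sub (hbc.intervalIntegrable 0 τ) (hpoly.intervalIntegrable 0 τ),
        hint1]
    rw [hsplit]
    have hb2 : ∀ η ∈ Set.uIoc (0:ℝ) τ,
        ‖B (q (tn+η)) - (B (q tn) + deriv B (q tn) * (A (q tn) + B (q tn)) * η)‖ ≤ C4 * τ^2 := by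
      intro η hη
      have hmem : η ∈ Set.uIcc (0:ℝ) τ := Set.uIoc_subset_uIcc hη
      have hη2 : |η| ≤ |τ| := mem_uIcc_abs hmem
      have hη3 : |η| ≤ δ4 := hη2.trans hτ
      have := hRb' η hη3
      rw [Real.norm_eq_abs]
      calc |B (q (tn+η)) - (B (q tn) + deriv B (q tn) * (A (q tn) + B (q tn)) * η)|
          = |B (q (tn+η)) - B (q tn) - deriv B (q tn) * (A (q tn) + B (q tn)) * η| := by ring_nf
        _ ≤ C4 * η^2 := this
        _ ≤ C4 * τ^2 := by
              have h' := abs_le.mp hη2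
              have hsq : η^2 ≤ τ^2 := by nlinarith [h'.1, h'.2, sq_abs τ]
              exact mul_le_mul_of_nonneg_left hsq hC4
    have := intervalIntegral.norm_integral_le_of_norm_le_const hb2
    rw [Real.norm_eq_abs] at this
    simpa using this
  -- continuity of qA at 0 towards δ1
  obtain ⟨δA, hδA, hqAc⟩ := Metric.continuousAt_iff.mp hqAsmooth.continuousAt δ1 hδ1
  -- assemble
  rw [isBigO_iff]
  refine ⟨C1 + C2 + C3 + C4, ?_⟩
  rw [Metric.eventually_nhds_iff]
  refine ⟨min (min δ1 δA) (min δ2 (min δ3 δ4)), by positivity, fun τ hτ => ?_⟩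
  rw [Real.dist_eq, sub_zero] at hτ
  have hτ1 : |τ| ≤ δ1 := le_of_lt (lt_of_lt_of_le hτ (le_trans (min_le_left _ _) (min_le_left _ _)))
  have hτA : |τ| < δA := lt_of_lt_of_le hτ (le_trans (min_le_left _ _) (min_le_right _ _))
  have hτ2 : |τ| ≤ δ2 := le_of_lt (lt_of_lt_of_le hτ (le_trans (min_le_right _ _) (min_le_left _ _)))
  have hτ3 : |τ| ≤ δ3 := le_of_lt (lt_of_lt_of_le hτ (le_trans (min_le_right _ _) (le_trans (min_le_right _ _) (min_le_left _ _))))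
  have hτ4 : |τ| ≤ δ4 := le_of_lt (lt_of_lt_of_le hτ (le_trans (min_le_right _ _) (le_trans (min_le_right _ _) (min_le_right _ _))))
  have hqAτ : |qA τ - q tn| ≤ δ1 := by
    have := hqAc (show dist τ 0 < δA by rwa [Real.dist_eq, sub_zero])
    rw [hqA0, Real.dist_eq] at this
    exact le_of_lt this
  have hb1 := hRB τ (qA τ) hτ1 hqAτ
  have hb2 := hRg' τ hτ2
  have hb3 := hRh' τ hτ3
  have hb4 := hRint τ hτ4
  rw [Real.norm_eq_abs, Real.norm_eq_abs, key τ]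
  have decomp : qB τ (qA τ) - qA τ - (∫ η in (0:ℝ)..τ, B (q (tn+η)))
        - τ^2/2 * (deriv B (q tn) * A (q tn))
      = (qB τ (qA τ) - qA τ - τ * B (qA τ) - τ^2/2 * (deriv B (qA τ) * B (qA τ)))
        + τ * (B (qA τ) - B (q tn) - deriv B (q tn) * A (q tn) * τ)
        + τ^2/2 * (deriv B (qA τ) * B (qA τ) - deriv B (q tn) * B (q tn))
        - ((∫ η in (0:ℝ)..τ, B (q (tn+η)))
            - (B (q tn) * τ + deriv B (q tn) * (A (q tn) + B (q tn)) * (τ^2/2))) := by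
    ring
  have habs4 : ∀ a b c d : ℝ, |a + b + c - d| ≤ |a| + |b| + |c| + |d| := by
    intro a b c d
    have h1 : |a + b + c + -d| ≤ |a + b + c| + |-d| := abs_add_le _ _
    have h2 : |a + b + c| ≤ |a + b| + |c| := abs_add_le _ _
    have h3 : |a + b| ≤ |a| + |b| := abs_add_le _ _
    rw [abs_neg] at h1
    rw [sub_eq_add_neg]
    linarith
  calc |qB τ (qA τ) - qA τ - (∫ η in (0:ℝ)..τ, B (q (tn+η)))
        - τ^2/2 * (deriv B (q tn) * A (q tn))|
      ≤ |qB τ (qA τ) - qA τ - τ * B (qA τ) - τ^2/2 * (deriv B (qA τ) * B (qA τ))|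
        + |τ * (B (qA τ) - B (q tn) - deriv B (q tn) * A (q tn) * τ)|
        + |τ^2/2 * (deriv B (qA τ) * B (qA τ) - deriv B (q tn) * B (q tn))|
        + |(∫ η in (0:ℝ)..τ, B (q (tn+η)))
            - (B (q tn) * τ + deriv B (q tn) * (A (q tn) + B (q tn)) * (τ^2/2))| := by
        rw [decomp]; exact habs4 _ _ _ _
    _ ≤ C1 * |τ|^3 + |τ| * (C2 * τ^2) + (τ^2/2) * (C3 * |τ|) + C4 * τ^2 * |τ| := by
        have e2 : |τ * (B (qA τ) - B (q tn) - deriv B (q tn) * A (q tn) * τ)|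
            ≤ |τ| * (C2 * τ^2) := by
          rw [abs_mul]
          exact mul_le_mul_of_nonneg_left hb2 (abs_nonneg τ)
        have e3 : |τ^2/2 * (deriv B (qA τ) * B (qA τ) - deriv B (q tn) * B (q tn))|
            ≤ (τ^2/2) * (C3 * |τ|) := by
          rw [abs_mul, abs_of_nonneg (by positivity : (0:ℝ) ≤ τ^2/2)]
          exact mul_le_mul_of_nonneg_left hb3 (by positivity)
        linarith
    _ ≤ (C1 + C2 + C3 + C4) * |τ^3| := by
        rw [abs_pow]
        rw [← sq_abs τ]
        nlinarith [pow_nonneg (abs_nonneg τ) 3, abs_nonneg τ, hC1, hC2, hC3, hC4,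
          mul_nonneg hC3 (pow_nonneg (abs_nonneg τ) 3)]
end

section
/- Let A, B, C : ℝ → ℝ be twice continuously differentiable, let tₙ ∈ ℝ, let q : ℝ → ℝ satisfy q′(t) = A(q(t)) + B(q(t)) + C(q(t)) for all t, and let q_A : ℝ → ℝ satisfy q_A′(s) = A(q_A(s)) with q_A(0) = q(tₙ), twice continuously differentiable near 0. Then the local truncation error attributable to process A in both the original and revised three-process coupling schemes, lte_A(Δt) = ∫₀^{Δt} A(q_A(η)) dη − ∫₀^{Δt} A(q(tₙ+η)) dη, satisfies lte_A(Δt) = (Δt²/2)·A′(q(tₙ))·(−B(q(tₙ)) − C(q(tₙ))) + O(Δt³) as Δt → 0. -/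
open Filter Asymptotics intervalIntegral in

theorem lte_A_three_process
    (A B C q qA : ℝ → ℝ) (tn : ℝ)
    (hA : ContDiff ℝ 2 A) (hB : ContDiff ℝ 2 B) (hC : ContDiff ℝ 2 C)
    (hq : ∀ t, HasDerivAt q (A (q t) + B (q t) + C (q t)) t)
    (hqA : ∀ s, HasDerivAt qA (A (qA s)) s)
    (hqA0 : qA 0 = q tn)
    (hqAsmooth : ContDiffAt ℝ 2 qA 0) :
    (fun Δt : ℝ =>
        ((∫ η in (0:ℝ)..Δt, A (qA η)) - ∫ η in (0:ℝ)..Δt, A (q (tn + η)))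
          - Δt ^ 2 / 2 * (deriv A (q tn) * (-B (q tn) - C (q tn))))
      =O[nhds (0:ℝ)] (fun Δt : ℝ => Δt ^ 3) := by
  have hA' : ∀ x, HasDerivAt A (deriv A x) x := fun x =>
    ((hA.differentiable (by norm_num)) x).hasDerivAt
  have hA2 : ContDiff ℝ (1 + 1) A := by
    have h12 : ((1:WithTop ℕ∞) + 1) = 2 := by norm_num
    rw [h12]; exact hA
  have hdA : Differentiable ℝ (deriv A) :=
    ((contDiff_succ_iff_deriv.1 hA2).2.2).differentiable (by norm_num)
  set c : ℝ := deriv A (q tn) * (-B (q tn) - C (q tn)) with hc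
  set g : ℝ → ℝ := fun η => A (qA η) - A (q (tn + η)) with hgdef
  have l1 : ∀ s : ℝ, HasDerivAt (fun η : ℝ => tn + η) 1 s := fun s =>
    (hasDerivAt_id s).const_add tn
  have l2 : ∀ s : ℝ, HasDerivAt (fun η => q (tn + η))
      ((A (q (tn + s)) + B (q (tn + s)) + C (q (tn + s))) * 1) s := fun s =>
    (hq (tn + s)).comp s (l1 s)
  set G : ℝ → ℝ := fun s => deriv A (qA s) * A (qA s)
      - deriv A (q (tn + s)) * ((A (q (tn + s)) + B (q (tn + s)) + C (q (tn + s))) * 1)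
    with hGdef
  have hgG : ∀ s, HasDerivAt g (G s) s := fun s =>
    ((hA' (qA s)).comp s (hqA s)).sub ((hA' (q (tn + s))).comp s (l2 s))
  have hG0 : G 0 = c := by
    simp only [hGdef, hc, add_zero, hqA0, mul_one]
    ring
  have hGd : DifferentiableAt ℝ G 0 := by
    apply DifferentiableAt.sub
    · exact (DifferentiableAt.comp 0 (hdA _) (hqA 0).differentiableAt).mul
        (((hA.differentiable (by norm_num)) _).comp 0 (hqA 0).differentiableAt)
    · refine (DifferentiableAt.comp 0 (hdA _) (l2 0).differentiableAt).mul ?_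
      refine DifferentiableAt.mul ?_ (differentiableAt_const 1)
      exact ((((hA.differentiable (by norm_num)) _).comp 0 (l2 0).differentiableAt).add
        (((hB.differentiable (by norm_num)) _).comp 0 (l2 0).differentiableAt)).add
        (((hC.differentiable (by norm_num)) _).comp 0 (l2 0).differentiableAt)
  obtain ⟨K, hK⟩ := isBigO_iff.1 hGd.isBigO_sub
  rw [Metric.eventually_nhds_iff] at hK
  obtain ⟨ε, hε, hKb⟩ := hK
  set K0 : ℝ := max K 0 with hK0def
  have hK0 : (0:ℝ) ≤ K0 := le_max_right K 0
  have hKb' : ∀ s : ℝ, |s| < ε → |G s - c| ≤ K0 * |s| := by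
    intro s hs
    have h1 := hKb (y := s) (show dist s 0 < ε by rwa [Real.dist_eq, sub_zero])
    rw [hG0] at h1
    calc |G s - c| ≤ K * ‖s - 0‖ := h1
      _ ≤ K0 * |s| := by
        rw [sub_zero]
        exact mul_le_mul_of_nonneg_right (le_max_left _ _) (abs_nonneg s)
  -- continuity
  have hqAc : Continuous qA := Differentiable.continuous fun s => (hqA s).differentiableAt
  have hqc : Continuous q := Differentiable.continuous fun t => (hq t).differentiableAt
  have hc1 : Continuous fun η => A (qA η) := hA.continuous.comp hqAc
  have hc2 : Continuous fun η : ℝ => A (q (tn + η)) :=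
    hA.continuous.comp (hqc.comp (continuous_const.add continuous_id))
  have hc3 : Continuous fun η : ℝ => c * η := continuous_const.mul continuous_id
  -- main estimate
  rw [isBigO_iff]
  refine ⟨K0, Metric.eventually_nhds_iff.2 ⟨ε, hε, ?_⟩⟩
  intro Δt hΔt
  rw [Real.dist_eq, sub_zero] at hΔt
  have habs : ∀ x ∈ Set.uIcc 0 Δt, |x| ≤ |Δt| := by
    intro x hx
    rcases Set.mem_uIcc.1 hx with ⟨h1, h2⟩ | ⟨h1, h2⟩ <;>
      (rw [abs_le]; constructor <;> nlinarith [le_abs_self Δt, neg_abs_le Δt])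
  have hrw : ((∫ η in (0:ℝ)..Δt, A (qA η)) - ∫ η in (0:ℝ)..Δt, A (q (tn + η)))
      - Δt ^ 2 / 2 * c = ∫ η in (0:ℝ)..Δt, (g η - c * η) := by
    rw [integral_sub (f := fun η => A (qA η) - A (q (tn + η))) ((hc1.sub hc2).intervalIntegrable 0 Δt)
        (hc3.intervalIntegrable 0 Δt),
      integral_sub (hc1.intervalIntegrable 0 Δt)
        (hc2.intervalIntegrable 0 Δt),
      integral_const_mul, integral_id]
    ring
  have hhd : ∀ x : ℝ, HasDerivAt (fun η => g η - c * η) (G x - c) x := fun x =>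
    (hgG x).sub (by simpa using (hasDerivAt_id x).const_mul c)
  have h0 : g 0 = 0 := by simp [hgdef, hqA0]
  have hmvt : ∀ η ∈ Set.uIcc 0 Δt, |g η - c * η| ≤ K0 * |Δt| * |η| := by
    intro η hη
    have hb := Convex.norm_image_sub_le_of_norm_hasDerivWithin_le
      (f := fun η => g η - c * η) (f' := fun x => G x - c) (s := Set.uIcc 0 Δt)
      (C := K0 * |Δt|)
      (fun x _ => (hhd x).hasDerivWithinAt)
      (fun x hx => by
        have hxb := habs x hx
        calc ‖G x - c‖ ≤ K0 * |x| := hKb' x (lt_of_le_of_lt hxb hΔt)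
          _ ≤ K0 * |Δt| := mul_le_mul_of_nonneg_left hxb hK0)
      (convex_uIcc 0 Δt) Set.left_mem_uIcc hη
    simpa [h0, Real.norm_eq_abs] using hb
  have hintb : ‖∫ η in (0:ℝ)..Δt, (g η - c * η)‖ ≤ (K0 * |Δt| * |Δt|) * |Δt - 0| := by
    apply norm_integral_le_of_norm_le_const
    intro x hx
    have hx' : x ∈ Set.uIcc 0 Δt := Set.Ioc_subset_Icc_self hx
    calc ‖g x - c * x‖ ≤ K0 * |Δt| * |x| := hmvt x hx'
      _ ≤ K0 * |Δt| * |Δt| :=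
        mul_le_mul_of_nonneg_left (habs x hx') (by positivity)
  rw [hrw]
  calc ‖∫ η in (0:ℝ)..Δt, (g η - c * η)‖ ≤ (K0 * |Δt| * |Δt|) * |Δt - 0| := hintb
    _ = K0 * ‖Δt ^ 3‖ := by rw [Real.norm_eq_abs, abs_pow, sub_zero]; ring
end

section
/- Let A, B, C : ℝ → ℝ be twice continuously differentiable, let tₙ ∈ ℝ, let q : ℝ → ℝ satisfy q′(t) = A(q(t)) + B(q(t)) + C(q(t)) for all t. Let q_A : ℝ → ℝ satisfy q_A′(s) = A(q_A(s)) with q_A(0) = q(tₙ), and let q_B : ℝ → ℝ → ℝ be the two-parameter flow of B (for every φ, ∂_s q_B(s, φ) = B(q_B(s, φ)) and q_B(0, φ) = φ), with sufficient smoothness near the relevant points. Then the original (fully sequential) scheme's local truncation error attributable to process B, lte_B^{Ori}(Δt) = ∫₀^{Δt} B(q_B(η, q_A(Δt))) dη − ∫₀^{Δt} B(q(tₙ+η)) dη, satisfies lte_B^{Ori}(Δt) = (Δt²/2)·B′(q(tₙ))·(A(q(tₙ)) − C(q(tₙ))) + O(Δt³) as Δt → 0. -/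
open Filter Asymptotics

theorem lte_B_original_three_process
    (A B C q qA : ℝ → ℝ) (qB : ℝ → ℝ → ℝ) (tn : ℝ)
    (hA : ContDiff ℝ 2 A) (hB : ContDiff ℝ 2 B) (hC : ContDiff ℝ 2 C)
    (hq : ∀ t, HasDerivAt q (A (q t) + B (q t) + C (q t)) t)
    (hqA : ∀ s, HasDerivAt qA (A (qA s)) s)
    (hqA0 : qA 0 = q tn)
    (hqB : ∀ φ s, HasDerivAt (fun u => qB u φ) (B (qB s φ)) s)
    (hqB0 : ∀ φ, qB 0 φ = φ)
    (hqAsmooth : ContDiffAt ℝ 2 qA 0)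
    (hqBsmooth : ContDiffAt ℝ 2 (fun p : ℝ × ℝ => qB p.1 p.2) (0, q tn)) :
    (fun Δt : ℝ =>
        ((∫ η in (0:ℝ)..Δt, B (qB η (qA Δt))) - ∫ η in (0:ℝ)..Δt, B (q (tn + η)))
          - Δt ^ 2 / 2 * (deriv B (q tn) * (A (q tn) - C (q tn))))
      =O[nhds (0:ℝ)] (fun Δt : ℝ => Δt ^ 3) := by
  have h12 : (1 : WithTop ℕ∞) ≤ 2 := by norm_num
  -- smoothness of q
  have hqdiff : Differentiable ℝ q := fun t => (hq t).differentiableAt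
  have hderivq : deriv q = fun t => A (q t) + B (q t) + C (q t) :=
    funext fun t => (hq t).deriv
  have hq1 : ContDiff ℝ 1 q := by
    rw [show (1 : WithTop ℕ∞) = 0 + 1 from rfl, contDiff_succ_iff_deriv]
    refine ⟨hqdiff, by simp, ?_⟩
    rw [hderivq, contDiff_zero]
    exact (((hA.continuous.comp hqdiff.continuous).add
      (hB.continuous.comp hqdiff.continuous)).add (hC.continuous.comp hqdiff.continuous))
  have hq2 : ContDiff ℝ 2 q := by
    rw [show (2 : WithTop ℕ∞) = 1 + 1 from rfl, contDiff_succ_iff_deriv]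
    refine ⟨hqdiff, by simp, ?_⟩
    rw [hderivq]
    exact (((hA.of_le h12).comp hq1).add ((hB.of_le h12).comp hq1)).add
      ((hC.of_le h12).comp hq1)
  -- the two-variable error function
  set g : ℝ × ℝ → ℝ := fun p => B (qB p.1 (qA p.2)) - B (q (tn + p.1)) with hgdef
  have hgsmooth : ContDiffAt ℝ 2 g (0, 0) := by
    have h1 : ContDiffAt ℝ 2 (fun p : ℝ × ℝ => ((p.1 : ℝ), qA p.2)) (0, 0) :=
      contDiffAt_fst.prodMk (ContDiffAt.comp ((0 : ℝ), (0 : ℝ)) hqAsmooth contDiffAt_snd)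
    rw [← hqA0] at hqBsmooth
    have h2 : ContDiffAt ℝ 2 (fun p : ℝ × ℝ => qB p.1 (qA p.2)) (0, 0) :=
      by have := ContDiffAt.comp ((0 : ℝ), (0 : ℝ)) hqBsmooth h1; exact this
    have h3 : ContDiffAt ℝ 2 (fun p : ℝ × ℝ => B (qB p.1 (qA p.2))) (0, 0) :=
      ContDiffAt.comp ((0 : ℝ), (0 : ℝ)) hB.contDiffAt h2
    have h4 : ContDiffAt ℝ 2 (fun p : ℝ × ℝ => B (q (tn + p.1))) (0, 0) :=
      ContDiffAt.comp ((0 : ℝ), (0 : ℝ)) hB.contDiffAt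
        (ContDiffAt.comp ((0 : ℝ), (0 : ℝ)) hq2.contDiffAt
          ((contDiff_const.add contDiff_fst).contDiffAt))
    exact h3.sub h4
  have hg0 : g (0, 0) = 0 := by
    simp only [hgdef, hqB0, hqA0, add_zero, sub_self]
  -- the derivative of g at the origin
  have hgdiff : DifferentiableAt ℝ g (0, 0) := hgsmooth.differentiableAt (by norm_num)
  set ℓ : ℝ × ℝ →L[ℝ] ℝ := fderiv ℝ g (0, 0) with hℓdef
  have hdg : HasFDerivAt g ℓ (0, 0) := hgdiff.hasFDerivAt
  have hB' : ∀ x, HasDerivAt B (deriv B x) x :=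
    fun x => ((hB.differentiable (by norm_num)) x).hasDerivAt
  -- compute ℓ (1, 0)
  have hℓ10 : ℓ (1, 0) = deriv B (q tn) * B (q tn)
      - deriv B (q tn) * ((A (q tn) + B (q tn) + C (q tn)) * 1) := by
    have hline : HasDerivAt (fun s : ℝ => ((s : ℝ), (0 : ℝ))) (1, 0) 0 :=
      (hasDerivAt_id 0).prodMk (hasDerivAt_const 0 0)
    have h1 : HasDerivAt (fun s : ℝ => g (s, 0)) (ℓ (1, 0)) 0 :=
      HasFDerivAt.comp_hasDerivAt (f := fun s : ℝ => ((s : ℝ), (0 : ℝ))) 0 hdg hline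
    have hstep : HasDerivAt (fun u => qB u (qA 0)) (B (q tn)) 0 := by
      have h := hqB (qA 0) 0
      simp only [hqB0] at h
      have e : B (qA 0) = B (q tn) := by rw [hqA0]
      rwa [e] at h
    have hq00 : qB 0 (qA 0) = q tn := by rw [hqB0, hqA0]
    have hBc1 : HasDerivAt (fun s : ℝ => B (qB s (qA 0)))
        (deriv B (q tn) * B (q tn)) 0 := by
      have h := (hB' (qB 0 (qA 0))).comp 0 hstep
      have e : deriv B (qB 0 (qA 0)) = deriv B (q tn) := by rw [hq00]
      rw [e] at h
      exact h
    have hlin2 : HasDerivAt (fun s : ℝ => tn + s) 1 0 :=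
      (hasDerivAt_id 0).const_add tn
    have hqc : HasDerivAt (fun s : ℝ => q (tn + s))
        ((A (q tn) + B (q tn) + C (q tn)) * 1) 0 := by
      have h := (hq (tn + 0)).comp 0 hlin2
      simpa [Function.comp_def] using h
    have hBc2 : HasDerivAt (fun s : ℝ => B (q (tn + s)))
        (deriv B (q tn) * ((A (q tn) + B (q tn) + C (q tn)) * 1)) 0 := by
      have h := (hB' (q (tn + 0))).comp 0 hqc
      simpa [Function.comp_def] using h
    exact h1.unique (hBc1.sub hBc2)
  -- compute ℓ (0, 1)
  have hℓ01 : ℓ (0, 1) = deriv B (q tn) * A (q tn) := by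
    have hline : HasDerivAt (fun k : ℝ => ((0 : ℝ), (k : ℝ))) ((0 : ℝ), (1 : ℝ)) 0 :=
      (hasDerivAt_const 0 0).prodMk (hasDerivAt_id 0)
    have h1 : HasDerivAt (fun k : ℝ => g (0, k)) (ℓ (0, 1)) 0 :=
      HasFDerivAt.comp_hasDerivAt (f := fun k : ℝ => ((0 : ℝ), (k : ℝ))) 0 hdg hline
    have h2 : HasDerivAt (fun k : ℝ => g (0, k)) (deriv B (q tn) * A (q tn)) 0 := by
      have hinner : HasDerivAt (fun k : ℝ => qB 0 (qA k)) (A (q tn)) 0 := by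
        simp only [hqB0]
        have := hqA 0
        rwa [hqA0] at this
      have hBc : HasDerivAt (fun k : ℝ => B (qB 0 (qA k)))
          (deriv B (q tn) * A (q tn)) 0 := by
        have h := (hB' (qB 0 (qA 0))).comp 0 hinner
        have e : deriv B (qB 0 (qA 0)) = deriv B (q tn) := by rw [hqB0, hqA0]
        rw [e] at h
        exact h
      have h3 := hBc.sub (hasDerivAt_const (0 : ℝ) (B (q (tn + 0))))
      rw [sub_zero] at h3
      exact h3
    exact h1.unique h2
  -- linearity of ℓ
  have hℓlin : ∀ a b : ℝ, ℓ (a, b) = a * ℓ (1, 0) + b * ℓ (0, 1) := by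
    intro a b
    have e : ((a : ℝ), (b : ℝ)) = a • ((1 : ℝ), (0 : ℝ)) + b • ((0 : ℝ), (1 : ℝ)) := by
      simp [Prod.ext_iff]
    rw [e, map_add, map_smul, map_smul, smul_eq_mul, smul_eq_mul]
  -- local quadratic bound on g - ℓ
  obtain ⟨K, t, ht, hlip⟩ :=
    (hgsmooth.fderiv_right (by norm_num : (1 : WithTop ℕ∞) + 1 ≤ 2)).exists_lipschitzOnWith
  have hev : ∀ᶠ p in nhds ((0 : ℝ), (0 : ℝ)), DifferentiableAt ℝ g p :=
    (hgsmooth.eventually (by norm_num)).mono fun p hp => hp.differentiableAt (by norm_num)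
  obtain ⟨r, hr, hball⟩ := Metric.mem_nhds_iff.mp (Filter.inter_mem ht hev)
  have h0t : (0 : ℝ × ℝ) ∈ t := mem_of_mem_nhds ht
  have hball' : Metric.ball (0 : ℝ × ℝ) r ⊆ t ∩ {p | DifferentiableAt ℝ g p} := hball
  have hquad : ∀ p : ℝ × ℝ, ‖p‖ < r → ‖g p - ℓ p‖ ≤ (K : ℝ) * ‖p‖ * ‖p‖ := by
    intro p hp
    set s : Set (ℝ × ℝ) :=
      Metric.ball (0 : ℝ × ℝ) r ∩ Metric.closedBall (0 : ℝ × ℝ) ‖p‖ with hsdef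
    have hconv : Convex ℝ s := (convex_ball _ _).inter (convex_closedBall _ _)
    have hdiffon : ∀ x ∈ s, DifferentiableAt ℝ g x := fun x hx => (hball' hx.1).2
    have hbd : ∀ x ∈ s, ‖fderiv ℝ g x - ℓ‖ ≤ (K : ℝ) * ‖p‖ := by
      intro x hx
      have h1 := hlip.dist_le_mul x (hball' hx.1).1 (0 : ℝ × ℝ) h0t
      rw [dist_eq_norm, dist_zero_right] at h1
      have hℓ0 : fderiv ℝ g (0 : ℝ × ℝ) = ℓ := rfl
      rw [hℓ0] at h1
      have hxp : ‖x‖ ≤ ‖p‖ := mem_closedBall_zero_iff.mp hx.2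
      exact h1.trans (mul_le_mul_of_nonneg_left hxp K.2)
    have h0mem : (0 : ℝ × ℝ) ∈ s :=
      ⟨Metric.mem_ball_self hr, Metric.mem_closedBall_self (norm_nonneg p)⟩
    have hpmem : p ∈ s :=
      ⟨mem_ball_zero_iff.mpr hp, mem_closedBall_zero_iff.mpr le_rfl⟩
    have key := hconv.norm_image_sub_le_of_norm_fderiv_le' hdiffon hbd h0mem hpmem
    have hg0' : g (0 : ℝ × ℝ) = 0 := hg0
    rw [sub_zero, hg0', sub_zero] at key
    exact key
  -- rewrite the goal as an integral of g - ℓ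
  have hcont1 : ∀ Δt : ℝ, Continuous (fun η : ℝ => B (qB η (qA Δt))) := by
    intro Δt
    have hd : Differentiable ℝ (fun u => qB u (qA Δt)) :=
      fun s => (hqB (qA Δt) s).differentiableAt
    exact hB.continuous.comp hd.continuous
  have hcont2 : Continuous (fun η : ℝ => B (q (tn + η))) :=
    hB.continuous.comp (hqdiff.continuous.comp (continuous_const.add continuous_id))
  have hcontℓ : ∀ Δt : ℝ, Continuous (fun η : ℝ => ℓ (η, Δt)) := by
    intro Δt
    exact ℓ.continuous.comp (continuous_id.prodMk continuous_const)
  have hkey : ∀ Δt : ℝ,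
      ((∫ η in (0:ℝ)..Δt, B (qB η (qA Δt))) - ∫ η in (0:ℝ)..Δt, B (q (tn + η)))
          - Δt ^ 2 / 2 * (deriv B (q tn) * (A (q tn) - C (q tn)))
        = ∫ η in (0:ℝ)..Δt, (g (η, Δt) - ℓ (η, Δt)) := by
    intro Δt
    have i1 : IntervalIntegrable (fun η : ℝ => B (qB η (qA Δt)))
        MeasureTheory.volume 0 Δt := (hcont1 Δt).intervalIntegrable _ _
    have i2 : IntervalIntegrable (fun η : ℝ => B (q (tn + η)))
        MeasureTheory.volume 0 Δt := hcont2.intervalIntegrable _ _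
    have iℓ : IntervalIntegrable (fun η : ℝ => ℓ (η, Δt))
        MeasureTheory.volume 0 Δt := (hcontℓ Δt).intervalIntegrable _ _
    have e1 : (∫ η in (0:ℝ)..Δt, (g (η, Δt) - ℓ (η, Δt)))
        = ((∫ η in (0:ℝ)..Δt, B (qB η (qA Δt))) - ∫ η in (0:ℝ)..Δt, B (q (tn + η)))
          - ∫ η in (0:ℝ)..Δt, ℓ (η, Δt) := by
      rw [intervalIntegral.integral_sub (i1.sub i2) iℓ,
        intervalIntegral.integral_sub i1 i2]
    have e2 : (∫ η in (0:ℝ)..Δt, ℓ (η, Δt))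
        = Δt ^ 2 / 2 * (deriv B (q tn) * (A (q tn) - C (q tn))) := by
      have e : (fun η : ℝ => ℓ (η, Δt))
          = fun η : ℝ => η * ℓ (1, 0) + Δt * ℓ (0, 1) := by
        funext η; exact hℓlin η Δt
      have ca : Continuous (fun η : ℝ => η * ℓ (1, 0)) :=
        continuous_id.mul continuous_const
      have cb : Continuous (fun _ : ℝ => Δt * ℓ (0, 1)) := continuous_const
      have ia : IntervalIntegrable (fun η : ℝ => η * ℓ (1, 0))
          MeasureTheory.volume 0 Δt := ca.intervalIntegrable _ _
      have ib : IntervalIntegrable (fun _ : ℝ => Δt * ℓ (0, 1))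
          MeasureTheory.volume 0 Δt := cb.intervalIntegrable _ _
      rw [e, intervalIntegral.integral_add ia ib,
        intervalIntegral.integral_mul_const, integral_id,
        intervalIntegral.integral_const, hℓ10, hℓ01]
      simp only [smul_eq_mul]
      ring
    rw [e1, e2]
  -- conclude
  rw [isBigO_iff]
  refine ⟨(K : ℝ), ?_⟩
  have hev2 : ∀ᶠ Δt : ℝ in nhds 0, |Δt| < r := by
    filter_upwards [Metric.ball_mem_nhds (0 : ℝ) hr] with Δt hΔt
    simpa [Real.dist_eq] using hΔt
  filter_upwards [hev2] with Δt hΔt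
  rw [hkey Δt]
  have hbound : ∀ η ∈ Set.uIoc (0 : ℝ) Δt,
      ‖g (η, Δt) - ℓ (η, Δt)‖ ≤ (K : ℝ) * |Δt| * |Δt| := by
    intro η hη
    have hηle : |η| ≤ |Δt| := by
      rcases Set.mem_uIoc.mp hη with ⟨h1, h2⟩ | ⟨h1, h2⟩
      · rw [abs_of_pos h1, abs_of_nonneg (h1.le.trans h2)]; exact h2
      · rw [abs_of_nonpos h2, abs_of_neg (lt_of_lt_of_le h1 h2)]
        exact neg_le_neg h1.le
    have hnorm : ‖((η : ℝ), (Δt : ℝ))‖ ≤ |Δt| := by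
      rw [Prod.norm_def]
      simp only [Real.norm_eq_abs]
      exact max_le hηle le_rfl
    have hlt : ‖((η : ℝ), (Δt : ℝ))‖ < r := lt_of_le_of_lt hnorm hΔt
    calc ‖g (η, Δt) - ℓ (η, Δt)‖
        ≤ (K : ℝ) * ‖((η : ℝ), (Δt : ℝ))‖ * ‖((η : ℝ), (Δt : ℝ))‖ := hquad _ hlt
      _ ≤ (K : ℝ) * |Δt| * |Δt| := by
          have h1 : (K : ℝ) * ‖((η : ℝ), (Δt : ℝ))‖ ≤ (K : ℝ) * |Δt| :=
            mul_le_mul_of_nonneg_left hnorm K.2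
          exact mul_le_mul h1 hnorm (norm_nonneg _) (by positivity)
  calc ‖∫ η in (0:ℝ)..Δt, (g (η, Δt) - ℓ (η, Δt))‖
      ≤ (K : ℝ) * |Δt| * |Δt| * |Δt - 0| :=
        intervalIntegral.norm_integral_le_of_norm_le_const hbound
    _ = (K : ℝ) * ‖Δt ^ 3‖ := by
        rw [sub_zero, norm_pow, Real.norm_eq_abs]
        ring
end

section
/- Let A, B, C : ℝ → ℝ be twice continuously differentiable, let tₙ ∈ ℝ, let q : ℝ → ℝ satisfy q′(t) = A(q(t)) + B(q(t)) + C(q(t)) for all t. Let q_A : ℝ → ℝ satisfy q_A′(s) = A(q_A(s)) with q_A(0) = q(tₙ), and let q_B and q_C : ℝ → ℝ → ℝ be the two-parameter flows of B and C respectively (for every φ, ∂_s q_B(s, φ) = B(q_B(s, φ)), q_B(0, φ) = φ, and likewise for q_C), with sufficient smoothness near the relevant points. Then the original (fully sequential) scheme's local truncation error attributable to process C, lte_C^{Ori}(Δt) = ∫₀^{Δt} C(q_C(η, q_B(Δt, q_A(Δt)))) dη − ∫₀^{Δt} C(q(tₙ+η)) dη, satisfies lte_C^{Ori}(Δt) =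 (Δt²/2)·C′(q(tₙ))·(A(q(tₙ)) + B(q(tₙ))) + O(Δt³) as Δt → 0. -/
open Filter Asymptotics

lemma quad_taylor {E : Type*} [NormedAddCommGroup E] [NormedSpace ℝ E]
    {g : E → ℝ} {L : E →L[ℝ] ℝ}
    (hg : ContDiffAt ℝ 2 g 0) (hL : HasFDerivAt g L 0) :
    ∃ K ≥ (0:ℝ), ∃ ε > (0:ℝ), ∀ p, ‖p‖ < ε →
      ‖g p - g 0 - L p‖ ≤ K * ‖p‖ ^ 2 := by
  have hfe : fderiv ℝ g 0 = L := hL.fderiv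
  have hf1 : ContDiffAt ℝ 1 (fderiv ℝ g) 0 := hg.fderiv_right (by norm_num)
  obtain ⟨K, t, ht, hlip⟩ := hf1.exists_lipschitzOnWith
  obtain ⟨U, hU, hgU⟩ := hg.contDiffOn (le_refl 2) (by simp)
  obtain ⟨ε₁, hε₁, hb₁⟩ := Metric.mem_nhds_iff.mp ht
  obtain ⟨ε₂, hε₂, hb₂⟩ := Metric.mem_nhds_iff.mp hU
  refine ⟨K, K.coe_nonneg, min ε₁ ε₂, lt_min hε₁ hε₂, fun p hp => ?_⟩
  have hpε₁ : ‖p‖ < ε₁ := lt_of_lt_of_le hp (min_le_left _ _)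
  have hpε₂ : ‖p‖ < ε₂ := lt_of_lt_of_le hp (min_le_right _ _)
  set s : Set E := Metric.closedBall 0 ‖p‖ with hs
  have hsub₁ : s ⊆ Metric.ball 0 ε₁ := fun z hz =>
    Metric.mem_ball.mpr (lt_of_le_of_lt (Metric.mem_closedBall.mp hz) hpε₁)
  have hsub₂ : s ⊆ Metric.ball 0 ε₂ := fun z hz =>
    Metric.mem_ball.mpr (lt_of_le_of_lt (Metric.mem_closedBall.mp hz) hpε₂)
  have hdiff : DifferentiableOn ℝ g U := hgU.differentiableOn (by norm_num)
  have hder : ∀ z ∈ s, HasFDerivWithinAt g (fderiv ℝ g z) s z := by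
    intro z hz
    have hzU : U ∈ nhds z :=
      Filter.mem_of_superset (Metric.isOpen_ball.mem_nhds (hsub₂ hz)) hb₂
    exact (hdiff.differentiableAt hzU).hasFDerivAt.hasFDerivWithinAt
  have hbound : ∀ z ∈ s, ‖fderiv ℝ g z - L‖ ≤ (K : ℝ) * ‖p‖ := by
    intro z hz
    rw [← hfe]
    have h0t : (0 : E) ∈ t := hb₁ (Metric.mem_ball_self (lt_of_le_of_lt (norm_nonneg p) hpε₁))
    have hzt : z ∈ t := hb₁ (hsub₁ hz)
    have := hlip.dist_le_mul z hzt 0 h0t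
    rw [dist_eq_norm, dist_eq_norm, sub_zero] at this
    calc ‖fderiv ℝ g z - fderiv ℝ g 0‖ ≤ K * ‖z‖ := this
      _ ≤ K * ‖p‖ := by
          have : ‖z‖ ≤ ‖p‖ := by
            simpa [dist_eq_norm] using Metric.mem_closedBall.mp hz
          exact mul_le_mul_of_nonneg_left this K.coe_nonneg
  have h0s : (0 : E) ∈ s := Metric.mem_closedBall_self (norm_nonneg p)
  have hps : p ∈ s := by simp [hs, Metric.mem_closedBall, dist_eq_norm]
  have := (convex_closedBall (0:E) ‖p‖).norm_image_sub_le_of_norm_hasFDerivWithin_le'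
    hder hbound h0s hps
  simpa [sub_zero, sq, mul_assoc, mul_comm, mul_left_comm] using this

theorem lte_C_original_three_process
    (A B C q qA : ℝ → ℝ) (qB qC : ℝ → ℝ → ℝ) (tn : ℝ)
    (hA : ContDiff ℝ 2 A) (hB : ContDiff ℝ 2 B) (hC : ContDiff ℝ 2 C)
    (hq : ∀ t, HasDerivAt q (A (q t) + B (q t) + C (q t)) t)
    (hqA : ∀ s, HasDerivAt qA (A (qA s)) s)
    (hqA0 : qA 0 = q tn)
    (hqB : ∀ φ s, HasDerivAt (fun u => qB u φ) (B (qB s φ)) s)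
    (hqB0 : ∀ φ, qB 0 φ = φ)
    (hqC : ∀ φ s, HasDerivAt (fun u => qC u φ) (C (qC s φ)) s)
    (hqC0 : ∀ φ, qC 0 φ = φ)
    (hqAsmooth : ContDiffAt ℝ 2 qA 0)
    (hqBsmooth : ContDiffAt ℝ 2 (fun p : ℝ × ℝ => qB p.1 p.2) (0, q tn))
    (hqCsmooth : ContDiffAt ℝ 2 (fun p : ℝ × ℝ => qC p.1 p.2) (0, q tn)) :
    (fun Δt : ℝ =>
        ((∫ η in (0:ℝ)..Δt, C (qC η (qB Δt (qA Δt))))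
            - ∫ η in (0:ℝ)..Δt, C (q (tn + η)))
          - Δt ^ 2 / 2 * (deriv C (q tn) * (A (q tn) + B (q tn))))
      =O[nhds (0:ℝ)] (fun Δt : ℝ => Δt ^ 3) := by
  set c : ℝ := deriv C (q tn) * (A (q tn) + B (q tn)) with hc
  set w : ℝ → ℝ := fun t => qB t (qA t) with hwdef
  have hw0 : w 0 = q tn := by simp [hwdef, hqB0, hqA0]
  set g : ℝ × ℝ → ℝ := fun p => C (qC p.1 (w p.2)) - C (q (tn + p.1)) with hgdef
  have hg0 : g (0, 0) = 0 := by simp [hgdef, hqC0, hw0]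
  -- q is C²
  have hqdiff : Differentiable ℝ q := fun t => (hq t).differentiableAt
  have hderivq : deriv q = fun t => A (q t) + B (q t) + C (q t) := funext fun t => (hq t).deriv
  have hq1 : ContDiff ℝ 1 q := by
    rw [show (1 : WithTop ℕ∞) = 0 + 1 from rfl, contDiff_succ_iff_deriv]
    refine ⟨hqdiff, by simp, ?_⟩
    rw [hderivq, contDiff_zero]
    exact ((hA.continuous.comp hqdiff.continuous).add
      (hB.continuous.comp hqdiff.continuous)).add (hC.continuous.comp hqdiff.continuous)
  have hq2 : ContDiff ℝ 2 q := by
    rw [show (2 : WithTop ℕ∞) = 1 + 1 from rfl, contDiff_succ_iff_deriv]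
    refine ⟨hqdiff, by simp, ?_⟩
    rw [hderivq]
    exact (((hA.of_le one_le_two).comp hq1).add ((hB.of_le one_le_two).comp hq1)).add
      ((hC.of_le one_le_two).comp hq1)
  -- w is C² at 0
  have hinnerA : ContDiffAt ℝ 2 (fun t : ℝ => (t, qA t)) 0 := contDiffAt_id.prodMk hqAsmooth
  have hqB' : ContDiffAt ℝ 2 (fun p : ℝ × ℝ => qB p.1 p.2)
      ((fun t : ℝ => (t, qA t)) 0) := by simpa [hqA0] using hqBsmooth
  have hw2 : ContDiffAt ℝ 2 w 0 := by have := hqB'.comp 0 hinnerA; exact this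
  -- g is C² at (0,0)
  have hm2 : ContDiffAt ℝ 2 (fun p : ℝ × ℝ => (p.1, w p.2)) (0, 0) :=
    contDiffAt_fst.prodMk (hw2.comp (0, 0) contDiffAt_snd)
  have hqC' : ContDiffAt ℝ 2 (fun p : ℝ × ℝ => qC p.1 p.2)
      ((fun p : ℝ × ℝ => (p.1, w p.2)) (0, 0)) := by simpa [hw0] using hqCsmooth
  have hu2 : ContDiffAt ℝ 2 (fun p : ℝ × ℝ => qC p.1 (w p.2)) (0, 0) := by have := hqC'.comp (0, 0) hm2; exact this
  have hCu2 : ContDiffAt ℝ 2 (fun p : ℝ × ℝ => C (qC p.1 (w p.2))) (0, 0) :=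
    (hC.contDiffAt).comp (0, 0) hu2
  have hv2 : ContDiffAt ℝ 2 (fun p : ℝ × ℝ => C (q (tn + p.1))) (0, 0) := by
    have h1 : ContDiffAt ℝ 2 (fun p : ℝ × ℝ => tn + p.1) (0, 0) :=
      contDiffAt_const.add contDiffAt_fst
    exact hC.contDiffAt.comp (0, 0) (hq2.contDiffAt.comp (0, 0) h1)
  have hg2 : ContDiffAt ℝ 2 g (0, 0) := hCu2.sub hv2
  -- partial derivatives of the flows
  have hΦex : HasFDerivAt (fun p : ℝ × ℝ => qC p.1 p.2)
      (fderiv ℝ (fun p : ℝ × ℝ => qC p.1 p.2) (0, q tn)) (0, q tn) :=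
    (hqCsmooth.differentiableAt (by norm_num)).hasFDerivAt
  set Φ := fderiv ℝ (fun p : ℝ × ℝ => qC p.1 p.2) (0, q tn) with hΦdef
  have hΦ1 : Φ (1, 0) = C (q tn) := by
    have h1 : HasDerivAt (fun s : ℝ => qC s (q tn)) (Φ ((1:ℝ), (0:ℝ))) 0 := by
      have hin : HasDerivAt (fun s : ℝ => (s, q tn)) ((1:ℝ), (0:ℝ)) 0 :=
        (hasDerivAt_id (0:ℝ)).prodMk (hasDerivAt_const (0:ℝ) _)
      exact hΦex.comp_hasDerivAt 0 hin
    have h2 : HasDerivAt (fun s : ℝ => qC s (q tn)) (C (q tn)) 0 := by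
      have := hqC (q tn) 0
      rwa [hqC0] at this
    exact h1.unique h2
  have hΦ2 : Φ (0, 1) = 1 := by
    have h1 : HasDerivAt (fun φ : ℝ => qC 0 φ) (Φ ((0:ℝ), (1:ℝ))) (q tn) := by
      have hin : HasDerivAt (fun φ : ℝ => ((0:ℝ), φ)) ((0:ℝ), (1:ℝ)) (q tn) :=
        (hasDerivAt_const _ _).prodMk (hasDerivAt_id _)
      exact hΦex.comp_hasDerivAt (q tn) hin
    have h2 : HasDerivAt (fun φ : ℝ => qC 0 φ) 1 (q tn) := by
      have he : (fun φ : ℝ => qC 0 φ) = id := funext hqC0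
      rw [he]; exact hasDerivAt_id _
    exact h1.unique h2
  have hΨex : HasFDerivAt (fun p : ℝ × ℝ => qB p.1 p.2)
      (fderiv ℝ (fun p : ℝ × ℝ => qB p.1 p.2) (0, q tn)) (0, q tn) :=
    (hqBsmooth.differentiableAt (by norm_num)).hasFDerivAt
  set Ψ := fderiv ℝ (fun p : ℝ × ℝ => qB p.1 p.2) (0, q tn) with hΨdef
  have hΨ1 : Ψ (1, 0) = B (q tn) := by
    have h1 : HasDerivAt (fun s : ℝ => qB s (q tn)) (Ψ ((1:ℝ), (0:ℝ))) 0 := by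
      have hin : HasDerivAt (fun s : ℝ => (s, q tn)) ((1:ℝ), (0:ℝ)) 0 :=
        (hasDerivAt_id (0:ℝ)).prodMk (hasDerivAt_const (0:ℝ) _)
      exact hΨex.comp_hasDerivAt 0 hin
    have h2 : HasDerivAt (fun s : ℝ => qB s (q tn)) (B (q tn)) 0 := by
      have := hqB (q tn) 0
      rwa [hqB0] at this
    exact h1.unique h2
  have hΨ2 : Ψ (0, 1) = 1 := by
    have h1 : HasDerivAt (fun φ : ℝ => qB 0 φ) (Ψ ((0:ℝ), (1:ℝ))) (q tn) := by
      have hin : HasDerivAt (fun φ : ℝ => ((0:ℝ), φ)) ((0:ℝ), (1:ℝ)) (q tn) :=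
        (hasDerivAt_const _ _).prodMk (hasDerivAt_id _)
      exact hΨex.comp_hasDerivAt (q tn) hin
    have h2 : HasDerivAt (fun φ : ℝ => qB 0 φ) 1 (q tn) := by
      have he : (fun φ : ℝ => qB 0 φ) = id := funext hqB0
      rw [he]; exact hasDerivAt_id _
    exact h1.unique h2
  -- derivative of w at 0
  have hwd : HasDerivAt w (A (q tn) + B (q tn)) 0 := by
    have hin : HasDerivAt (fun t : ℝ => (t, qA t)) ((1:ℝ), A (q tn)) 0 := by
      refine (hasDerivAt_id (0:ℝ)).prodMk ?_
      have := hqA 0; rwa [hqA0] at this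
    have hΨex' : HasFDerivAt (fun p : ℝ × ℝ => qB p.1 p.2) Ψ
        ((fun t : ℝ => (t, qA t)) 0) := by simpa [hqA0] using hΨex
    have h1 : HasDerivAt w (Ψ ((1:ℝ), A (q tn))) 0 := by have := hΨex'.comp_hasDerivAt 0 hin; exact this
    have h2 : Ψ ((1:ℝ), A (q tn)) = A (q tn) + B (q tn) := by
      have hsplit : ((1:ℝ), A (q tn)) = ((1:ℝ), (0:ℝ)) + A (q tn) • ((0:ℝ), (1:ℝ)) := by
        simp [Prod.ext_iff]
      rw [hsplit, map_add, map_smul, hΨ1, hΨ2]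
      simp [smul_eq_mul]; ring
    rwa [h2] at h1
  -- full derivative of g at (0,0)
  set W : ℝ →L[ℝ] ℝ :=
    ContinuousLinearMap.smulRight (1 : ℝ →L[ℝ] ℝ) (A (q tn) + B (q tn)) with hWdef
  have hwfd : HasFDerivAt w W 0 := hwd.hasFDerivAt
  set Fst : ℝ × ℝ →L[ℝ] ℝ := ContinuousLinearMap.fst ℝ ℝ ℝ with hFstdef
  set Snd : ℝ × ℝ →L[ℝ] ℝ := ContinuousLinearMap.snd ℝ ℝ ℝ with hSnddef
  set M : ℝ × ℝ →L[ℝ] ℝ × ℝ := Fst.prod (W.comp Snd) with hMdef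
  have hmfd : HasFDerivAt (fun p : ℝ × ℝ => (p.1, w p.2)) M (0, 0) :=
    hasFDerivAt_fst.prodMk (by have := hwfd.comp ((0:ℝ), (0:ℝ)) (hasFDerivAt_snd (𝕜 := ℝ) (p := ((0:ℝ), (0:ℝ)))); exact this)
  have hΦex2 : HasFDerivAt (fun p : ℝ × ℝ => qC p.1 p.2) Φ
      ((fun p : ℝ × ℝ => (p.1, w p.2)) (0, 0)) := by simpa [hw0] using hΦex
  have hufd : HasFDerivAt (fun p : ℝ × ℝ => qC p.1 (w p.2)) (Φ.comp M) (0, 0) :=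
    by have := hΦex2.comp (0, 0) hmfd; exact this
  have hCd : HasDerivAt C (deriv C (q tn)) (qC 0 (w 0)) := by
    have h1 : DifferentiableAt ℝ C (q tn) := (hC.differentiable (by norm_num)) (q tn)
    simpa [hqC0, hw0] using h1.hasDerivAt
  have hCufd : HasFDerivAt (fun p : ℝ × ℝ => C (qC p.1 (w p.2)))
      (deriv C (q tn) • (Φ.comp M)) (0, 0) := hCd.comp_hasFDerivAt (0, 0) hufd
  have hCqd : HasDerivAt (fun t => C (q t))
      (deriv C (q tn) * (A (q tn) + B (q tn) + C (q tn))) tn := by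
    have h1 : HasDerivAt C (deriv C (q tn)) (q tn) :=
      ((hC.differentiable (by norm_num)) (q tn)).hasDerivAt
    exact h1.comp tn (hq tn)
  have hinfd : HasFDerivAt (fun p : ℝ × ℝ => tn + p.1) Fst (0, 0) :=
    hasFDerivAt_fst.const_add tn
  have hCv : HasFDerivAt (fun p : ℝ × ℝ => C (q (tn + p.1)))
      ((deriv C (q tn) * (A (q tn) + B (q tn) + C (q tn))) • Fst) (0, 0) := by
    have h1 : HasDerivAt (fun t => C (q t))
        (deriv C (q tn) * (A (q tn) + B (q tn) + C (q tn))) (tn + (0:ℝ)) := by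
      simpa using hCqd
    exact h1.comp_hasFDerivAt (f := fun p : ℝ × ℝ => tn + p.1) (0, 0) hinfd
  set L : ℝ × ℝ →L[ℝ] ℝ := deriv C (q tn) • (Φ.comp M)
      - (deriv C (q tn) * (A (q tn) + B (q tn) + C (q tn))) • Fst with hLdef
  have hgfd : HasFDerivAt g L (0, 0) := hCufd.sub hCv
  have hM1 : M ((1:ℝ), (0:ℝ)) = ((1:ℝ), (0:ℝ)) := by
    simp [hMdef, hFstdef, hSnddef, hWdef]
  have hM2 : M ((0:ℝ), (1:ℝ)) = ((0:ℝ), A (q tn) + B (q tn)) := by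
    simp [hMdef, hFstdef, hSnddef, hWdef]
  have hL1 : L ((1:ℝ), (0:ℝ)) = -c := by
    simp only [hLdef, ContinuousLinearMap.sub_apply, ContinuousLinearMap.smul_apply,
      ContinuousLinearMap.comp_apply, smul_eq_mul]
    rw [hM1, hΦ1]
    simp [hFstdef, hc]
    ring
  have hL2 : L ((0:ℝ), (1:ℝ)) = c := by
    simp only [hLdef, ContinuousLinearMap.sub_apply, ContinuousLinearMap.smul_apply,
      ContinuousLinearMap.comp_apply, smul_eq_mul]
    rw [hM2]
    have hΦval : Φ ((0:ℝ), A (q tn) + B (q tn)) = A (q tn) + B (q tn) := by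
      have hsplit : ((0:ℝ), A (q tn) + B (q tn)) = (A (q tn) + B (q tn)) • ((0:ℝ), (1:ℝ)) := by
        simp [Prod.ext_iff]
      rw [hsplit, map_smul, hΦ2]
      simp
    rw [hΦval]
    simp [hFstdef, hc]
  have hLapply : ∀ x y : ℝ, L (x, y) = x * (-c) + y * c := by
    intro x y
    have hxy : ((x:ℝ), (y:ℝ)) = x • ((1:ℝ), (0:ℝ)) + y • ((0:ℝ), (1:ℝ)) := by
      simp [Prod.ext_iff]
    rw [hxy, map_add, map_smul, map_smul, hL1, hL2]
    simp [smul_eq_mul]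
  -- Taylor estimate
  obtain ⟨K, hK0, ε₀, hε₀, hquad⟩ := quad_taylor (g := g) (L := L) hg2 hgfd
  have hg0' : g 0 = 0 := hg0
  -- continuity neighbourhood
  obtain ⟨V, hV, hgV⟩ := hg2.contDiffOn (le_refl 2) (by simp)
  obtain ⟨ε₁, hε₁, hbV⟩ := Metric.mem_nhds_iff.mp hV
  -- conclude
  rw [Asymptotics.isBigO_iff]
  refine ⟨K, ?_⟩
  filter_upwards [Metric.ball_mem_nhds (0:ℝ) (lt_min hε₀ hε₁)] with Δt hΔt
  have hΔ : |Δt| < min ε₀ ε₁ := by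
    simpa [Real.dist_eq] using hΔt
  have hnorm : ∀ η ∈ Set.uIcc (0:ℝ) Δt, ‖((η:ℝ), Δt)‖ ≤ |Δt| := by
    intro η hη
    have hηle : |η| ≤ |Δt| := by
      rcases Set.mem_uIcc.mp hη with ⟨h1, h2⟩ | ⟨h1, h2⟩
      · rw [abs_of_nonneg h1]; exact h2.trans (le_abs_self Δt)
      · rw [abs_of_nonpos h2]; exact (neg_le_neg h1).trans (neg_le_abs Δt)
    rw [Prod.norm_def]
    simp only [Real.norm_eq_abs]
    exact max_le hηle le_rfl
  have hf2cont : Continuous fun η : ℝ => C (q (tn + η)) :=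
    hC.continuous.comp (hq2.continuous.comp (continuous_const.add continuous_id))
  have hgcont : ContinuousOn (fun η : ℝ => g (η, Δt)) (Set.uIcc 0 Δt) := by
    refine hgV.continuousOn.comp
      (Continuous.continuousOn (continuous_id.prodMk continuous_const)) ?_
    intro η hη
    refine hbV ?_
    have hmem : ‖((η : ℝ), Δt)‖ < ε₁ :=
      lt_of_le_of_lt (hnorm η hη) (lt_of_lt_of_le hΔ (min_le_right _ _))
    exact mem_ball_zero_iff.mpr hmem
  have hgint : IntervalIntegrable (fun η => g (η, Δt)) MeasureTheory.volume 0 Δt :=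
    hgcont.intervalIntegrable
  have hf2int : IntervalIntegrable (fun η => C (q (tn + η))) MeasureTheory.volume 0 Δt :=
    hf2cont.intervalIntegrable 0 Δt
  have hf1int : IntervalIntegrable (fun η => C (qC η (qB Δt (qA Δt))))
      MeasureTheory.volume 0 Δt := by
    have he : (fun η => C (qC η (qB Δt (qA Δt))))
        = fun η => g (η, Δt) + C (q (tn + η)) := by
      funext η
      simp [hgdef, hwdef]
    rw [he]
    exact hgint.add hf2int
  have hsplit : (∫ η in (0:ℝ)..Δt, C (qC η (qB Δt (qA Δt))))
      - (∫ η in (0:ℝ)..Δt, C (q (tn + η))) = ∫ η in (0:ℝ)..Δt, g (η, Δt) := by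
    rw [← intervalIntegral.integral_sub hf1int hf2int]
  have hLint : IntervalIntegrable (fun η => η * (-c) + Δt * c) MeasureTheory.volume 0 Δt :=
    Continuous.intervalIntegrable ((continuous_id.mul continuous_const).add
      continuous_const) 0 Δt
  have hLval : (∫ η in (0:ℝ)..Δt, (η * (-c) + Δt * c)) = Δt ^ 2 / 2 * c := by
    have h1 : IntervalIntegrable (fun η : ℝ => η * (-c)) MeasureTheory.volume 0 Δt :=
      Continuous.intervalIntegrable (continuous_id.mul continuous_const) 0 Δt
    have h2 : IntervalIntegrable (fun _ : ℝ => Δt * c) MeasureTheory.volume 0 Δt :=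
      continuous_const.intervalIntegrable 0 Δt
    rw [intervalIntegral.integral_add h1 h2]
    rw [intervalIntegral.integral_mul_const, integral_id, intervalIntegral.integral_const]
    simp
    ring
  have hkey : ((∫ η in (0:ℝ)..Δt, C (qC η (qB Δt (qA Δt))))
      - ∫ η in (0:ℝ)..Δt, C (q (tn + η))) - Δt ^ 2 / 2 * c
      = ∫ η in (0:ℝ)..Δt, (g (η, Δt) - (η * (-c) + Δt * c)) := by
    rw [hsplit, ← hLval, ← intervalIntegral.integral_sub hgint hLint]
  rw [hkey]
  have hbound : ∀ η ∈ Set.uIoc (0:ℝ) Δt, ‖g (η, Δt) - (η * (-c) + Δt * c)‖ ≤ K * Δt ^ 2 := by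
    intro η hη
    have hη' : η ∈ Set.uIcc (0:ℝ) Δt := Set.Ioc_subset_Icc_self hη
    have hpnorm : ‖((η:ℝ), Δt)‖ ≤ |Δt| := hnorm η hη'
    have h1 : ‖((η:ℝ), Δt)‖ < ε₀ :=
      lt_of_le_of_lt hpnorm (lt_of_lt_of_le hΔ (min_le_left _ _))
    have h2 := hquad (η, Δt) h1
    rw [hg0', hLapply] at h2
    calc ‖g (η, Δt) - (η * (-c) + Δt * c)‖ ≤ K * ‖((η:ℝ), Δt)‖ ^ 2 := by
          simpa using h2
      _ ≤ K * Δt ^ 2 := by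
          apply mul_le_mul_of_nonneg_left _ hK0
          calc ‖((η:ℝ), Δt)‖ ^ 2 ≤ |Δt| ^ 2 :=
                pow_le_pow_left₀ (norm_nonneg _) hpnorm 2
            _ = Δt ^ 2 := sq_abs Δt
  calc ‖∫ η in (0:ℝ)..Δt, (g (η, Δt) - (η * (-c) + Δt * c))‖
      ≤ K * Δt ^ 2 * |Δt - 0| :=
        intervalIntegral.norm_integral_le_of_norm_le_const hbound
    _ = K * ‖Δt ^ 3‖ := by
        rw [sub_zero, Real.norm_eq_abs, abs_pow, ← sq_abs]
        ring
end

section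
/- Let A, B, C : ℝ → ℝ be twice continuously differentiable, let tₙ ∈ ℝ, let q : ℝ → ℝ satisfy q′(t) = A(q(t)) + B(q(t)) + C(q(t)) for all t. Let q_A : ℝ → ℝ satisfy q_A′(s) = A(q_A(s)) with q_A(0) = q(tₙ), and let q_B and q_C : ℝ → ℝ → ℝ be the two-parameter flows of B and C respectively, with sufficient smoothness near the relevant points. Define the original (fully sequential) update F^{Ori}(Δt) = q_C(Δt, q_B(Δt, q_A(Δt))). Then F^{Ori}(Δt) − q(tₙ + Δt) = (Δt²/2)·[A′(q(tₙ))·(−B(q(tₙ)) − C(q(tₙ))) + B′(q(tₙ))·(A(q(tₙ)) − C(q(tₙ))) + C′(q(tₙ))·(A(q(tₙ)) + B(q(tₙ)))] + O(Δt³) as Δt → 0. -/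
open Filter Asymptotics

/-- "O-deviation at 0": the function deviates from its value at `0` by `O(s)`. -/
abbrev OD (f : ℝ → ℝ) : Prop := (fun s => f s - f 0) =O[nhds (0:ℝ)] (fun s => s)

lemma OD_of_differentiableAt {f : ℝ → ℝ} (h : DifferentiableAt ℝ f 0) : OD f := by
  have := h.hasDerivAt.hasFDerivAt.isBigO_sub
  simpa using this

lemma OD.boundedO {g : ℝ → ℝ} (hg : OD g) : g =O[nhds (0:ℝ)] (fun _ => (1:ℝ)) := by
  have h1 : (fun s : ℝ => s) =O[nhds (0:ℝ)] (fun _ => (1:ℝ)) := by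
    apply IsBigO.of_bound 1
    filter_upwards [Metric.closedBall_mem_nhds (0:ℝ) one_pos] with s hs
    simpa [Real.norm_eq_abs, Real.dist_eq] using Metric.mem_closedBall.1 hs
  have h2 : (fun s : ℝ => g s - g 0) =O[nhds (0:ℝ)] (fun _ => (1:ℝ)) := hg.trans h1
  have h3 : (fun _ : ℝ => g 0) =O[nhds (0:ℝ)] (fun _ => (1:ℝ)) :=
    isBigO_const_const _ one_ne_zero _
  simpa using h2.add h3

lemma OD.add {f g : ℝ → ℝ} (hf : OD f) (hg : OD g) : OD (fun s => f s + g s) := by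
  have := IsBigO.add hf hg
  unfold OD
  simpa [add_sub_add_comm] using this

lemma OD.sub {f g : ℝ → ℝ} (hf : OD f) (hg : OD g) : OD (fun s => f s - g s) := by
  have := IsBigO.sub hf hg
  unfold OD
  simpa [sub_sub_sub_comm] using this

lemma OD.mul {f g : ℝ → ℝ} (hf : OD f) (hg : OD g) : OD (fun s => f s * g s) := by
  unfold OD
  have key : ∀ s : ℝ, f s * g s - f 0 * g 0 = (f s - f 0) * g s + f 0 * (g s - g 0) := by
    intro s; ring
  simp only [key]
  have h1 : (fun s : ℝ => (f s - f 0) * g s) =O[nhds (0:ℝ)] (fun s => s) := by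
    have := IsBigO.mul hf hg.boundedO
    simpa using this
  have h2 : (fun s : ℝ => f 0 * (g s - g 0)) =O[nhds (0:ℝ)] (fun s => s) :=
    (IsBigO.const_mul_left hg (f 0))
  exact h1.add h2

lemma abs_le_abs_of_mem_uIcc {τ s : ℝ} (h : τ ∈ Set.uIcc (0:ℝ) s) : |τ| ≤ |s| := by
  rcases le_total 0 s with hs | hs
  · rw [Set.uIcc_of_le hs] at h
    rw [abs_of_nonneg h.1, abs_of_nonneg hs]; exact h.2
  · rw [Set.uIcc_of_ge hs] at h
    rw [abs_of_nonpos h.2, abs_of_nonpos hs]; linarith [h.1]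

/-- Integrating an `O(sⁿ)` bound on the derivative. -/
lemma stepO {u u' : ℝ → ℝ} {n : ℕ}
    (hu : ∀ᶠ s in nhds (0:ℝ), HasDerivAt u (u' s) s) (h0 : u 0 = 0)
    (hO : u' =O[nhds (0:ℝ)] (fun s => s ^ n)) :
    u =O[nhds (0:ℝ)] (fun s => s ^ (n + 1)) := by
  rcases (isBigO_iff.1 hO) with ⟨c, hc⟩
  rcases Metric.eventually_nhds_iff.1 (hu.and hc) with ⟨δ, hδ, hball⟩
  set c' : ℝ := max c 0 with hc'
  apply IsBigO.of_bound c'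
  filter_upwards [Metric.ball_mem_nhds (0:ℝ) hδ] with x hx
  have hxδ : |x| < δ := by simpa [Real.dist_eq] using hx
  have kb : ∀ t ∈ Set.uIcc (0:ℝ) x, ‖u' t‖ ≤ c' * |x| ^ n := by
    intro t ht
    have htx : |t| ≤ |x| := abs_le_abs_of_mem_uIcc ht
    have ht' : dist t 0 < δ := by
      rw [Real.dist_eq, sub_zero]; exact lt_of_le_of_lt htx hxδ
    have hb := (hball ht').2
    calc ‖u' t‖ ≤ c * ‖t ^ n‖ := hb
      _ ≤ c' * |x| ^ n := by
          rw [Real.norm_eq_abs, abs_pow]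
          rcases le_or_gt c 0 with h | h
          · have : c * |t| ^ n ≤ 0 := mul_nonpos_of_nonpos_of_nonneg h (by positivity)
            exact le_trans this (by positivity)
          · refine mul_le_mul (le_max_left _ _) (pow_le_pow_left₀ (abs_nonneg _) htx n) (by positivity) (le_of_lt (lt_of_lt_of_le h (le_max_left _ _)))
  have hder : ∀ t ∈ Set.uIcc (0:ℝ) x, HasDerivWithinAt u (u' t) (Set.uIcc (0:ℝ) x) t := by
    intro t ht
    have htx : |t| ≤ |x| := abs_le_abs_of_mem_uIcc ht
    have ht' : dist t 0 < δ := by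
      rw [Real.dist_eq, sub_zero]; exact lt_of_le_of_lt htx hxδ
    exact ((hball ht').1).hasDerivWithinAt
  have := (convex_uIcc (0:ℝ) x).norm_image_sub_le_of_norm_hasDerivWithin_le hder kb
      (Set.left_mem_uIcc) (Set.right_mem_uIcc)
  rw [h0, sub_zero, sub_zero] at this
  calc ‖u x‖ ≤ c' * |x| ^ n * ‖x‖ := this
    _ = c' * ‖x ^ (n+1)‖ := by
        rw [Real.norm_eq_abs, Real.norm_eq_abs, abs_pow, pow_succ]; ring

lemma key (D : ℝ → ℝ) (hD : ContDiff ℝ 2 D) (G : ℝ → ℝ → ℝ) (a : ℝ)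
    (hG : ∀ φ s, HasDerivAt (fun u => G u φ) (D (G s φ)) s)
    (hG0 : ∀ φ, G 0 φ = φ)
    (hGs : ContDiffAt ℝ 2 (fun p : ℝ × ℝ => G p.1 p.2) (0, a))
    (k k' k'' : ℝ → ℝ) (hk0 : k 0 = a)
    (hk1 : ∀ᶠ s in nhds (0:ℝ), HasDerivAt k (k' s) s)
    (hk2 : ∀ᶠ s in nhds (0:ℝ), HasDerivAt k' (k'' s) s)
    (hk3 : OD k'') :
    ∃ m' m'' : ℝ → ℝ,
      (∀ᶠ s in nhds (0:ℝ), HasDerivAt (fun u => G u (k u)) (m' s) s) ∧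
      (∀ᶠ s in nhds (0:ℝ), HasDerivAt m' (m'' s) s) ∧
      OD m'' ∧
      m' 0 = D a + k' 0 ∧
      m'' 0 = deriv D a * (D a + k' 0) + deriv D a * k' 0 + k'' 0 := by
  classical
  obtain ⟨U, hUn, hGU⟩ := hGs.contDiffOn (le_refl (2 : WithTop ℕ∞)) (by simp)
  obtain ⟨V, hVU, hVo, hV0⟩ := mem_nhds_iff.1 hUn
  have hGV : ContDiffOn ℝ 2 (fun p : ℝ × ℝ => G p.1 p.2) V := hGU.mono hVU
  set GG : ℝ × ℝ → ℝ := fun p => G p.1 p.2 with hGhat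
  set L : ℝ × ℝ → (ℝ × ℝ) →L[ℝ] ℝ := fun p => fderiv ℝ GG p with hLdef
  have hGGd : ∀ p ∈ V, HasFDerivAt GG (L p) p := by
    intro p hp
    exact ((hGV.differentiableOn (by norm_num)).differentiableAt (hVo.mem_nhds hp)).hasFDerivAt
  have hLC1 : ContDiffOn ℝ 1 L V := hGV.fderiv_of_isOpen hVo (by norm_num)
  have hLd : ∀ p ∈ V, HasFDerivAt L (fderiv ℝ L p) p := fun p hp =>
    ((hLC1.differentiableOn one_ne_zero).differentiableAt (hVo.mem_nhds hp)).hasFDerivAt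
  set e1 : ℝ × ℝ := ((1:ℝ), (0:ℝ)) with he1
  set e2 : ℝ × ℝ := ((0:ℝ), (1:ℝ)) with he2
  set Vf : ℝ × ℝ → ℝ := fun p => L p e2 with hVfdef
  set Kf : ℝ × ℝ → ℝ := fun p => fderiv ℝ L p e2 e2 with hKfdef
  have hDd : ∀ x : ℝ, HasDerivAt D (deriv D x) x := fun x =>
    (hD.differentiable two_ne_zero x).hasDerivAt
  -- time partial of GG is D ∘ GG
  have P1 : ∀ p ∈ V, L p e1 = D (GG p) := by
    intro p hp
    have hcurve : HasDerivAt (fun t : ℝ => ((t, p.2) : ℝ × ℝ)) e1 p.1 :=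
      (hasDerivAt_id p.1).prodMk (hasDerivAt_const p.1 p.2)
    have hp' : HasFDerivAt GG (L p) ((p.1 : ℝ), p.2) := by
      rw [Prod.mk.eta]; exact hGGd p hp
    have h1 : HasDerivAt (fun t : ℝ => G t p.2) (L p e1) p.1 :=
      hp'.comp_hasDerivAt_of_eq p.1 hcurve rfl
    exact h1.unique (hG p.2 p.1)
  -- spatial derivative of GG in the second variable
  have P2 : ∀ p ∈ V, HasDerivAt (fun ψ : ℝ => G p.1 ψ) (Vf p) p.2 := by
    intro p hp
    have hcurve : HasDerivAt (fun ψ : ℝ => ((p.1, ψ) : ℝ × ℝ)) e2 p.2 :=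
      (hasDerivAt_const p.2 p.1).prodMk (hasDerivAt_id p.2)
    have hp' : HasFDerivAt GG (L p) ((p.1 : ℝ), p.2) := by
      rw [Prod.mk.eta]; exact hGGd p hp
    exact hp'.comp_hasDerivAt_of_eq p.2 hcurve rfl
  have P3 : ∀ φ : ℝ, ((0:ℝ), φ) ∈ V → Vf (0, φ) = 1 := by
    intro φ hφ
    have h1 := P2 _ hφ
    have h2 : (fun ψ : ℝ => G 0 ψ) = (fun ψ : ℝ => ψ) := funext hG0
    rw [h2] at h1
    exact h1.unique (hasDerivAt_id φ)
  -- derivative of Vf along any direction, through fderiv L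
  have hVfD : ∀ p ∈ V, HasFDerivAt Vf
      ((ContinuousLinearMap.apply ℝ ℝ e2).comp (fderiv ℝ L p)) p := by
    intro p hp
    exact ((ContinuousLinearMap.apply ℝ ℝ e2).hasFDerivAt).comp p (hLd p hp)
  -- Schwarz symmetry & the value of the mixed derivative
  have P4 : ∀ p ∈ V, fderiv ℝ L p e1 e2 = deriv D (GG p) * Vf p := by
    intro p hp
    have hev : ∀ᶠ y in nhds p, HasFDerivAt GG (L y) y :=
      Filter.eventually_of_mem (hVo.mem_nhds hp) (fun y hy => hGGd y hy)
    have hsymm := second_derivative_symmetric_of_eventually hev (hLd p hp) e1 e2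
    -- compute fderiv L p e2 e1 : derivative in direction e2 of (fun p => L p e1) = D ∘ GG
    have h1 : HasFDerivAt (fun q : ℝ × ℝ => L q e1)
        ((ContinuousLinearMap.apply ℝ ℝ e1).comp (fderiv ℝ L p)) p :=
      ((ContinuousLinearMap.apply ℝ ℝ e1).hasFDerivAt).comp p (hLd p hp)
    have h2 : HasFDerivAt (fun q : ℝ × ℝ => D (GG q))
        ((ContinuousLinearMap.apply ℝ ℝ e1).comp (fderiv ℝ L p)) p := by
      apply h1.congr_of_eventuallyEq
      filter_upwards [hVo.mem_nhds hp] with y hy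
      exact (P1 y hy).symm
    have h3 : HasFDerivAt (fun q : ℝ × ℝ => D (GG q)) (deriv D (GG p) • L p) p :=
      (hDd (GG p)).comp_hasFDerivAt p (hGGd p hp)
    have h4 := h2.unique h3
    have h5 : fderiv ℝ L p e2 e1 = deriv D (GG p) * Vf p := by
      have := congrFun (congrArg DFunLike.coe h4) e2
      simpa using this
    exact hsymm.trans h5
  -- a closed ball around (0,a) inside V
  obtain ⟨r, hr, hball⟩ := Metric.mem_nhds_iff.1 (hVo.mem_nhds hV0)
  set ε : ℝ := r / 2 with hεdef
  have hε : 0 < ε := by positivity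
  have hSV : Metric.closedBall ((0:ℝ), a) ε ⊆ V := fun p hp =>
    hball (lt_of_le_of_lt (Metric.mem_closedBall.1 hp) (by simp [hεdef]; linarith))
  have hmem : ∀ s φ : ℝ, |s| ≤ ε → |φ - a| ≤ ε →
      ((s, φ) : ℝ × ℝ) ∈ Metric.closedBall ((0:ℝ), a) ε := by
    intro s φ h1 h2
    rw [Metric.mem_closedBall, Prod.dist_eq]
    simp only [Real.dist_eq]
    rw [sub_zero]
    exact max_le h1 h2
  set g : ℝ × ℝ → ℝ := fun p => deriv D (GG p) * Vf p with hgdef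
  have hDD1 : ContDiff ℝ 1 (deriv D) := by
    have h2 : (2 : WithTop ℕ∞) = 1 + 1 := by norm_num
    rw [h2, contDiff_succ_iff_deriv] at hD
    exact hD.2.2
  have hVfC1 : ContDiffOn ℝ 1 Vf V := hLC1.clm_apply contDiffOn_const
  have hgC1 : ContDiffOn ℝ 1 g V :=
    (hDD1.comp_contDiffOn (hGV.of_le one_le_two)).mul hVfC1
  have hgcont : ContinuousOn g V := hgC1.continuousOn
  set S : Set (ℝ × ℝ) := Metric.closedBall ((0:ℝ), a) ε with hSdef
  have hScpt : IsCompact S := isCompact_closedBall _ _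
  have hSconv : Convex ℝ S := convex_closedBall _ _
  obtain ⟨M0, hM0⟩ := hScpt.exists_bound_of_continuousOn
    ((hgC1.continuousOn_fderiv_of_isOpen hVo le_rfl).mono hSV)
  set M : ℝ := max M0 0 with hMdef
  have hMnn : 0 ≤ M := le_max_right _ _
  have hglip : ∀ x ∈ S, ∀ y ∈ S, ‖g y - g x‖ ≤ M * ‖y - x‖ := by
    intro x hx y hy
    refine hSconv.norm_image_sub_le_of_norm_hasFDerivWithin_le
      (fun p hp => ?_) (fun p hp => le_trans (hM0 p hp) (le_max_left _ _)) hx hy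
    exact (((hgC1.differentiableOn one_ne_zero).differentiableAt
      (hVo.mem_nhds (hSV hp))).hasFDerivAt).hasFDerivWithinAt
  -- FTC identity for Vf in time
  have hVfint : ∀ s φ : ℝ, |s| ≤ ε → |φ - a| ≤ ε →
      Vf (s, φ) - 1 = ∫ τ in (0:ℝ)..s, g (τ, φ) := by
    intro s φ hs hφ
    have hmaps : ∀ τ ∈ Set.uIcc (0:ℝ) s, ((τ, φ) : ℝ × ℝ) ∈ V := by
      intro τ hτ
      exact hSV (hmem τ φ (le_trans (abs_le_abs_of_mem_uIcc hτ) hs) hφ)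
    have hder : ∀ τ ∈ Set.uIcc (0:ℝ) s, HasDerivAt (fun t => Vf (t, φ)) (g (τ, φ)) τ := by
      intro τ hτ
      have hpV := hmaps τ hτ
      have hcurve : HasDerivAt (fun t : ℝ => ((t, φ) : ℝ × ℝ)) e1 τ :=
        (hasDerivAt_id τ).prodMk (hasDerivAt_const τ φ)
      have h1 : HasDerivAt (fun t : ℝ => Vf (t, φ))
          (((ContinuousLinearMap.apply ℝ ℝ e2).comp (fderiv ℝ L (τ, φ))) e1) τ :=
        (hVfD _ hpV).comp_hasDerivAt_of_eq τ hcurve rfl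
      have h2 : ((ContinuousLinearMap.apply ℝ ℝ e2).comp (fderiv ℝ L (τ, φ))) e1
          = g (τ, φ) := by
        have h3 := P4 _ hpV
        simpa [hgdef] using h3
      rw [h2] at h1
      exact h1
    have hcint : IntervalIntegrable (fun τ => g (τ, φ)) MeasureTheory.volume 0 s := by
      apply ContinuousOn.intervalIntegrable
      apply hgcont.comp ((continuous_id.prodMk continuous_const).continuousOn)
      intro τ hτ
      exact hmaps τ hτ
    have hFTC := intervalIntegral.integral_eq_sub_of_hasDerivAt hder hcint
    have h0φ : Vf (0, φ) = 1 := P3 φ (hmaps 0 Set.left_mem_uIcc)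
    rw [hFTC, h0φ]
  -- Lipschitz-in-space bound for Vf, scaled by |s|
  have hVlip : ∀ s φ ψ : ℝ, |s| ≤ ε → |φ - a| ≤ ε → |ψ - a| ≤ ε →
      |Vf (s, φ) - Vf (s, ψ)| ≤ M * |φ - ψ| * |s| := by
    intro s φ ψ hs hφ hψ
    have h1 := hVfint s φ hs hφ
    have h2 := hVfint s ψ hs hψ
    have hintφ : IntervalIntegrable (fun τ => g (τ, φ)) MeasureTheory.volume 0 s := by
      apply ContinuousOn.intervalIntegrable
      apply hgcont.comp ((continuous_id.prodMk continuous_const).continuousOn)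
      intro τ hτ
      exact hSV (hmem τ φ (le_trans (abs_le_abs_of_mem_uIcc hτ) hs) hφ)
    have hintψ : IntervalIntegrable (fun τ => g (τ, ψ)) MeasureTheory.volume 0 s := by
      apply ContinuousOn.intervalIntegrable
      apply hgcont.comp ((continuous_id.prodMk continuous_const).continuousOn)
      intro τ hτ
      exact hSV (hmem τ ψ (le_trans (abs_le_abs_of_mem_uIcc hτ) hs) hψ)
    have hdiff : Vf (s, φ) - Vf (s, ψ) = ∫ τ in (0:ℝ)..s, (g (τ, φ) - g (τ, ψ)) := by
      rw [intervalIntegral.integral_sub hintφ hintψ]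
      have : Vf (s, φ) - Vf (s, ψ) = (Vf (s, φ) - 1) - (Vf (s, ψ) - 1) := by ring
      rw [this, h1, h2]
    rw [hdiff]
    have hb := intervalIntegral.norm_integral_le_of_norm_le_const
      (C := M * |φ - ψ|) (f := fun τ => g (τ, φ) - g (τ, ψ)) (a := (0:ℝ)) (b := s) ?_
    · rw [Real.norm_eq_abs] at hb
      calc |∫ τ in (0:ℝ)..s, (g (τ, φ) - g (τ, ψ))| ≤ M * |φ - ψ| * |s - 0| := hb
        _ = M * |φ - ψ| * |s| := by rw [sub_zero]
    · intro τ hτ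
      have hτ' : τ ∈ Set.uIcc (0:ℝ) s := Set.uIoc_subset_uIcc hτ
      have hτε : |τ| ≤ ε := le_trans (abs_le_abs_of_mem_uIcc hτ') hs
      have e1m : ((τ, φ) : ℝ × ℝ) ∈ S := hmem τ φ hτε hφ
      have e2m : ((τ, ψ) : ℝ × ℝ) ∈ S := hmem τ ψ hτε hψ
      have := hglip _ e2m _ e1m
      calc ‖g (τ, φ) - g (τ, ψ)‖ ≤ M * ‖((τ, φ) : ℝ × ℝ) - (τ, ψ)‖ := this
        _ = M * |φ - ψ| := by
            congr 1
            rw [Prod.norm_def]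
            simp [Real.norm_eq_abs]
  -- the bound on Kf
  have Kbound : ∀ s φ₀ : ℝ, |s| ≤ ε → |φ₀ - a| ≤ ε / 2 → |Kf (s, φ₀)| ≤ M * |s| := by
    intro s φ₀ hs hφ₀
    have hφ₀' : |φ₀ - a| ≤ ε := le_trans hφ₀ (by linarith)
    have hpV : ((s, φ₀) : ℝ × ℝ) ∈ V := hSV (hmem s φ₀ hs hφ₀')
    have hK : HasDerivAt (fun φ : ℝ => Vf (s, φ)) (Kf (s, φ₀)) φ₀ := by
      have hcurve : HasDerivAt (fun φ : ℝ => ((s, φ) : ℝ × ℝ)) e2 φ₀ :=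
        (hasDerivAt_const φ₀ s).prodMk (hasDerivAt_id φ₀)
      exact (hVfD _ hpV).comp_hasDerivAt_of_eq φ₀ hcurve rfl
    rw [← Real.norm_eq_abs]
    apply hK.le_of_lip' (by positivity)
    filter_upwards [Metric.closedBall_mem_nhds φ₀ (half_pos hε)] with φ hφ
    have hφφ₀ : |φ - φ₀| ≤ ε / 2 := by
      simpa [Real.dist_eq] using Metric.mem_closedBall.1 hφ
    have hφa : |φ - a| ≤ ε := by
      calc |φ - a| ≤ |φ - φ₀| + |φ₀ - a| := abs_sub_le _ _ _
        _ ≤ ε / 2 + ε / 2 := add_le_add hφφ₀ hφ₀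
        _ = ε := by ring
    calc ‖Vf (s, φ) - Vf (s, φ₀)‖ ≤ M * |φ - φ₀| * |s| := by
          rw [Real.norm_eq_abs]; exact hVlip s φ φ₀ hs hφa hφ₀'
      _ = M * |s| * ‖φ - φ₀‖ := by rw [Real.norm_eq_abs]; ring
  have Kf0 : Kf (0, a) = 0 := by
    have := Kbound 0 a (by simp; positivity) (by simp; positivity)
    simpa using this
  -- eventual facts about the curve s ↦ (s, k s)
  have hkd0 : HasDerivAt k (k' 0) 0 := hk1.self_of_nhds
  have hktend : Tendsto k (nhds 0) (nhds a) := by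
    rw [← hk0]
    exact hkd0.continuousAt
  have hev1 : ∀ᶠ s : ℝ in nhds 0, |s| ≤ ε := by
    filter_upwards [Metric.closedBall_mem_nhds (0:ℝ) hε] with s hs
    simpa [Real.dist_eq] using Metric.mem_closedBall.1 hs
  have hev2 : ∀ᶠ s : ℝ in nhds 0, |k s - a| ≤ ε / 2 := by
    filter_upwards [hktend (Metric.closedBall_mem_nhds a (half_pos hε))] with s hs
    simpa [Real.dist_eq] using hs
  have hevV : ∀ᶠ s : ℝ in nhds 0, ((s, k s) : ℝ × ℝ) ∈ V := by
    filter_upwards [hev1, hev2] with s h1 h2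
    exact hSV (hmem s (k s) h1 (le_trans h2 (by linarith)))
  -- the candidate derivatives
  set m' : ℝ → ℝ := fun s => D (G s (k s)) + Vf (s, k s) * k' s with hm'def
  set vd : ℝ → ℝ := fun s =>
    deriv D (G s (k s)) * Vf (s, k s) + k' s * Kf (s, k s) with hvddef
  set m'' : ℝ → ℝ := fun s =>
    deriv D (G s (k s)) * m' s + (vd s * k' s + Vf (s, k s) * k'' s) with hm''def
  have hsplit : ∀ c : ℝ, ((1:ℝ), c) = e1 + c • e2 := by
    intro c
    simp [he1, he2, Prod.ext_iff]
  -- first derivative of the composed map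
  have hm : ∀ᶠ s : ℝ in nhds 0, HasDerivAt (fun u => G u (k u)) (m' s) s := by
    filter_upwards [hevV, hk1] with s hV hks
    have hcurve : HasDerivAt (fun u : ℝ => ((u, k u) : ℝ × ℝ)) (1, k' s) s :=
      (hasDerivAt_id s).prodMk hks
    have h1 : HasDerivAt (fun u : ℝ => G u (k u)) (L (s, k s) ((1:ℝ), k' s)) s :=
      (hGGd _ hV).comp_hasDerivAt_of_eq s hcurve rfl
    have h2 : L (s, k s) ((1:ℝ), k' s) = m' s := by
      rw [hsplit, map_add, map_smul, P1 _ hV]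
      simp [hm'def, smul_eq_mul, mul_comm]
      rfl
    rw [h2] at h1
    exact h1
  -- derivative of s ↦ Vf (s, k s)
  have hv : ∀ᶠ s : ℝ in nhds 0, HasDerivAt (fun u => Vf (u, k u)) (vd s) s := by
    filter_upwards [hevV, hk1] with s hV hks
    have hcurve : HasDerivAt (fun u : ℝ => ((u, k u) : ℝ × ℝ)) (1, k' s) s :=
      (hasDerivAt_id s).prodMk hks
    have h1 : HasDerivAt (fun u : ℝ => Vf (u, k u))
        (((ContinuousLinearMap.apply ℝ ℝ e2).comp (fderiv ℝ L (s, k s))) ((1:ℝ), k' s)) s :=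
      (hVfD _ hV).comp_hasDerivAt_of_eq s hcurve rfl
    have h2 : ((ContinuousLinearMap.apply ℝ ℝ e2).comp (fderiv ℝ L (s, k s))) ((1:ℝ), k' s)
        = vd s := by
      rw [hsplit, map_add, map_smul]
      have h3 := P4 _ hV
      simp only [ContinuousLinearMap.comp_apply, ContinuousLinearMap.apply_apply,
        smul_eq_mul, hvddef]
      rw [h3]
    rw [h2] at h1
    exact h1
  -- second derivative of the composed map
  have hm'' : ∀ᶠ s : ℝ in nhds 0, HasDerivAt m' (m'' s) s := by
    filter_upwards [hevV, hk1, hk2, hm, hv] with s hV hks hks2 hms hvs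
    have hd1 : HasDerivAt (fun u : ℝ => D (G u (k u))) (deriv D (G s (k s)) * m' s) s :=
      (hDd (G s (k s))).comp s hms
    have hd2 : HasDerivAt (fun u : ℝ => Vf (u, k u) * k' u)
        (vd s * k' s + Vf (s, k s) * k'' s) s := hvs.mul hks2
    exact hd1.add hd2
  -- O-deviation of m''
  have hmd0 : HasDerivAt (fun u => G u (k u)) (m' 0) 0 := hm.self_of_nhds
  have hvd0 : HasDerivAt (fun u => Vf (u, k u)) (vd 0) 0 := hv.self_of_nhds
  have hm''0d : HasDerivAt m' (m'' 0) 0 := hm''.self_of_nhds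
  have ODc1 : OD (fun s => deriv D (G s (k s))) :=
    OD_of_differentiableAt (((hDD1.differentiable one_ne_zero) _).comp 0
      hmd0.differentiableAt)
  have ODm' : OD m' := OD_of_differentiableAt hm''0d.differentiableAt
  have ODv : OD (fun s => Vf (s, k s)) := OD_of_differentiableAt hvd0.differentiableAt
  have ODk' : OD k' := OD_of_differentiableAt (hk2.self_of_nhds).differentiableAt
  have ODKf : OD (fun s => Kf (s, k s)) := by
    have h0 : Kf (0, k 0) = 0 := by rw [hk0]; exact Kf0
    apply IsBigO.of_bound M
    filter_upwards [hev1, hev2] with s h1 h2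
    simp only [h0, sub_zero, Real.norm_eq_abs]
    exact Kbound s (k s) h1 h2
  have ODvd : OD vd := (ODc1.mul ODv).add (ODk'.mul ODKf)
  have ODm'' : OD m'' := (ODc1.mul ODm').add ((ODvd.mul ODk').add (ODv.mul hk3))
  -- values at 0
  have hVf0 : Vf (0, k 0) = 1 := by rw [hk0]; exact P3 a hV0
  have hG00 : G 0 (k 0) = a := by rw [hk0]; exact hG0 a
  have hm'0 : m' 0 = D a + k' 0 := by
    rw [hm'def]
    simp only [hG00, hVf0]
    ring
  refine ⟨m', m'', hm, hm'', ODm'', hm'0, ?_⟩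
  rw [hm''def]
  simp only [hvddef, hG00, hVf0, hm'0]
  have h0 : Kf (0, k 0) = 0 := by rw [hk0]; exact Kf0
  rw [h0]
  ring

theorem original_scheme_local_truncation_error
    (A B C q qA : ℝ → ℝ) (qB qC : ℝ → ℝ → ℝ) (tn : ℝ)
    (hA : ContDiff ℝ 2 A) (hB : ContDiff ℝ 2 B) (hC : ContDiff ℝ 2 C)
    (hq : ∀ t, HasDerivAt q (A (q t) + B (q t) + C (q t)) t)
    (hqA : ∀ s, HasDerivAt qA (A (qA s)) s)
    (hqA0 : qA 0 = q tn)
    (hqB : ∀ φ s, HasDerivAt (fun u => qB u φ) (B (qB s φ)) s)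
    (hqB0 : ∀ φ, qB 0 φ = φ)
    (hqC : ∀ φ s, HasDerivAt (fun u => qC u φ) (C (qC s φ)) s)
    (hqC0 : ∀ φ, qC 0 φ = φ)
    (hqAsmooth : ContDiffAt ℝ 2 qA 0)
    (hqBsmooth : ContDiffAt ℝ 2 (fun p : ℝ × ℝ => qB p.1 p.2) (0, q tn))
    (hqCsmooth : ContDiffAt ℝ 2 (fun p : ℝ × ℝ => qC p.1 p.2) (0, q tn)) :
    (fun Δt : ℝ =>
        (qC Δt (qB Δt (qA Δt)) - q (tn + Δt))
          - Δt ^ 2 / 2 *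
              (deriv A (q tn) * (-B (q tn) - C (q tn))
                + deriv B (q tn) * (A (q tn) - C (q tn))
                + deriv C (q tn) * (A (q tn) + B (q tn))))
      =O[nhds (0:ℝ)] (fun Δt : ℝ => Δt ^ 3) := by
  have hAd : ∀ x : ℝ, HasDerivAt A (deriv A x) x := fun x =>
    (hA.differentiable two_ne_zero x).hasDerivAt
  have hBd : ∀ x : ℝ, HasDerivAt B (deriv B x) x := fun x =>
    (hB.differentiable two_ne_zero x).hasDerivAt
  have hCd : ∀ x : ℝ, HasDerivAt C (deriv C x) x := fun x =>
    (hC.differentiable two_ne_zero x).hasDerivAt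
  have h21 : (2 : WithTop ℕ∞) = 1 + 1 := by norm_num
  have hA1 : ContDiff ℝ 1 (deriv A) := by
    rw [h21, contDiff_succ_iff_deriv] at hA; exact hA.2.2
  have hB1 : ContDiff ℝ 1 (deriv B) := by
    rw [h21, contDiff_succ_iff_deriv] at hB; exact hB.2.2
  have hC1 : ContDiff ℝ 1 (deriv C) := by
    rw [h21, contDiff_succ_iff_deriv] at hC; exact hC.2.2
  -- data for qA
  set qA2 : ℝ → ℝ := fun s => deriv A (qA s) * A (qA s) with hqA2def
  have hqA1ev : ∀ᶠ s : ℝ in nhds 0, HasDerivAt qA ((fun u => A (qA u)) s) s :=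
    Filter.Eventually.of_forall hqA
  have hqA2ev : ∀ᶠ s : ℝ in nhds 0, HasDerivAt (fun u => A (qA u)) (qA2 s) s :=
    Filter.Eventually.of_forall (fun s => (hAd (qA s)).comp s (hqA s))
  have hqAdiff0 : DifferentiableAt ℝ qA 0 := (hqA 0).differentiableAt
  have ODqA2 : OD qA2 := by
    apply OD_of_differentiableAt
    exact (((hA1.differentiable one_ne_zero) _).comp 0 hqAdiff0).mul
      (((hA.differentiable two_ne_zero) _).comp 0 hqAdiff0)
  -- first sub-flow: qB after qA
  obtain ⟨h1, h2, Hh1, Hh2, ODh2, h1v, h2v⟩ :=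
    key B hB qB (q tn) hqB hqB0 hqBsmooth qA (fun u => A (qA u)) qA2 hqA0 hqA1ev hqA2ev ODqA2
  -- second sub-flow: qC after (qB ∘ qA)
  obtain ⟨F1, F2, HF1, HF2, ODF2, F1v, F2v⟩ :=
    key C hC qC (q tn) hqC hqC0 hqCsmooth (fun s => qB s (qA s)) h1 h2
      (by show qB 0 (qA 0) = q tn; rw [hqB0 (qA 0), hqA0]) Hh1 Hh2 ODh2
  -- the exact solution side
  set ψ1 : ℝ → ℝ := fun s => A (q (tn + s)) + B (q (tn + s)) + C (q (tn + s)) with hψ1def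
  set ψ2 : ℝ → ℝ := fun s => deriv A (q (tn + s)) * ψ1 s + deriv B (q (tn + s)) * ψ1 s
    + deriv C (q (tn + s)) * ψ1 s with hψ2def
  have hlin : ∀ s : ℝ, HasDerivAt (fun u : ℝ => tn + u) 1 s := fun s => by
    have h := (hasDerivAt_const s tn).add (hasDerivAt_id s)
    rw [zero_add] at h
    exact h
  have hψ : ∀ s : ℝ, HasDerivAt (fun u => q (tn + u)) (ψ1 s) s := fun s => by
    have h := (hq (tn + s)).comp s (hlin s)
    rw [mul_one] at h
    exact h
  have hψ1 : ∀ s : ℝ, HasDerivAt ψ1 (ψ2 s) s := fun s => by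
    have ha : HasDerivAt (fun u => A (q (tn + u))) (deriv A (q (tn + s)) * ψ1 s) s :=
      (hAd _).comp s (hψ s)
    have hb : HasDerivAt (fun u => B (q (tn + u))) (deriv B (q (tn + s)) * ψ1 s) s :=
      (hBd _).comp s (hψ s)
    have hc : HasDerivAt (fun u => C (q (tn + u))) (deriv C (q (tn + s)) * ψ1 s) s :=
      (hCd _).comp s (hψ s)
    exact (ha.add hb).add hc
  have hqd0 : DifferentiableAt ℝ (fun u => q (tn + u)) 0 := (hψ 0).differentiableAt
  have hψ1d0 : DifferentiableAt ℝ ψ1 0 := (hψ1 0).differentiableAt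
  have ODψ2 : OD ψ2 := by
    apply OD_of_differentiableAt
    exact (((((hA1.differentiable one_ne_zero) _).comp 0 hqd0).mul hψ1d0).add
      ((((hB1.differentiable one_ne_zero) _).comp 0 hqd0).mul hψ1d0)).add
      ((((hC1.differentiable one_ne_zero) _).comp 0 hqd0).mul hψ1d0)
  -- the error function and its derivatives
  set K : ℝ := deriv A (q tn) * (-B (q tn) - C (q tn)) + deriv B (q tn) * (A (q tn) - C (q tn))
    + deriv C (q tn) * (A (q tn) + B (q tn)) with hKdef
  set E1 : ℝ → ℝ := fun s => F1 s - ψ1 s - s * K with hE1def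
  set E2 : ℝ → ℝ := fun s => F2 s - ψ2 s - K with hE2def
  have hEder : ∀ᶠ s : ℝ in nhds 0, HasDerivAt
      (fun Δt : ℝ => (qC Δt (qB Δt (qA Δt)) - q (tn + Δt)) - Δt ^ 2 / 2 * K) (E1 s) s := by
    filter_upwards [HF1] with s hF
    have hquad : HasDerivAt (fun u : ℝ => u ^ 2 / 2 * K) (s * K) s := by
      have h := ((hasDerivAt_pow 2 s).div_const 2).mul_const K
      refine h.congr_deriv ?_
      push_cast
      ring
    exact (hF.sub (hψ s)).sub hquad
  have hE1der : ∀ᶠ s : ℝ in nhds 0, HasDerivAt E1 (E2 s) s := by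
    filter_upwards [HF2] with s hF
    have hlinK : HasDerivAt (fun u : ℝ => u * K) K s := by
      simpa using (hasDerivAt_id s).mul_const K
    exact (hF.sub (hψ1 s)).sub hlinK
  have hE20 : E2 0 = 0 := by
    have hqtn0 : tn + (0:ℝ) = tn := add_zero tn
    simp only [hE2def, F2v, h2v, h1v, hψ2def, hψ1def, hqA2def, hqA0, hqtn0, hKdef]
    ring
  have hE10 : E1 0 = 0 := by
    simp only [hE1def, F1v, h1v, hψ1def, hqA0, add_zero, zero_mul, sub_zero]
    ring
  have hE23 : E2 =O[nhds (0:ℝ)] (fun s => s ^ 1) := by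
    have hOD : OD E2 := OD.sub (OD.sub ODF2 ODψ2)
      (OD_of_differentiableAt (differentiableAt_const K))
    have h : (fun s => E2 s - E2 0) =O[nhds (0:ℝ)] (fun s => s) := hOD
    simp only [hE20, sub_zero] at h
    simpa [pow_one] using h
  have hE12 : E1 =O[nhds (0:ℝ)] (fun s => s ^ 2) := by
    have := stepO hE1der hE10 hE23
    exact this.congr (fun _ => rfl) (fun x => by norm_num)
  have hE0 : ((fun Δt : ℝ =>
      (qC Δt (qB Δt (qA Δt)) - q (tn + Δt)) - Δt ^ 2 / 2 * K) : ℝ → ℝ) 0 = 0 := by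
    simp [hqC0, hqB0, hqA0]
  have hfinal := stepO hEder hE0 hE12
  exact hfinal.congr (fun _ => rfl) (fun x => by norm_num)
end

section
/- Let A, B, C : ℝ → ℝ be twice continuously differentiable, let tₙ ∈ ℝ, let q : ℝ → ℝ satisfy q′(t) = A(q(t)) + B(q(t)) + C(q(t)) for all t, and let q_B : ℝ → ℝ satisfy q_B′(s) = B(q_B(s)) with q_B(0) = q(tₙ), twice continuously differentiable near 0. Then the revised scheme's local truncation error attributable to process B, lte_B^{Rev}(Δt) = ∫₀^{Δt} B(q_B(η)) dη − ∫₀^{Δt} B(q(tₙ+η)) dη, satisfies lte_B^{Rev}(Δt) = (Δt²/2)·B′(q(tₙ))·(−A(q(tₙ)) − C(q(tₙ))) + O(Δt³) as Δt → 0. -/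
open Filter Asymptotics

/-- If `f 0 = 0`, `f` has derivative `f'` everywhere and `f' = O(x^k)` at `0`,
then `f = O(x^(k+1))` at `0`. -/
lemma aux_isBigO_of_deriv {f f' : ℝ → ℝ} {k : ℕ} (hf0 : f 0 = 0)
    (hd : ∀ x, HasDerivAt f (f' x) x)
    (h : f' =O[nhds (0:ℝ)] fun x => x ^ k) :
    f =O[nhds (0:ℝ)] fun x => x ^ (k + 1) := by
  rcases h.bound with ⟨C, hC⟩
  rcases Metric.eventually_nhds_iff.mp hC with ⟨δ, hδ, hball⟩
  refine IsBigO.of_bound |C| ?_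
  refine Metric.eventually_nhds_iff.mpr ⟨δ, hδ, ?_⟩
  intro x hx
  simp only [Real.dist_eq, sub_zero] at hx
  have habs : ∀ t ∈ Set.uIcc (0:ℝ) x, |t| ≤ |x| := by
    intro t ht
    rcases Set.mem_uIcc.mp ht with ⟨h1, h2⟩ | ⟨h1, h2⟩
    · rw [abs_of_nonneg h1]; exact h2.trans (le_abs_self x)
    · rw [abs_of_nonpos h2]
      calc -t ≤ -x := by linarith
        _ ≤ |x| := neg_le_abs x
  have key := Convex.norm_image_sub_le_of_norm_hasDerivWithin_le
    (f := f) (f' := f') (C := |C| * |x| ^ k) (s := Set.uIcc (0:ℝ) x)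
    (fun t _ => (hd t).hasDerivWithinAt) ?_ (convex_uIcc 0 x)
    (Set.left_mem_uIcc) (Set.right_mem_uIcc)
  · rw [hf0, sub_zero, sub_zero] at key
    calc ‖f x‖ ≤ |C| * |x| ^ k * ‖x‖ := key
      _ = |C| * ‖x ^ (k + 1)‖ := by
          rw [Real.norm_eq_abs, Real.norm_eq_abs, abs_pow, pow_succ]; ring
  · intro t ht
    have htδ : dist t 0 < δ := by
      simp only [Real.dist_eq, sub_zero]
      exact lt_of_le_of_lt (habs t ht) hx
    have := hball htδ
    calc ‖f' t‖ ≤ C * ‖t ^ k‖ := this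
      _ ≤ |C| * ‖t ^ k‖ := by
          exact mul_le_mul_of_nonneg_right (le_abs_self C) (norm_nonneg _)
      _ ≤ |C| * |x| ^ k := by
          rw [Real.norm_eq_abs, abs_pow]
          exact mul_le_mul_of_nonneg_left
            (pow_le_pow_left₀ (abs_nonneg t) (habs t ht) k) (abs_nonneg C)

theorem lte_B_revised_three_process
    (A B C q qB : ℝ → ℝ) (tn : ℝ)
    (hA : ContDiff ℝ 2 A) (hB : ContDiff ℝ 2 B) (hC : ContDiff ℝ 2 C)
    (hq : ∀ t, HasDerivAt q (A (q t) + B (q t) + C (q t)) t)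
    (hqB : ∀ s, HasDerivAt qB (B (qB s)) s)
    (hqB0 : qB 0 = q tn)
    (hqBsmooth : ContDiffAt ℝ 2 qB 0) :
    (fun Δt : ℝ =>
        ((∫ η in (0:ℝ)..Δt, B (qB η)) - ∫ η in (0:ℝ)..Δt, B (q (tn + η)))
          - Δt ^ 2 / 2 * (deriv B (q tn) * (-A (q tn) - C (q tn))))
      =O[nhds (0:ℝ)] (fun Δt : ℝ => Δt ^ 3) := by
  -- basic differentiability / continuity facts
  have one_le_two' : (1 : WithTop ℕ∞) ≤ 2 := by norm_num
  have hBdiff : Differentiable ℝ B := hB.differentiable (by norm_num)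
  have hBd : ∀ y, HasDerivAt B (deriv B y) y := fun y => (hBdiff y).hasDerivAt
  have hB' : ContDiff ℝ 1 (deriv B) := by
    have h2 : ContDiff ℝ ((1:ℕ) + 1) B := by exact_mod_cast hB
    exact (contDiff_succ_iff_deriv.mp h2).2.2
  have hB'diff : Differentiable ℝ (deriv B) := hB'.differentiable one_ne_zero
  have hB'cont : Continuous (deriv B) := hB'.continuous
  have hqdiff : Differentiable ℝ q := fun t => (hq t).differentiableAt
  have hqBdiff : Differentiable ℝ qB := fun s => (hqB s).differentiableAt
  have hqcont : Continuous q := hqdiff.continuous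
  have hqBcont : Continuous qB := hqBdiff.continuous
  -- shifted exact solution
  have hqs : ∀ η : ℝ, HasDerivAt (fun η => q (tn + η))
      (A (q (tn + η)) + B (q (tn + η)) + C (q (tn + η))) η := by
    intro η
    have h1 : HasDerivAt (fun η : ℝ => tn + η) 1 η := (hasDerivAt_id η).const_add tn
    have := (hq (tn + η)).comp η h1
    simpa [Function.comp_def] using this
  -- the integrand difference g and its derivative G
  set g : ℝ → ℝ := fun η => B (qB η) - B (q (tn + η)) with hg_def
  set G : ℝ → ℝ := fun η => deriv B (qB η) * B (qB η)
      - deriv B (q (tn + η)) * (A (q (tn + η)) + B (q (tn + η)) + C (q (tn + η))) with hG_def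
  set c : ℝ := deriv B (q tn) * (-A (q tn) - C (q tn)) with hc_def
  have hg : ∀ η, HasDerivAt g (G η) η := by
    intro η
    exact ((hBd (qB η)).comp η (hqB η)).sub ((hBd (q (tn + η))).comp η (hqs η))
  have hgcont : Continuous g := by
    exact ((hB.continuous.comp hqBcont).sub
      (hB.continuous.comp (hqcont.comp (continuous_const.add continuous_id))))
  have hG0 : G 0 = c := by
    simp only [hG_def, hc_def, hqB0, add_zero]
    ring
  have hg0 : g 0 = 0 := by simp [hg_def, hqB0]
  -- G is differentiable at 0
  have hGdiff : DifferentiableAt ℝ G 0 := by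
    have hqs0 : DifferentiableAt ℝ (fun η : ℝ => q (tn + η)) 0 := (hqs 0).differentiableAt
    have h1 : DifferentiableAt ℝ (fun η => deriv B (qB η)) 0 :=
      (hB'diff _).comp 0 (hqBdiff 0)
    have h2 : DifferentiableAt ℝ (fun η => B (qB η)) 0 := (hBdiff _).comp 0 (hqBdiff 0)
    have h3 : DifferentiableAt ℝ (fun η => deriv B (q (tn + η))) 0 :=
      (hB'diff _).comp 0 hqs0
    have hAd : DifferentiableAt ℝ (fun η => A (q (tn + η))) 0 :=
      ((hA.differentiable (by norm_num)) _).comp 0 hqs0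
    have hBd2 : DifferentiableAt ℝ (fun η => B (q (tn + η))) 0 := (hBdiff _).comp 0 hqs0
    have hCd : DifferentiableAt ℝ (fun η => C (q (tn + η))) 0 :=
      ((hC.differentiable (by norm_num)) _).comp 0 hqs0
    exact (h1.mul h2).sub (h3.mul ((hAd.add hBd2).add hCd))
  -- ψ = g - c·η is O(η²)
  have hψ : (fun η => g η - c * η) =O[nhds (0:ℝ)] fun η => η ^ 2 := by
    have hψ' : (fun η => G η - c) =O[nhds (0:ℝ)] fun η => η ^ 1 := by
      have h1 : (fun η => G η - G 0) =O[nhds (0:ℝ)] fun η => η - 0 := hGdiff.isBigO_sub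
      have h2 : (fun η : ℝ => η - 0) = fun η : ℝ => η ^ 1 := by funext η; ring
      rw [hG0, h2] at h1
      exact h1
    have hψd : ∀ x, HasDerivAt (fun η => g η - c * η) (G x - c) x := by
      intro x
      have : HasDerivAt (fun η : ℝ => c * η) c x := by
        simpa using (hasDerivAt_id x).const_mul c
      exact (hg x).sub this
    exact aux_isBigO_of_deriv (by simp [hg0]) hψd hψ'
  -- T(Δt) = ∫₀^{Δt} g - c Δt²/2 is O(Δt³)
  have hT : (fun Δt => (∫ η in (0:ℝ)..Δt, g η) - c * Δt ^ 2 / 2)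
      =O[nhds (0:ℝ)] fun Δt => Δt ^ 3 := by
    have hTd : ∀ x : ℝ, HasDerivAt (fun Δt => (∫ η in (0:ℝ)..Δt, g η) - c * Δt ^ 2 / 2)
        (g x - c * x) x := by
      intro x
      have h1 : HasDerivAt (fun Δt => ∫ η in (0:ℝ)..Δt, g η) (g x) x :=
        (hgcont.integral_hasStrictDerivAt 0 x).hasDerivAt
      have h2 : HasDerivAt (fun Δt : ℝ => c * Δt ^ 2 / 2) (c * x) x := by
        have := ((hasDerivAt_pow 2 x).const_mul c).div_const 2
        simpa using this.congr_deriv (by ring)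
      exact h1.sub h2
    have := aux_isBigO_of_deriv (f := fun Δt => (∫ η in (0:ℝ)..Δt, g η) - c * Δt ^ 2 / 2)
      (f' := fun x => g x - c * x) (k := 2) (by simp) hTd hψ
    exact this
  -- identify the target function with T
  have heq : (fun Δt : ℝ =>
      ((∫ η in (0:ℝ)..Δt, B (qB η)) - ∫ η in (0:ℝ)..Δt, B (q (tn + η)))
        - Δt ^ 2 / 2 * (deriv B (q tn) * (-A (q tn) - C (q tn))))
      = fun Δt => (∫ η in (0:ℝ)..Δt, g η) - c * Δt ^ 2 / 2 := by
    funext Δt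
    have hint1 : IntervalIntegrable (fun η => B (qB η)) MeasureTheory.volume 0 Δt :=
      (hB.continuous.comp hqBcont).intervalIntegrable 0 Δt
    have hint2 : IntervalIntegrable (fun η => B (q (tn + η))) MeasureTheory.volume 0 Δt :=
      (hB.continuous.comp (hqcont.comp (continuous_const.add continuous_id))).intervalIntegrable 0 Δt
    rw [hg_def]
    rw [intervalIntegral.integral_sub hint1 hint2]
    ring
  rw [heq]
  exact hT
end

section
/- Let A, B, C : ℝ → ℝ be twice continuously differentiable, let tₙ ∈ ℝ, let q : ℝ → ℝ satisfy q′(t) = A(q(t)) + B(q(t)) + C(q(t)) for all t. Let q_A, q_B : ℝ → ℝ satisfy q_A′(s) = A(q_A(s)), q_B′(s) = B(q_B(s)) with q_A(0) = q_B(0) = q(tₙ), and let q_C : ℝ → ℝ → ℝ be the two-parameter flow of C (for every φ, ∂_s q_C(s, φ) = C(q_C(s, φ)) and q_C(0, φ) = φ), all with sufficient smoothness near the relevant points. Then the revised scheme's local truncation error attributable to process C, lte_C^{Rev}(Δt) = ∫₀^{Δt} C(q_C(η, q(tₙ) + (q_A(Δt) − q(tₙ)) + (q_B(Δt) − q(tₙ))))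 dη − ∫₀^{Δt} C(q(tₙ+η)) dη, satisfies lte_C^{Rev}(Δt) = (Δt²/2)·C′(q(tₙ))·(A(q(tₙ)) + B(q(tₙ))) + O(Δt³) as Δt → 0. -/
open Filter Asymptotics Metric Set

lemma key1 (f : ℝ → ℝ) (x₀ : ℝ) (hf : ContDiffAt ℝ 2 f x₀) :
    ∃ r > 0, ∃ K ≥ (0:ℝ), ∀ x y : ℝ, |x - x₀| ≤ r → |y - x₀| ≤ r →
      |f x - f y - deriv f x₀ * (x - y)| ≤ K * max |x - x₀| |y - x₀| * |x - y| := by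
  have h1 : ContDiffAt ℝ 1 (deriv f) x₀ := by
    have h := (hf.fderiv_right (m := 1) (by norm_num)).clm_apply
      (contDiffAt_const (c := (1:ℝ)))
    have : (fun x => fderiv ℝ f x 1) = deriv f := funext fun x => fderiv_apply_one_eq_deriv
    rwa [this] at h
  obtain ⟨K, t, ht, hlip⟩ := h1.exists_lipschitzOnWith
  have hd : ∀ᶠ z in nhds x₀, DifferentiableAt ℝ f z := by
    filter_upwards [hf.eventually (by norm_num)] with z hz
    exact hz.differentiableAt (by norm_num)
  obtain ⟨ρ, hρ, hball⟩ := Metric.mem_nhds_iff.1 (Filter.inter_mem ht hd)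
  refine ⟨ρ/2, by linarith, K, K.coe_nonneg, fun x y hx hy => ?_⟩
  set d := deriv f x₀ with hdd
  set m := max |x - x₀| |y - x₀| with hm
  have hm0 : 0 ≤ m := le_trans (abs_nonneg _) (le_max_left _ _)
  have hsub : uIcc x y ⊆ Metric.ball x₀ ρ := by
    intro z hz
    rw [Set.mem_uIcc] at hz
    have h1 := le_abs_self (x - x₀); have h2 := neg_abs_le (x - x₀)
    have h3 := le_abs_self (y - x₀); have h4 := neg_abs_le (y - x₀)
    have : |z - x₀| < ρ := by
      rw [abs_lt]
      rcases hz with ⟨a1, a2⟩ | ⟨a1, a2⟩ <;> constructor <;> linarith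
    simpa [Metric.mem_ball, Real.dist_eq] using this
  have hmem : ∀ z ∈ uIcc x y, |z - x₀| ≤ m := by
    intro z hz
    rw [Set.mem_uIcc] at hz
    have h1 := le_abs_self (x - x₀); have h2 := neg_abs_le (x - x₀)
    have h3 := le_abs_self (y - x₀); have h4 := neg_abs_le (y - x₀)
    have h5 : |x - x₀| ≤ m := le_max_left _ _
    have h6 : |y - x₀| ≤ m := le_max_right _ _
    rw [abs_le]
    rcases hz with ⟨a1, a2⟩ | ⟨a1, a2⟩ <;> constructor <;> linarith
  -- g z := f z - d * z
  have key : ‖(fun z => f z - d * z) x - (fun z => f z - d * z) y‖ ≤ (K * m) * ‖x - y‖ := by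
    apply Convex.norm_image_sub_le_of_norm_hasDerivWithin_le
      (f' := fun z => deriv f z - d) (fun z hz => ?_) (fun z hz => ?_)
      (convex_uIcc x y) (Set.right_mem_uIcc) (Set.left_mem_uIcc)
    · have hdz : DifferentiableAt ℝ f z := (hball (hsub hz)).2
      exact ((hdz.hasDerivAt).sub ((hasDerivAt_id z).const_mul d)).hasDerivWithinAt.congr_deriv
        (by ring)
    · have hz1 : z ∈ t := (hball (hsub hz)).1
      have hx0 : x₀ ∈ t := (hball (by simpa [Metric.mem_ball] using hρ : x₀ ∈ Metric.ball x₀ ρ)).1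
      have := hlip.dist_le_mul z hz1 x₀ hx0
      rw [Real.dist_eq, Real.dist_eq] at this
      calc ‖deriv f z - d‖ = |deriv f z - deriv f x₀| := by rw [Real.norm_eq_abs, hdd]
        _ ≤ K * |z - x₀| := this
        _ ≤ K * m := by
            exact mul_le_mul_of_nonneg_left (hmem z hz) K.coe_nonneg
  have := key
  simp only [Real.norm_eq_abs] at this
  calc |f x - f y - d * (x - y)| = |(f x - d * x) - (f y - d * y)| := by ring_nf
    _ ≤ K * m * |x - y| := this
    _ = K * m * |x - y| := rfl

lemma key2 (f : ℝ × ℝ → ℝ) (p₀ : ℝ × ℝ) (hf : ContDiffAt ℝ 2 f p₀) :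
    ∃ r > 0, ∃ K ≥ (0:ℝ), ∀ p : ℝ × ℝ, ‖p - p₀‖ ≤ r →
      |f p - f p₀ - fderiv ℝ f p₀ (p - p₀)| ≤ K * ‖p - p₀‖ ^ 2 := by
  have h1 : ContDiffAt ℝ 1 (fderiv ℝ f) p₀ := hf.fderiv_right (m := 1) (by norm_num)
  obtain ⟨K, t, ht, hlip⟩ := h1.exists_lipschitzOnWith
  have hd : ∀ᶠ z in nhds p₀, DifferentiableAt ℝ f z := by
    filter_upwards [hf.eventually (by norm_num)] with z hz
    exact hz.differentiableAt (by norm_num)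
  obtain ⟨ρ, hρ, hball⟩ := Metric.mem_nhds_iff.1 (Filter.inter_mem ht hd)
  refine ⟨ρ/2, by linarith, K, K.coe_nonneg, fun p hp => ?_⟩
  set φ := fderiv ℝ f p₀ with hφ
  have hsub : Metric.closedBall p₀ ‖p - p₀‖ ⊆ Metric.ball p₀ ρ := fun z hz => by
    rw [Metric.mem_closedBall] at hz
    rw [Metric.mem_ball]
    calc dist z p₀ ≤ ‖p - p₀‖ := hz
      _ ≤ ρ/2 := hp
      _ < ρ := by linarith
  have hmemp : p ∈ Metric.closedBall p₀ ‖p - p₀‖ := by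
    simp [Metric.mem_closedBall, dist_eq_norm]
  have hmem0 : p₀ ∈ Metric.closedBall p₀ ‖p - p₀‖ := by
    simp [Metric.mem_closedBall, norm_nonneg]
  have key : ‖f p - f p₀ - φ (p - p₀)‖ ≤ (K * ‖p - p₀‖) * ‖p - p₀‖ := by
    apply Convex.norm_image_sub_le_of_norm_hasFDerivWithin_le'
      (f' := fderiv ℝ f) (fun z hz => ((hball (hsub hz)).2.hasFDerivAt).hasFDerivWithinAt)
      (fun z hz => ?_) (convex_closedBall _ _) hmem0 hmemp
    have hz1 : z ∈ t := (hball (hsub hz)).1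
    have hx0 : p₀ ∈ t := (hball (Metric.mem_ball_self hρ)).1
    have h2 := hlip.dist_le_mul z hz1 p₀ hx0
    rw [dist_eq_norm] at h2
    calc ‖fderiv ℝ f z - φ‖ ≤ K * dist z p₀ := h2
      _ ≤ K * ‖p - p₀‖ := mul_le_mul_of_nonneg_left
          (by simpa [Metric.mem_closedBall] using hz) K.coe_nonneg
  calc |f p - f p₀ - φ (p - p₀)| ≤ K * ‖p - p₀‖ * ‖p - p₀‖ := by
        simpa [Real.norm_eq_abs] using key
    _ = K * ‖p - p₀‖ ^ 2 := by ring

set_option maxHeartbeats 2000000 in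
theorem lte_C_revised_three_process
    (A B C q qA qB : ℝ → ℝ) (qC : ℝ → ℝ → ℝ) (tn : ℝ)
    (hA : ContDiff ℝ 2 A) (hB : ContDiff ℝ 2 B) (hC : ContDiff ℝ 2 C)
    (hq : ∀ t, HasDerivAt q (A (q t) + B (q t) + C (q t)) t)
    (hqA : ∀ s, HasDerivAt qA (A (qA s)) s)
    (hqB : ∀ s, HasDerivAt qB (B (qB s)) s)
    (hqA0 : qA 0 = q tn) (hqB0 : qB 0 = q tn)
    (hqC : ∀ φ s, HasDerivAt (fun u => qC u φ) (C (qC s φ)) s)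
    (hqC0 : ∀ φ, qC 0 φ = φ)
    (hqAsmooth : ContDiffAt ℝ 2 qA 0)
    (hqBsmooth : ContDiffAt ℝ 2 qB 0)
    (hqCsmooth : ContDiffAt ℝ 2 (fun p : ℝ × ℝ => qC p.1 p.2) (0, q tn)) :
    (fun Δt : ℝ =>
        ((∫ η in (0:ℝ)..Δt,
              C (qC η (q tn + (qA Δt - q tn) + (qB Δt - q tn))))
            - ∫ η in (0:ℝ)..Δt, C (q (tn + η)))
          - Δt ^ 2 / 2 * (deriv C (q tn) * (A (q tn) + B (q tn))))
      =O[nhds (0:ℝ)] (fun Δt : ℝ => Δt ^ 3) := by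
  set a := q tn with ha
  set α := A a with hα
  set β := B a with hβ
  set γ := C a with hγ
  set c := deriv C a with hc
  set v := α + β with hv
  -- q is C²
  have hqdiff : Differentiable ℝ q := fun t => (hq t).differentiableAt
  have hderivq : deriv q = fun t => A (q t) + B (q t) + C (q t) :=
    funext fun t => (hq t).deriv
  have hq1 : ContDiff ℝ 1 q := contDiff_one_iff_deriv.2 ⟨hqdiff, by
    rw [hderivq]
    exact ((hA.continuous.comp hqdiff.continuous).add
      (hB.continuous.comp hqdiff.continuous)).add (hC.continuous.comp hqdiff.continuous)⟩
  have hq2 : ContDiff ℝ 2 q := by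
    rw [show (2 : WithTop ℕ∞) = 1 + 1 by norm_num, contDiff_succ_iff_deriv]
    refine ⟨hqdiff, by simp, ?_⟩
    rw [hderivq]
    exact (((hA.of_le one_le_two).comp hq1).add ((hB.of_le one_le_two).comp hq1)).add
      ((hC.of_le one_le_two).comp hq1)
  -- base derivatives
  have dA : deriv qA 0 = α := by rw [(hqA 0).deriv, hqA0]
  have dB : deriv qB 0 = β := by rw [(hqB 0).deriv, hqB0]
  have dq : deriv q tn = α + β + γ := (hq tn).deriv
  -- fderiv of Qc at (0,a)
  set Qc : ℝ × ℝ → ℝ := fun p => qC p.1 p.2 with hQc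
  have hdiffQ : DifferentiableAt ℝ Qc (0, a) := hqCsmooth.differentiableAt (by norm_num)
  set L := fderiv ℝ Qc (0, a) with hL
  have hL1 : L (1, 0) = γ := by
    have h1 : HasDerivAt (fun s : ℝ => Qc (s, a)) (L (1, 0)) 0 :=
      by have h := hdiffQ.hasFDerivAt.comp_hasDerivAt (0:ℝ) ((hasDerivAt_id (0:ℝ)).prodMk (hasDerivAt_const (0:ℝ) a)); exact h
    have h2 : HasDerivAt (fun u => qC u a) (C (qC 0 a)) 0 := hqC a 0
    have := h1.unique h2
    rw [this, hqC0]
  have hL2 : L (0, 1) = 1 := by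
    have h1 : HasDerivAt (fun φ : ℝ => Qc (0, φ)) (L (0, 1)) a :=
      hdiffQ.hasFDerivAt.comp_hasDerivAt a ((hasDerivAt_const a (0:ℝ)).prodMk (hasDerivAt_id a))
    have h1' : HasDerivAt (fun φ : ℝ => φ) (L (0, 1)) a := by
      have : (fun φ : ℝ => Qc (0, φ)) = fun φ : ℝ => φ := funext fun φ => hqC0 φ
      rwa [this] at h1
    exact h1'.unique (hasDerivAt_id a)
  have hLv : ∀ w : ℝ × ℝ, L w = γ * w.1 + w.2 := by
    intro w
    have hw : w = w.1 • ((1:ℝ), (0:ℝ)) + w.2 • ((0:ℝ), (1:ℝ)) := by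
      ext <;> simp
    conv_lhs => rw [hw]
    rw [map_add, map_smul, map_smul, hL1, hL2, smul_eq_mul, smul_eq_mul]
    ring
  -- key estimates
  obtain ⟨rA, hrA, KA, hKA, estA⟩ := key1 qA 0 hqAsmooth
  obtain ⟨rB, hrB, KB, hKB, estB⟩ := key1 qB 0 hqBsmooth
  obtain ⟨rq, hrq, Kq, hKq, estq⟩ := key1 q tn hq2.contDiffAt
  obtain ⟨rC, hrC, KC, hKC, estC⟩ := key1 C a hC.contDiffAt
  obtain ⟨r2, hr2, K2, hK2, est2⟩ := key2 Qc (0, a) hqCsmooth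
  -- constants
  set Mψ : ℝ := |v| + KA + KB with hMψ
  have hMψ0 : 0 ≤ Mψ := by positivity
  set M1 : ℝ := max 1 Mψ with hM1
  have hM10 : (1:ℝ) ≤ M1 := le_max_left _ _
  have hM1pos : (0:ℝ) < M1 := lt_of_lt_of_le one_pos hM10
  set E1 : ℝ := K2 * M1 ^ 2 + (KA + KB) with hE1
  have hE10 : 0 ≤ E1 := by positivity
  set E2 : ℝ := E1 + Kq with hE2
  have hE20 : 0 ≤ E2 := by positivity
  set Mx : ℝ := |γ| + Mψ + E1 + 1 with hMx
  have hMx0 : (0:ℝ) < Mx := by positivity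
  set My : ℝ := |v| + |γ| + Kq + 1 with hMy
  have hMy0 : (0:ℝ) < My := by positivity
  set Mxy : ℝ := 2 * |v| + E2 with hMxy
  have hMxy0 : 0 ≤ Mxy := by positivity
  set Mz : ℝ := max Mx My with hMz
  set Kst : ℝ := KC * Mz * Mxy + |c| * E2 with hKst
  have hKst0 : 0 ≤ Kst := by positivity
  set r : ℝ := min 1 (min rA (min rB (min rq (min (r2 / M1) (min (rC / Mx) (rC / My))))))
    with hr
  have hrpos : 0 < r := by
    refine lt_min one_pos (lt_min hrA (lt_min hrB (lt_min hrq (lt_min ?_ (lt_min ?_ ?_)))))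
    · exact div_pos hr2 hM1pos
    · exact div_pos hrC hMx0
    · exact div_pos hrC hMy0
  -- the pointwise estimate
  have hψest : ∀ Δt : ℝ, |Δt| ≤ r →
      |(a + (qA Δt - a) + (qB Δt - a)) - a - Δt * v| ≤ (KA + KB) * Δt ^ 2 := by
    intro Δt hΔt
    have h1 : |Δt - 0| ≤ rA := by
      rw [sub_zero]; exact le_trans hΔt (le_trans (min_le_right _ _) (le_trans (min_le_left _ _) le_rfl))
    have h2 : |Δt - 0| ≤ rB := by
      rw [sub_zero]
      exact le_trans hΔt (le_trans (min_le_right _ _)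
        (le_trans (min_le_right _ _) (min_le_left _ _)))
    have h0A : |(0:ℝ) - 0| ≤ rA := by simpa using hrA.le
    have h0B : |(0:ℝ) - 0| ≤ rB := by simpa using hrB.le
    have eA := estA Δt 0 h1 h0A
    have eB := estB Δt 0 h2 h0B
    rw [dA] at eA; rw [dB] at eB
    simp only [sub_zero, abs_zero] at eA eB
    rw [hqA0] at eA
    rw [hqB0] at eB
    have hmaxA : max |Δt| 0 = |Δt| := max_eq_left (abs_nonneg _)
    rw [hmaxA] at eA eB
    have hsq : |Δt| * |Δt| = Δt ^ 2 := by rw [← abs_mul, abs_mul_self]; ring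
    have : |(a + (qA Δt - a) + (qB Δt - a)) - a - Δt * v| ≤
        |qA Δt - a - α * Δt| + |qB Δt - a - β * Δt| := by
      have : (a + (qA Δt - a) + (qB Δt - a)) - a - Δt * v =
          (qA Δt - a - α * Δt) + (qB Δt - a - β * Δt) := by rw [hv]; ring
      rw [this]; exact abs_add_le _ _
    calc |(a + (qA Δt - a) + (qB Δt - a)) - a - Δt * v|
        ≤ |qA Δt - a - α * Δt| + |qB Δt - a - β * Δt| := this
      _ ≤ KA * (|Δt| * |Δt|) + KB * (|Δt| * |Δt|) := by
          rw [← mul_assoc, ← mul_assoc]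
          exact add_le_add eA eB
      _ = (KA + KB) * Δt ^ 2 := by rw [hsq]; ring
  -- distance of ψ from a
  have habsle : ∀ Δt : ℝ, |Δt| ≤ r → Δt ^ 2 ≤ |Δt| := by
    intro Δt hΔt
    have h1 : |Δt| ≤ 1 := le_trans hΔt (min_le_left _ _)
    have h2 : Δt ^ 2 = |Δt| * |Δt| := by rw [← abs_mul, abs_mul_self, sq]
    have h3 := mul_le_mul_of_nonneg_left h1 (abs_nonneg Δt)
    rw [mul_one] at h3
    linarith
  have hψd : ∀ Δt : ℝ, |Δt| ≤ r →
      |(a + (qA Δt - a) + (qB Δt - a)) - a| ≤ Mψ * |Δt| := by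
    intro Δt hΔt
    have h1 := hψest Δt hΔt
    have h2 := habsle Δt hΔt
    have h3 : |(a + (qA Δt - a) + (qB Δt - a)) - a| ≤
        |(a + (qA Δt - a) + (qB Δt - a)) - a - Δt * v| + |Δt * v| := by
      have : (a + (qA Δt - a) + (qB Δt - a)) - a =
          ((a + (qA Δt - a) + (qB Δt - a)) - a - Δt * v) + Δt * v := by ring
      conv_lhs => rw [this]
      exact abs_add_le ((a + (qA Δt - a) + (qB Δt - a)) - a - Δt * v) (Δt * v)
    have h4 : |Δt * v| = |Δt| * |v| := abs_mul _ _
    rw [hMψ]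
    have h5 := mul_le_mul_of_nonneg_left h2 (by linarith : (0:ℝ) ≤ KA + KB)
    have h6 : |Δt| * |v| = |v| * |Δt| := mul_comm _ _
    linarith
  -- the key pointwise estimate
  have key : ∀ Δt : ℝ, |Δt| ≤ r → ∀ η : ℝ, |η| ≤ |Δt| →
      |C (qC η (a + (qA Δt - a) + (qB Δt - a))) - C (q (tn + η)) - c * ((Δt - η) * v)|
        ≤ Kst * Δt ^ 2 := by
    intro Δt hΔt η hη
    set ψ : ℝ := a + (qA Δt - a) + (qB Δt - a) with hψdef
    set x : ℝ := qC η ψ with hx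
    set y : ℝ := q (tn + η) with hy
    have hΔ1 : |Δt| ≤ 1 := le_trans hΔt (min_le_left _ _)
    have hΔrq : |Δt| ≤ rq := le_trans hΔt (le_trans (min_le_right _ _)
      (le_trans (min_le_right _ _) (le_trans (min_le_right _ _) (min_le_left _ _))))
    have hΔr2 : |Δt| ≤ r2 / M1 := le_trans hΔt (le_trans (min_le_right _ _)
      (le_trans (min_le_right _ _) (le_trans (min_le_right _ _)
        (le_trans (min_le_right _ _) (min_le_left _ _)))))
    have hΔrCx : |Δt| ≤ rC / Mx := le_trans hΔt (le_trans (min_le_right _ _)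
      (le_trans (min_le_right _ _) (le_trans (min_le_right _ _)
        (le_trans (min_le_right _ _) (le_trans (min_le_right _ _) (min_le_left _ _))))))
    have hΔrCy : |Δt| ≤ rC / My := le_trans hΔt (le_trans (min_le_right _ _)
      (le_trans (min_le_right _ _) (le_trans (min_le_right _ _)
        (le_trans (min_le_right _ _) (le_trans (min_le_right _ _) (min_le_right _ _))))))
    have hsqΔ : |Δt| * |Δt| = Δt ^ 2 := by rw [← abs_mul, abs_mul_self, sq]
    -- ψ bounds
    have hψ1 : |ψ - a - Δt * v| ≤ (KA + KB) * Δt ^ 2 := hψest Δt hΔt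
    have hψ2 : |ψ - a| ≤ Mψ * |Δt| := hψd Δt hΔt
    -- qC expansion
    have hpnorm : ‖((η, ψ) : ℝ × ℝ) - (0, a)‖ ≤ M1 * |Δt| := by
      have h1 : ((η, ψ) : ℝ × ℝ) - (0, a) = (η, ψ - a) := by simp
      rw [h1]
      have h2 : ‖((η, ψ - a) : ℝ × ℝ)‖ = max |η| |ψ - a| := by
        simp [Prod.norm_def, Real.norm_eq_abs]
      rw [h2]
      apply max_le
      · calc |η| ≤ |Δt| := hη
          _ = 1 * |Δt| := (one_mul _).symm
          _ ≤ M1 * |Δt| := mul_le_mul_of_nonneg_right hM10 (abs_nonneg _)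
      · calc |ψ - a| ≤ Mψ * |Δt| := hψ2
          _ ≤ M1 * |Δt| := mul_le_mul_of_nonneg_right (le_max_right _ _) (abs_nonneg _)
    have hpr2 : ‖((η, ψ) : ℝ × ℝ) - (0, a)‖ ≤ r2 := by
      refine le_trans hpnorm ?_
      rw [mul_comm]
      exact (le_div_iff₀ hM1pos).1 hΔr2
    have e2 := est2 ((η, ψ) : ℝ × ℝ) hpr2
    have hQc1 : Qc ((η, ψ) : ℝ × ℝ) = x := rfl
    have hQc2 : Qc ((0, a) : ℝ × ℝ) = a := hqC0 a
    have hLval : (fderiv ℝ Qc (0, a)) (((η, ψ) : ℝ × ℝ) - (0, a)) = γ * η + (ψ - a) := by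
      rw [← hL, hLv]
      simp
    rw [hQc1, hQc2, hLval] at e2
    have hnormsq : ‖((η, ψ) : ℝ × ℝ) - (0, a)‖ ^ 2 ≤ M1 ^ 2 * Δt ^ 2 := by
      have := pow_le_pow_left₀ (norm_nonneg _) hpnorm 2
      calc ‖((η, ψ) : ℝ × ℝ) - (0, a)‖ ^ 2 ≤ (M1 * |Δt|) ^ 2 := this
        _ = M1 ^ 2 * (|Δt| * |Δt|) := by ring
        _ = M1 ^ 2 * Δt ^ 2 := by rw [hsqΔ]
    have ex2 : |x - a - (γ * η + (ψ - a))| ≤ K2 * M1 ^ 2 * Δt ^ 2 := by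
      calc |x - a - (γ * η + (ψ - a))| ≤ K2 * ‖((η, ψ) : ℝ × ℝ) - (0, a)‖ ^ 2 := e2
        _ ≤ K2 * (M1 ^ 2 * Δt ^ 2) := mul_le_mul_of_nonneg_left hnormsq hK2
        _ = K2 * M1 ^ 2 * Δt ^ 2 := by ring
    have ex : |x - a - γ * η - Δt * v| ≤ E1 * Δt ^ 2 := by
      have hid : x - a - γ * η - Δt * v =
          (x - a - (γ * η + (ψ - a))) + (ψ - a - Δt * v) := by ring
      rw [hid, hE1]
      calc |(x - a - (γ * η + (ψ - a))) + (ψ - a - Δt * v)|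
          ≤ |x - a - (γ * η + (ψ - a))| + |ψ - a - Δt * v| := abs_add_le _ _
        _ ≤ K2 * M1 ^ 2 * Δt ^ 2 + (KA + KB) * Δt ^ 2 := add_le_add ex2 hψ1
        _ = (K2 * M1 ^ 2 + (KA + KB)) * Δt ^ 2 := by ring
    -- q expansion
    have ey : |y - a - (α + β + γ) * η| ≤ Kq * Δt ^ 2 := by
      have h1 : |tn + η - tn| ≤ rq := by
        rw [show tn + η - tn = η by ring]; exact le_trans hη hΔrq
      have h2 : |tn - tn| ≤ rq := by simpa using hrq.le
      have := estq (tn + η) tn h1 h2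
      rw [dq] at this
      simp only [show tn + η - tn = η by ring, sub_self, abs_zero] at this
      have hmax : max |η| 0 = |η| := max_eq_left (abs_nonneg _)
      rw [hmax] at this
      have hηsq : |η| * |η| ≤ Δt ^ 2 := by
        calc |η| * |η| ≤ |Δt| * |Δt| :=
              mul_le_mul hη hη (abs_nonneg _) (abs_nonneg _)
          _ = Δt ^ 2 := hsqΔ
      calc |y - a - (α + β + γ) * η| = |q (tn + η) - q tn - (α + β + γ) * (tn + η - tn)| := by
            rw [hy, ← ha, show tn + η - tn = η by ring]
        _ ≤ Kq * |η| * |η| := by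
            have h3 := this
            calc |q (tn + η) - q tn - (α + β + γ) * (tn + η - tn)|
                = |q (tn + η) - q tn - (α + β + γ) * η| := by rw [show tn + η - tn = η by ring]
              _ ≤ Kq * |η| * |η| := by convert this using 2
        _ ≤ Kq * Δt ^ 2 := by
            rw [mul_assoc]
            exact mul_le_mul_of_nonneg_left hηsq hKq
    -- x - y
    have exy : |x - y - (Δt - η) * v| ≤ E2 * Δt ^ 2 := by
      have hid : x - y - (Δt - η) * v =
          (x - a - γ * η - Δt * v) - (y - a - (α + β + γ) * η) := by rw [hv]; ring
      rw [hid, hE2]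
      calc |(x - a - γ * η - Δt * v) - (y - a - (α + β + γ) * η)|
          ≤ |x - a - γ * η - Δt * v| + |y - a - (α + β + γ) * η| := abs_sub _ _
        _ ≤ E1 * Δt ^ 2 + Kq * Δt ^ 2 := add_le_add ex ey
        _ = (E1 + Kq) * Δt ^ 2 := by ring
    have hΔsq : Δt ^ 2 ≤ |Δt| := habsle Δt hΔt
    have hxa : |x - a| ≤ Mx * |Δt| := by
      have h1 : |x - a| ≤ |x - a - γ * η - Δt * v| + |γ| * |η| + |Δt| * |v| := by
        have hid : x - a = (x - a - γ * η - Δt * v) + γ * η + Δt * v := by ring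
        calc |x - a| = |(x - a - γ * η - Δt * v) + γ * η + Δt * v| := by rw [← hid]
          _ ≤ |x - a - γ * η - Δt * v| + |γ * η| + |Δt * v| := abs_add_three _ _ _
          _ = |x - a - γ * η - Δt * v| + |γ| * |η| + |Δt| * |v| := by
              rw [abs_mul, abs_mul]
        
      have hvMψ : |v| ≤ Mψ := by rw [hMψ]; linarith
      rw [hMx]
      have p1 := mul_le_mul_of_nonneg_left hΔsq hE10
      have p2 := mul_le_mul_of_nonneg_left hη (abs_nonneg γ)
      have p3 := mul_le_mul_of_nonneg_left hvMψ (abs_nonneg Δt)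
      have p4 : (0:ℝ) ≤ |Δt| := abs_nonneg Δt
      linarith
    have hya : |y - a| ≤ My * |Δt| := by
      have h1 : |y - a| ≤ |y - a - (α + β + γ) * η| + |α + β + γ| * |η| := by
        have hid : y - a = (y - a - (α + β + γ) * η) + (α + β + γ) * η := by ring
        calc |y - a| = |(y - a - (α + β + γ) * η) + (α + β + γ) * η| := by rw [← hid]
          _ ≤ |y - a - (α + β + γ) * η| + |(α + β + γ) * η| := abs_add_le _ _
          _ = |y - a - (α + β + γ) * η| + |α + β + γ| * |η| := by rw [abs_mul]
      have h2 : |α + β + γ| ≤ |v| + |γ| := by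
        rw [hv]
        calc |α + β + γ| ≤ |α + β| + |γ| := abs_add_le _ _
          _ = |v| + |γ| := by rw [hv]
      rw [hMy]
      have p1 := mul_le_mul_of_nonneg_left hΔsq hKq
      have p2 := mul_le_mul h2 hη (abs_nonneg η) (by positivity)
      have p4 : (0:ℝ) ≤ |Δt| := abs_nonneg Δt
      linarith
    have hxy : |x - y| ≤ Mxy * |Δt| := by
      have h1 : |x - y| ≤ |x - y - (Δt - η) * v| + |Δt - η| * |v| := by
        have hid : x - y = (x - y - (Δt - η) * v) + (Δt - η) * v := by ring
        calc |x - y| = |(x - y - (Δt - η) * v) + (Δt - η) * v| := by rw [← hid]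
          _ ≤ |x - y - (Δt - η) * v| + |(Δt - η) * v| := abs_add_le _ _
          _ = |x - y - (Δt - η) * v| + |Δt - η| * |v| := by rw [abs_mul]
      have h2 : |Δt - η| ≤ 2 * |Δt| := by
        calc |Δt - η| ≤ |Δt| + |η| := abs_sub _ _
          _ ≤ |Δt| + |Δt| := by linarith
          _ = 2 * |Δt| := by ring
      rw [hMxy]
      have p1 := mul_le_mul_of_nonneg_left hΔsq hE20
      have p2 := mul_le_mul_of_nonneg_right h2 (abs_nonneg v)
      linarith
    -- C difference
    have hxrc : |x - a| ≤ rC := by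
      refine le_trans hxa ?_
      rw [mul_comm]
      exact (le_div_iff₀ hMx0).1 hΔrCx
    have hyrc : |y - a| ≤ rC := by
      refine le_trans hya ?_
      rw [mul_comm]
      exact (le_div_iff₀ hMy0).1 hΔrCy
    have eC := estC x y hxrc hyrc
    rw [← hc] at eC
    have hMz0 : (0:ℝ) ≤ Mz := le_trans hMx0.le (le_max_left _ _)
    have hmax : max |x - a| |y - a| ≤ Mz * |Δt| := by
      apply max_le
      · exact le_trans hxa (mul_le_mul_of_nonneg_right (le_max_left _ _) (abs_nonneg _))
      · exact le_trans hya (mul_le_mul_of_nonneg_right (le_max_right _ _) (abs_nonneg _))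
    have eC2 : |C x - C y - c * (x - y)| ≤ KC * Mz * Mxy * Δt ^ 2 := by
      calc |C x - C y - c * (x - y)| ≤ KC * max |x - a| |y - a| * |x - y| := eC
        _ ≤ KC * (Mz * |Δt|) * (Mxy * |Δt|) := by
            apply mul_le_mul (mul_le_mul_of_nonneg_left hmax hKC) hxy (abs_nonneg _)
              (by positivity)
        _ = KC * Mz * Mxy * (|Δt| * |Δt|) := by ring
        _ = KC * Mz * Mxy * Δt ^ 2 := by rw [hsqΔ]
    -- conclusion
    have hid : C x - C y - c * ((Δt - η) * v) =
        (C x - C y - c * (x - y)) + c * (x - y - (Δt - η) * v) := by ring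
    calc |C x - C y - c * ((Δt - η) * v)|
        = |(C x - C y - c * (x - y)) + c * (x - y - (Δt - η) * v)| := by rw [← hid]
      _ ≤ |C x - C y - c * (x - y)| + |c| * |x - y - (Δt - η) * v| := by
          refine le_trans (abs_add_le _ _) ?_
          rw [abs_mul]
      _ ≤ KC * Mz * Mxy * Δt ^ 2 + |c| * (E2 * Δt ^ 2) := by
          exact add_le_add eC2 (mul_le_mul_of_nonneg_left exy (abs_nonneg _))
      _ = Kst * Δt ^ 2 := by rw [hKst]; ring
  -- assemble via integrals
  rw [Asymptotics.isBigO_iff]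
  refine ⟨Kst, ?_⟩
  filter_upwards [Metric.closedBall_mem_nhds (0:ℝ) hrpos] with Δt hmem
  have hΔt : |Δt| ≤ r := by
    rw [Metric.mem_closedBall, Real.dist_eq, sub_zero] at hmem
    exact hmem
  have hcψ : Continuous fun η => qC η (a + (qA Δt - a) + (qB Δt - a)) :=
    continuous_iff_continuousAt.2 fun s => (hqC (a + (qA Δt - a) + (qB Δt - a)) s).continuousAt
  have hcont1 : Continuous fun η => C (qC η (a + (qA Δt - a) + (qB Δt - a))) :=
    hC.continuous.comp hcψ
  have hcont2 : Continuous fun η => C (q (tn + η)) :=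
    hC.continuous.comp (hqdiff.continuous.comp (continuous_const.add continuous_id))
  have hcont3 : Continuous fun η : ℝ => c * ((Δt - η) * v) := by fun_prop
  have hi1 := hcont1.intervalIntegrable (μ := MeasureTheory.volume) 0 Δt
  have hi2 := hcont2.intervalIntegrable (μ := MeasureTheory.volume) 0 Δt
  have hi3 := hcont3.intervalIntegrable (μ := MeasureTheory.volume) 0 Δt
  have hlin : (∫ η in (0:ℝ)..Δt, c * ((Δt - η) * v)) = Δt ^ 2 / 2 * (c * v) := by
    have hfeq : (fun η : ℝ => c * ((Δt - η) * v)) =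
        fun η : ℝ => c * v * Δt - c * v * η := funext fun η => by ring
    rw [hfeq]
    rw [intervalIntegral.integral_sub intervalIntegrable_const
      (IntervalIntegrable.const_mul intervalIntegral.intervalIntegrable_id _)]
    rw [intervalIntegral.integral_const, intervalIntegral.integral_const_mul, integral_id]
    simp only [smul_eq_mul, sub_zero]
    ring
  have heq : ((∫ η in (0:ℝ)..Δt, C (qC η (a + (qA Δt - a) + (qB Δt - a))))
        - ∫ η in (0:ℝ)..Δt, C (q (tn + η))) - Δt ^ 2 / 2 * (c * v) =
      ∫ η in (0:ℝ)..Δt,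
        (C (qC η (a + (qA Δt - a) + (qB Δt - a))) - C (q (tn + η)) - c * ((Δt - η) * v)) := by
    rw [show (fun η => C (qC η (a + (qA Δt - a) + (qB Δt - a))) - C (q (tn + η))
        - c * ((Δt - η) * v)) = fun η => (C (qC η (a + (qA Δt - a) + (qB Δt - a)))
        - C (q (tn + η))) - c * ((Δt - η) * v) from rfl]
    rw [intervalIntegral.integral_sub (hi1.sub hi2) hi3,
      intervalIntegral.integral_sub hi1 hi2, hlin]
  have hmemΙ : ∀ η ∈ Set.uIoc (0:ℝ) Δt, |η| ≤ |Δt| := by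
    intro η hη
    rw [Set.mem_uIoc] at hη
    have h1 := le_abs_self Δt
    have h2 := neg_abs_le Δt
    rw [abs_le]
    rcases hη with ⟨a1, a2⟩ | ⟨a1, a2⟩ <;> constructor <;> linarith
  have hbound := intervalIntegral.norm_integral_le_of_norm_le_const
    (C := Kst * Δt ^ 2)
    (f := fun η => C (qC η (a + (qA Δt - a) + (qB Δt - a))) - C (q (tn + η))
      - c * ((Δt - η) * v))
    (a := (0:ℝ)) (b := Δt)
    (fun η hη => by
      rw [Real.norm_eq_abs]
      exact key Δt hΔt η (hmemΙ η hη))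
  rw [Real.norm_eq_abs, heq, Real.norm_eq_abs]
  calc |∫ η in (0:ℝ)..Δt, (C (qC η (a + (qA Δt - a) + (qB Δt - a))) - C (q (tn + η))
        - c * ((Δt - η) * v))| ≤ Kst * Δt ^ 2 * |Δt - 0| := hbound
    _ = Kst * (Δt ^ 2 * |Δt|) := by rw [sub_zero]; ring
    _ = Kst * |Δt ^ 3| := by
        rw [abs_pow, ← sq_abs]
        ring
end
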